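/- arXiv:math/0511208 — 7 statements merged into one kernel-verified Lean document; each statement's English description precedes it below -/
import Mathlib

section
/- Let ϑ > 1/2, γ ≥ 0, a ∈ (0,1], b ∈ ℝ, C₁, C₂ < ∞. Suppose (f_j)_{j≥1} are functions on [0,T]^d satisfying ‖f_j‖ ≤ C₁ j^{−ϑ} (log(1+j))^γ and [f_j]_a ≤ C₂ j^b for all j. Then for every ρ ∈ (0,1] with ρ < (ϑ − 1/2)/(b+ϑ)_+ (interpreted as no constraint when (b+ϑ)_+ = 0), the series ∑_{j≥1} [f_j]_{aρ}² converges, where [f_j]_{aρ} is the aρ-Hölder seminorm. -/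
open Real

/-- the cube `[0,T]^d` with the Euclidean metric -/
def cube (d : ℕ) (T : ℝ) : Set (EuclideanSpace ℝ (Fin d)) :=
  {x | ∀ i, x i ∈ Set.Icc (0:ℝ) T}

/-- interpolation: `min x y ≤ x^ρ * y^(1-ρ)` for nonnegative `x, y`. -/
lemma min_le_interp {x y ρ : ℝ} (hx : 0 ≤ x) (hy : 0 ≤ y) (hρ : 0 ≤ ρ) (hρ1 : ρ ≤ 1) :
    min x y ≤ x ^ ρ * y ^ (1 - ρ) := by
  rcases le_total x y with h | h
  · calc min x y = x := min_eq_left h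
      _ = x ^ (ρ + (1 - ρ)) := by norm_num
      _ = x ^ ρ * x ^ (1 - ρ) := Real.rpow_add' hx (by norm_num)
      _ ≤ x ^ ρ * y ^ (1 - ρ) :=
          mul_le_mul_of_nonneg_left (Real.rpow_le_rpow hx h (by linarith))
            (Real.rpow_nonneg hx ρ)
  · calc min x y = y := min_eq_right h
      _ = y ^ (ρ + (1 - ρ)) := by norm_num
      _ = y ^ ρ * y ^ (1 - ρ) := Real.rpow_add' hy (by norm_num)
      _ ≤ x ^ ρ * y ^ (1 - ρ) :=
          mul_le_mul_of_nonneg_right (Real.rpow_le_rpow hy h hρ)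
            (Real.rpow_nonneg hy (1 - ρ))

/-- under (A1) and (A2), for `0 < ρ ≤ 1` with `ρ < (ϑ-1/2)/(b+ϑ)₊`
(no constraint when `b+ϑ ≤ 0`), the squares of the `aρ`-Hölder seminorms of the `f_j`
are summable. -/
theorem stmt1 (d : ℕ) (T ϑ γ a b C₁ C₂ ρ : ℝ) (hT : 0 < T)
    (hϑ : 1/2 < ϑ) (hγ : 0 ≤ γ) (ha : 0 < a) (ha1 : a ≤ 1)
    (f : ℕ → EuclideanSpace ℝ (Fin d) → ℝ)
    (hbound : ∀ j : ℕ, 1 ≤ j → ∀ t ∈ cube d T,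
      |f j t| ≤ C₁ * (j:ℝ) ^ (-ϑ) * Real.log (1 + (j:ℝ)) ^ γ)
    (hholder : ∀ j : ℕ, 1 ≤ j → ∀ s ∈ cube d T, ∀ t ∈ cube d T,
      |f j s - f j t| ≤ C₂ * (j:ℝ) ^ b * dist s t ^ a)
    (hρ : 0 < ρ) (hρ1 : ρ ≤ 1)
    (hρ2 : b + ϑ ≤ 0 ∨ ρ < (ϑ - 1/2) / (b + ϑ)) :
    Summable (fun j : ℕ =>
      (⨆ p : {p : EuclideanSpace ℝ (Fin d) × EuclideanSpace ℝ (Fin d) //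
          p.1 ∈ cube d T ∧ p.2 ∈ cube d T ∧ p.1 ≠ p.2},
        |f (j+1) p.1.1 - f (j+1) p.1.2| / dist p.1.1 p.1.2 ^ (a * ρ)) ^ 2) := by
  -- replace constants by their absolute values
  set K₁ := |C₁| with hK₁def
  set K₂ := |C₂| with hK₂def
  have hK₁ : 0 ≤ K₁ := abs_nonneg _
  have hK₂ : 0 ≤ K₂ := abs_nonneg _
  -- exponents
  set e : ℝ := b * ρ - ϑ * (1 - ρ) with hedef
  set g : ℝ := γ * (1 - ρ) with hgdef
  have hg : 0 ≤ g := mul_nonneg hγ (by linarith)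
  have he : 2 * e < -1 := by
    rcases le_or_gt (b + ϑ) 0 with h | h
    · have : ρ * (b + ϑ) ≤ 0 := mul_nonpos_of_nonneg_of_nonpos hρ.le h
      simp only [hedef]; nlinarith
    · rcases hρ2 with h' | h'
      · linarith
      · have h2 : ρ * (b + ϑ) < ϑ - 1/2 := (lt_div_iff₀ h).mp h'
        simp only [hedef]; nlinarith
  set δ : ℝ := (-1 - 2 * e) / (2 * g + 1) with hδdef
  have hδ : 0 < δ := div_pos (by linarith) (by linarith)
  have hq : 2 * (e + δ * g) < -1 := by
    have h1 : (0:ℝ) < 2 * g + 1 := by linarith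
    have h2 : δ * (2 * g + 1) = -1 - 2 * e := by
      rw [hδdef, div_mul_cancel₀]; linarith
    nlinarith [mul_nonneg hδ.le hg]
  -- the constant
  set K : ℝ := K₂ ^ ρ * (2 * K₁) ^ (1 - ρ) * ((2:ℝ) ^ δ / δ) ^ g with hKdef
  have hK : 0 ≤ K := by positivity
  -- pointwise bound on the sup
  have key : ∀ j : ℕ,
      (⨆ p : {p : EuclideanSpace ℝ (Fin d) × EuclideanSpace ℝ (Fin d) //
          p.1 ∈ cube d T ∧ p.2 ∈ cube d T ∧ p.1 ≠ p.2},
        |f (j+1) p.1.1 - f (j+1) p.1.2| / dist p.1.1 p.1.2 ^ (a * ρ))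
        ≤ K * ((j+1 : ℕ) : ℝ) ^ (e + δ * g) := by
    intro j
    set n : ℝ := ((j+1 : ℕ) : ℝ) with hndef
    have hn1 : (1:ℝ) ≤ n := by
      rw [hndef]; exact_mod_cast Nat.one_le_iff_ne_zero.mpr (Nat.succ_ne_zero j)
    have hn0 : (0:ℝ) < n := by linarith
    have hBnonneg : 0 ≤ K * n ^ (e + δ * g) := by positivity
    apply Real.iSup_le _ hBnonneg
    rintro ⟨⟨s, t⟩, hs, ht, hst⟩
    simp only
    set D : ℝ := dist s t with hDdef
    have hD : 0 < D := dist_pos.mpr hst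
    set L : ℝ := Real.log (1 + n) with hLdef
    have hL : 0 ≤ L := Real.log_nonneg (by linarith)
    -- the two bounds
    have h1 : |f (j+1) s - f (j+1) t| ≤ K₂ * n ^ b * D ^ a := by
      refine le_trans (hholder (j+1) (Nat.le_add_left 1 j) s hs t ht) ?_
      have hC₂ : C₂ ≤ K₂ := le_abs_self _
      have hpos : (0:ℝ) ≤ n ^ b * D ^ a := by positivity
      calc C₂ * n ^ b * D ^ a = C₂ * (n ^ b * D ^ a) := by ring
        _ ≤ K₂ * (n ^ b * D ^ a) := mul_le_mul_of_nonneg_right hC₂ hpos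
        _ = K₂ * n ^ b * D ^ a := by ring
    have h2 : |f (j+1) s - f (j+1) t| ≤ 2 * K₁ * n ^ (-ϑ) * L ^ γ := by
      have hs' := hbound (j+1) (Nat.le_add_left 1 j) s hs
      have ht' := hbound (j+1) (Nat.le_add_left 1 j) t ht
      have hC₁ : C₁ ≤ K₁ := le_abs_self _
      have hpos : (0:ℝ) ≤ n ^ (-ϑ) * L ^ γ := by positivity
      calc |f (j+1) s - f (j+1) t| ≤ |f (j+1) s| + |f (j+1) t| := abs_sub _ _
        _ ≤ C₁ * n ^ (-ϑ) * L ^ γ + C₁ * n ^ (-ϑ) * L ^ γ := add_le_add hs' ht'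
        _ = 2 * (C₁ * (n ^ (-ϑ) * L ^ γ)) := by ring
        _ ≤ 2 * (K₁ * (n ^ (-ϑ) * L ^ γ)) := by gcongr
        _ = 2 * K₁ * n ^ (-ϑ) * L ^ γ := by ring
    -- interpolation
    have hmin : |f (j+1) s - f (j+1) t| ≤
        (K₂ * n ^ b * D ^ a) ^ ρ * (2 * K₁ * n ^ (-ϑ) * L ^ γ) ^ (1 - ρ) := by
      refine le_trans (le_min h1 h2) (min_le_interp ?_ ?_ hρ.le hρ1) <;> positivity
    -- expansion identities
    have e1 : (K₂ * n ^ b * D ^ a) ^ ρ = K₂ ^ ρ * n ^ (b * ρ) * D ^ (a * ρ) := by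
      rw [Real.mul_rpow (by positivity) (by positivity),
        Real.mul_rpow hK₂ (by positivity), ← Real.rpow_mul hn0.le, ← Real.rpow_mul hD.le]
    have e2 : (2 * K₁ * n ^ (-ϑ) * L ^ γ) ^ (1 - ρ) =
        (2 * K₁) ^ (1 - ρ) * n ^ (-ϑ * (1 - ρ)) * L ^ g := by
      rw [Real.mul_rpow (by positivity) (by positivity),
        Real.mul_rpow (by positivity) (by positivity), ← Real.rpow_mul hn0.le,
        ← Real.rpow_mul hL, hgdef]
    -- bound on the log factor
    have hLg : L ^ g ≤ ((2:ℝ) ^ δ / δ) ^ g * n ^ (δ * g) := by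
      have hL1 : L ≤ (2:ℝ) ^ δ / δ * n ^ δ := by
        calc L ≤ (1 + n) ^ δ / δ := Real.log_le_rpow_div (by linarith) hδ
          _ ≤ (2 * n) ^ δ / δ :=
              div_le_div_of_nonneg_right (Real.rpow_le_rpow (by linarith) (by linarith) hδ.le) hδ.le
          _ = (2:ℝ) ^ δ / δ * n ^ δ := by
              rw [Real.mul_rpow (by norm_num) hn0.le]; ring
      calc L ^ g ≤ ((2:ℝ) ^ δ / δ * n ^ δ) ^ g := Real.rpow_le_rpow hL hL1 hg
        _ = ((2:ℝ) ^ δ / δ) ^ g * n ^ (δ * g) := by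
            rw [Real.mul_rpow (by positivity) (by positivity), ← Real.rpow_mul hn0.le]
    -- combine powers of n
    have hnn : n ^ (b * ρ) * n ^ (-ϑ * (1 - ρ)) * n ^ (δ * g) = n ^ (e + δ * g) := by
      rw [← Real.rpow_add hn0, ← Real.rpow_add hn0]
      congr 1
      rw [hedef]; ring
    -- divide by D^(a*ρ)
    rw [div_le_iff₀ (by positivity : (0:ℝ) < D ^ (a * ρ))]
    calc |f (j+1) s - f (j+1) t|
        ≤ (K₂ * n ^ b * D ^ a) ^ ρ * (2 * K₁ * n ^ (-ϑ) * L ^ γ) ^ (1 - ρ) := hmin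
      _ = K₂ ^ ρ * (2 * K₁) ^ (1 - ρ) * (n ^ (b * ρ) * n ^ (-ϑ * (1 - ρ))) * L ^ g
            * D ^ (a * ρ) := by rw [e1, e2]; ring
      _ ≤ K₂ ^ ρ * (2 * K₁) ^ (1 - ρ) * (n ^ (b * ρ) * n ^ (-ϑ * (1 - ρ)))
            * (((2:ℝ) ^ δ / δ) ^ g * n ^ (δ * g)) * D ^ (a * ρ) := by
          have hA : 0 ≤ K₂ ^ ρ * (2 * K₁) ^ (1 - ρ) * (n ^ (b * ρ) * n ^ (-ϑ * (1 - ρ))) := by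
            positivity
          exact mul_le_mul_of_nonneg_right (mul_le_mul_of_nonneg_left hLg hA)
            (by positivity)
      _ = K * n ^ (e + δ * g) * D ^ (a * ρ) := by
          rw [hKdef, ← hnn]; ring
  -- conclude summability by comparison
  have hsum : Summable (fun j : ℕ => K ^ 2 * ((j+1 : ℕ) : ℝ) ^ (2 * (e + δ * g))) := by
    have : Summable (fun n : ℕ => (n : ℝ) ^ (2 * (e + δ * g))) :=
      Real.summable_nat_rpow.mpr hq
    exact ((summable_nat_add_iff 1).mpr this).mul_left _
  refine Summable.of_nonneg_of_le (fun j => sq_nonneg _) (fun j => ?_) hsum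
  have hn0 : (0:ℝ) < ((j+1 : ℕ) : ℝ) := by positivity
  have hSnonneg : 0 ≤ (⨆ p : {p : EuclideanSpace ℝ (Fin d) × EuclideanSpace ℝ (Fin d) //
          p.1 ∈ cube d T ∧ p.2 ∈ cube d T ∧ p.1 ≠ p.2},
        |f (j+1) p.1.1 - f (j+1) p.1.2| / dist p.1.1 p.1.2 ^ (a * ρ)) :=
    Real.iSup_nonneg fun p => div_nonneg (abs_nonneg _) (Real.rpow_nonneg dist_nonneg _)
  calc (⨆ p : {p : EuclideanSpace ℝ (Fin d) × EuclideanSpace ℝ (Fin d) //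
          p.1 ∈ cube d T ∧ p.2 ∈ cube d T ∧ p.1 ≠ p.2},
        |f (j+1) p.1.1 - f (j+1) p.1.2| / dist p.1.1 p.1.2 ^ (a * ρ)) ^ 2
      ≤ (K * ((j+1 : ℕ) : ℝ) ^ (e + δ * g)) ^ 2 := pow_le_pow_left₀ hSnonneg (key j) 2
    _ = K ^ 2 * ((j+1 : ℕ) : ℝ) ^ (2 * (e + δ * g)) := by
        rw [mul_pow, ← Real.rpow_natCast (((j+1 : ℕ) : ℝ) ^ (e + δ * g)) 2,
          ← Real.rpow_mul hn0.le]
        norm_num [mul_comm]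
end

section
/- Let ν₁ ≥ ⋯ ≥ ν_m > 0, N ≥ 1, and suppose N^{1/m} ν_m (∏_{k=1}^m ν_k)^{−1/m} ≥ 1. Define N_j = ⌊N^{1/m} ν_j (∏_{k=1}^m ν_k)^{−1/m}⌋ for j = 1,…,m. Then each N_j ≥ 1, ∏_{j=1}^m N_j ≤ N, and ∑_{j=1}^m ν_j / N_j ≤ 2 m N^{−1/m} (∏_{j=1}^m ν_j)^{1/m}. -/
open Real

/-- integer bit allocation: with `z_j = N^{1/m} ν_j (∏ ν_k)^{-1/m} ≥ 1`
(guaranteed by `z_m ≥ 1`) and `N_j = ⌊z_j⌋`, one has `N_j ≥ 1`, `∏ N_j ≤ N`, and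
`∑ ν_j / N_j ≤ 2 m N^{-1/m} (∏ ν_j)^{1/m}`. -/
theorem stmt7 (m : ℕ) (hm : 0 < m) (N : ℝ) (hN : 1 ≤ N) (ν : Fin m → ℝ)
    (hpos : ∀ j, 0 < ν j) (hmono : ∀ i j : Fin m, i ≤ j → ν j ≤ ν i)
    (hfeas : 1 ≤ N ^ (1/(m:ℝ)) * ν ⟨m-1, Nat.sub_lt hm one_pos⟩ *
      (∏ k, ν k) ^ (-(1/(m:ℝ)))) :
    (∀ j : Fin m, 1 ≤ ⌊N ^ (1/(m:ℝ)) * ν j * (∏ k, ν k) ^ (-(1/(m:ℝ)))⌋₊) ∧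
    (∏ j, (⌊N ^ (1/(m:ℝ)) * ν j * (∏ k, ν k) ^ (-(1/(m:ℝ)))⌋₊ : ℝ)) ≤ N ∧
    (∑ j, ν j / (⌊N ^ (1/(m:ℝ)) * ν j * (∏ k, ν k) ^ (-(1/(m:ℝ)))⌋₊ : ℝ)) ≤
      2 * (m:ℝ) * N ^ (-(1/(m:ℝ))) * (∏ j, ν j) ^ (1/(m:ℝ)) := by
  set A : ℝ := N ^ (1/(m:ℝ)) with hA
  set P : ℝ := ∏ k, ν k with hP
  set B : ℝ := P ^ (-(1/(m:ℝ))) with hB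
  have hPpos : 0 < P := Finset.prod_pos fun i _ => hpos i
  have hApos : 0 < A := rpow_pos_of_pos (lt_of_lt_of_le one_pos hN) _
  have hBpos : 0 < B := rpow_pos_of_pos hPpos _
  set z : Fin m → ℝ := fun j => A * ν j * B with hz
  have hzpos : ∀ j, 0 < z j := fun j => mul_pos (mul_pos hApos (hpos j)) hBpos
  have hz1 : ∀ j, 1 ≤ z j := by
    intro j
    refine le_trans hfeas ?_
    have := hmono j ⟨m-1, Nat.sub_lt hm one_pos⟩ (by
      exact Fin.mk_le_mk.mpr (Nat.le_sub_one_of_lt j.isLt))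
    have h2 : ν ⟨m-1, Nat.sub_lt hm one_pos⟩ ≤ ν j := this
    have : A * ν ⟨m-1, Nat.sub_lt hm one_pos⟩ ≤ A * ν j :=
      mul_le_mul_of_nonneg_left h2 hApos.le
    exact mul_le_mul_of_nonneg_right this hBpos.le
  have hfloor1 : ∀ j : Fin m, 1 ≤ ⌊z j⌋₊ := fun j =>
    Nat.le_floor (by exact_mod_cast hz1 j)
  have hfloorle : ∀ j, (⌊z j⌋₊ : ℝ) ≤ z j := fun j => Nat.floor_le (hzpos j).le
  have hfloorge : ∀ j, z j / 2 ≤ (⌊z j⌋₊ : ℝ) := by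
    intro j
    have h1 : (1:ℝ) ≤ (⌊z j⌋₊ : ℝ) := by exact_mod_cast hfloor1 j
    have h2 : z j < (⌊z j⌋₊ : ℝ) + 1 := Nat.lt_floor_add_one _
    linarith
  have hmne : (m:ℝ) ≠ 0 := Nat.cast_ne_zero.mpr hm.ne'
  have hAm : A ^ m = N := by
    rw [hA, ← rpow_natCast (N ^ (1/(m:ℝ))) m, ← rpow_mul (le_trans zero_le_one hN)]
    rw [one_div, inv_mul_cancel₀ hmne, rpow_one]
  have hBm : B ^ m = P⁻¹ := by
    rw [hB, ← rpow_natCast (P ^ (-(1/(m:ℝ)))) m, ← rpow_mul hPpos.le]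
    rw [neg_mul, one_div, inv_mul_cancel₀ hmne, rpow_neg_one]
  have hzprod : ∏ j, z j = N := by
    simp only [hz]
    rw [show (fun j => A * ν j * B) = fun j => (A * B) * ν j by funext j; ring]
    rw [Finset.prod_mul_distrib, Finset.prod_const, ← hP, Finset.card_univ,
      Fintype.card_fin, mul_pow, hAm, hBm]
    field_simp
  have hratio : ∀ j, ν j / z j = A⁻¹ * B⁻¹ := by
    intro j
    have hzeq : z j = ν j * (A * B) := by simp only [hz]; ring
    rw [hzeq, div_mul_cancel_left₀ (hpos j).ne', mul_inv]
  have hAinv : A⁻¹ = N ^ (-(1/(m:ℝ))) := by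
    rw [hA, ← rpow_neg (le_trans zero_le_one hN)]
  have hBinv : B⁻¹ = P ^ (1/(m:ℝ)) := by
    rw [hB, ← rpow_neg hPpos.le, neg_neg]
  refine ⟨hfloor1, ?_, ?_⟩
  · calc (∏ j, (⌊z j⌋₊ : ℝ)) ≤ ∏ j, z j :=
          Finset.prod_le_prod (fun j _ => by positivity) (fun j _ => hfloorle j)
      _ = N := hzprod
  · have hbound : ∀ j, ν j / (⌊z j⌋₊ : ℝ) ≤ 2 * (A⁻¹ * B⁻¹) := by
      intro j
      have hfj : (0:ℝ) < (⌊z j⌋₊ : ℝ) := by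
        have := hfloor1 j; exact_mod_cast Nat.lt_of_lt_of_le Nat.zero_lt_one this
      have h1 : ν j / (⌊z j⌋₊ : ℝ) ≤ ν j / (z j / 2) :=
        div_le_div_of_nonneg_left (hpos j).le (by linarith [hfloorge j, hzpos j]) (hfloorge j)
      have h2 : ν j / (z j / 2) = 2 * (ν j / z j) := by
        field_simp
      calc ν j / (⌊z j⌋₊ : ℝ) ≤ 2 * (ν j / z j) := h1.trans_eq h2
        _ = 2 * (A⁻¹ * B⁻¹) := by rw [hratio j]
    calc (∑ j, ν j / (⌊z j⌋₊ : ℝ)) ≤ ∑ _j : Fin m, 2 * (A⁻¹ * B⁻¹) :=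
          Finset.sum_le_sum fun j _ => hbound j
      _ = (m:ℝ) * (2 * (A⁻¹ * B⁻¹)) := by
          rw [Finset.sum_const, Finset.card_univ, Fintype.card_fin, nsmul_eq_mul]
      _ = 2 * (m:ℝ) * N ^ (-(1/(m:ℝ))) * P ^ (1/(m:ℝ)) := by
          rw [hAinv, hBinv]; ring
end

section
/- For i ∈ {1,…,d}, let (f_j^i)_{j≥1} ⊂ C([0,T]) satisfy ‖f_j^i‖ ≤ C₁ j^{−ϑ_i} and [f_j^i]_{a_i} ≤ C₂ j^{b_i} with ϑ_i > 1/2, a_i ∈ (0,1], b_i ∈ ℝ. Then a nonincreasing (by the bound ∏ j_i^{−ϑ_i}) arrangement (f_k) of the tensor products f_{j⃗} = ⊗_{i=1}^d f_{j_i}^i on [0,T]^d satisfies ‖f_k‖ ≤ C k^{−ϑ} (log k)^{ϑ(m−1)} and [f_k]_a ≤ C k^b, where ϑ = min_i ϑ_i, m = #{i : ϑ_i = ϑ}, a = min_i a_i, b = (max_i b_i)_+. -/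
open Real
open Finset

lemma sum_inv_le_one_add_log (J : ℕ) (hJ : 1 ≤ J) :
    ∑ j ∈ Finset.Icc 1 J, ((j:ℝ))⁻¹ ≤ 1 + Real.log J := by
  induction J, hJ using Nat.le_induction with
  | base => simp
  | succ J hJ ih =>
    rw [Finset.sum_Icc_succ_top (by omega)]
    have h1 : ((J:ℝ)+1)⁻¹ ≤ Real.log (J+1) - Real.log J := by
      have hJpos : (0:ℝ) < J := by exact_mod_cast hJ
      have hx : (0:ℝ) < ((J:ℝ)+1)/J := by positivity
      have := Real.log_le_sub_one_of_pos (x := (J:ℝ)/((J:ℝ)+1)) (by positivity)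
      have hlog : Real.log ((J:ℝ)/((J:ℝ)+1)) = Real.log J - Real.log (J+1) := by
        rw [Real.log_div (by positivity) (by positivity)]
      rw [hlog] at this
      have : (J:ℝ)/((J:ℝ)+1) - 1 = -((J:ℝ)+1)⁻¹ := by field_simp; ring
      linarith [Real.log_le_sub_one_of_pos (x := (J:ℝ)/((J:ℝ)+1)) (by positivity), this]
    push_cast
    linarith

lemma sum_rpow_lt_one (p : ℝ) (hp0 : 0 < p) (hp1 : p < 1) (J : ℕ) :
    ∑ j ∈ Finset.Icc 1 J, (j:ℝ) ^ (-p) ≤ (J:ℝ) ^ (1-p) / (1-p) := by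
  induction J with
  | zero => simp [Real.zero_rpow (by linarith : (1:ℝ)-p ≠ 0)]
  | succ J ih =>
    rcases Nat.eq_zero_or_pos J with h | h
    · subst h
      simp only [Finset.Icc_self, Finset.sum_singleton]
      rw [Nat.cast_one, Real.one_rpow, Real.one_rpow, le_div_iff₀ (by linarith)]
      nlinarith
    · rw [Finset.sum_Icc_succ_top (by omega)]
      have hb : (0:ℝ) < (J:ℝ) + 1 := by positivity
      -- Bernoulli: (1 - 1/(J+1))^(1-p) ≤ 1 - (1-p)/(J+1)
      have hber := rpow_one_add_le_one_add_mul_self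
        (s := -(1/((J:ℝ)+1))) (p := 1-p)
        (by rw [neg_le, neg_neg]; rw [div_le_one hb]; linarith)
        (by linarith) (by linarith)
      -- (J:ℝ) = (J+1)(1 - 1/(J+1))
      have hJe : (J:ℝ) = ((J:ℝ)+1) * (1 + -(1/((J:ℝ)+1))) := by field_simp; ring
      have key : (J:ℝ) ^ (1-p) ≤ ((J:ℝ)+1) ^ (1-p) - (1-p) * ((J:ℝ)+1) ^ (-p) := by
        have h1 : (J:ℝ) ^ (1-p) = ((J:ℝ)+1) ^ (1-p) * (1 + -(1/((J:ℝ)+1))) ^ (1-p) := by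
          conv_lhs => rw [hJe]
          rw [Real.mul_rpow (le_of_lt hb) (by nlinarith [hb] : (0:ℝ) ≤ 1 + -(1/((J:ℝ)+1)))]
        rw [h1]
        have h2 : ((J:ℝ)+1) ^ (1-p) * (1 + -(1/((J:ℝ)+1))) ^ (1-p)
            ≤ ((J:ℝ)+1) ^ (1-p) * (1 + (1-p) * -(1/((J:ℝ)+1))) := by
          apply mul_le_mul_of_nonneg_left hber (Real.rpow_nonneg (le_of_lt hb) _)
        refine h2.trans (le_of_eq ?_)
        have h3 : ((J:ℝ)+1) ^ (1-p) * (1/((J:ℝ)+1)) = ((J:ℝ)+1) ^ (-p) := by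
          rw [one_div, ← Real.rpow_neg_one ((J:ℝ)+1), ← Real.rpow_add hb]
          ring_nf
        ring_nf
        ring_nf at h3
        nlinarith [h3]
      have : ∑ j ∈ Finset.Icc 1 J, (j:ℝ) ^ (-p) + ((J:ℝ)+1) ^ (-p)
          ≤ (J:ℝ)^(1-p)/(1-p) + ((J:ℝ)+1)^(-p) := by linarith
      push_cast
      refine this.trans ?_
      rw [div_add' _ _ _ (by linarith : (1:ℝ)-p ≠ 0), div_le_div_iff₀ (by linarith) (by linarith)]
      nlinarith [key]

lemma exists_zeta_bound (q : ℝ) (hq : 1 < q) :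
    ∃ Z : ℝ, 0 ≤ Z ∧ ∀ s : Finset ℕ, ∑ j ∈ s, (j:ℝ) ^ (-q) ≤ Z := by
  have hsum : Summable (fun j : ℕ => (j:ℝ) ^ (-q)) := by
    have := Real.summable_nat_rpow (p := -q)
    rw [this]; linarith
  refine ⟨∑' j : ℕ, (j:ℝ) ^ (-q), tsum_nonneg (fun j => Real.rpow_nonneg (Nat.cast_nonneg j) _), ?_⟩
  intro s
  exact Summable.sum_le_tsum s (fun j _ => Real.rpow_nonneg (Nat.cast_nonneg j) _) hsum

lemma prod_sub_prod_bound {ι : Type*} [DecidableEq ι] (s : Finset ι) (u w : ι → ℝ) (M : ℝ)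
    (hM : 0 ≤ M) (hu : ∀ i ∈ s, |u i| ≤ M) (hw : ∀ i ∈ s, |w i| ≤ M) :
    |∏ i ∈ s, u i - ∏ i ∈ s, w i| ≤ M ^ (s.card - 1) * ∑ i ∈ s, |u i - w i| := by
  induction s using Finset.induction_on with
  | empty => simp
  | @insert a s ha ih =>
    have hus : ∀ i ∈ s, |u i| ≤ M := fun i hi => hu i (Finset.mem_insert_of_mem hi)
    have hws : ∀ i ∈ s, |w i| ≤ M := fun i hi => hw i (Finset.mem_insert_of_mem hi)
    have ihs := ih hus hws
    rw [Finset.prod_insert ha, Finset.prod_insert ha, Finset.sum_insert ha,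
      Finset.card_insert_of_notMem ha]
    have habs : |u a * ∏ i ∈ s, u i - w a * ∏ i ∈ s, w i|
        ≤ |u a| * |∏ i ∈ s, u i - ∏ i ∈ s, w i| + |u a - w a| * |∏ i ∈ s, w i| := by
      have : u a * ∏ i ∈ s, u i - w a * ∏ i ∈ s, w i
          = u a * (∏ i ∈ s, u i - ∏ i ∈ s, w i) + (u a - w a) * ∏ i ∈ s, w i := by ring
      rw [this]
      exact (abs_add_le _ _).trans (by rw [abs_mul, abs_mul])
    have hprodw : |∏ i ∈ s, w i| ≤ M ^ s.card := by
      rw [Finset.abs_prod]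
      calc ∏ i ∈ s, |w i| ≤ ∏ i ∈ s, M :=
            Finset.prod_le_prod (fun i _ => abs_nonneg _) hws
        _ = M ^ s.card := by rw [Finset.prod_const]
    have h1 : |u a| * |∏ i ∈ s, u i - ∏ i ∈ s, w i|
        ≤ M ^ s.card * ∑ i ∈ s, |u i - w i| := by
      calc |u a| * |∏ i ∈ s, u i - ∏ i ∈ s, w i|
          ≤ M * (M ^ (s.card - 1) * ∑ i ∈ s, |u i - w i|) := by
            apply mul_le_mul (hu a (Finset.mem_insert_self a s)) ihs (abs_nonneg _) hM
        _ ≤ M ^ s.card * ∑ i ∈ s, |u i - w i| := by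
            rcases Nat.eq_zero_or_pos s.card with hc | hc
            · rw [Finset.card_eq_zero] at hc; subst hc; simp
            · rw [← mul_assoc, ← pow_succ']
              have : s.card - 1 + 1 = s.card := by omega
              rw [this]
    have h2 : |u a - w a| * |∏ i ∈ s, w i| ≤ M ^ s.card * |u a - w a| := by
      rw [mul_comm (M ^ s.card)]
      exact mul_le_mul_of_nonneg_left hprodw (abs_nonneg _)
    calc |u a * ∏ i ∈ s, u i - w a * ∏ i ∈ s, w i|
        ≤ M ^ s.card * ∑ i ∈ s, |u i - w i| + M ^ s.card * |u a - w a| := by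
          linarith
      _ = M ^ (s.card + 1 - 1) * (|u a - w a| + ∑ i ∈ s, |u i - w i|) := by
          rw [Nat.add_sub_cancel]; ring

lemma div_rpow_helper (R : ℝ) (hR : 0 ≤ R) (x : ℝ) (hx : 0 ≤ x) (t c : ℝ) :
    (R / x ^ t) ^ c = R ^ c * x ^ (-(t*c)) := by
  rw [Real.div_rpow hR (Real.rpow_nonneg hx t), ← Real.rpow_mul hx, Real.rpow_neg hx,
    div_eq_mul_inv]

lemma fiber_card_le (n : ℕ) (θ : Fin (n+1) → ℝ) (hθpos : ∀ i, 0 < θ i)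
    (R : ℝ) (hR : 1 ≤ R) (F : Finset (Fin (n+1) → ℕ))
    (hF : ∀ v ∈ F, (∀ i, 1 ≤ v i) ∧ ∏ i, (v i : ℝ) ^ (θ i) ≤ R)
    (g : ℕ → ℝ)
    (hg : ∀ j : ℕ, 1 ≤ j → ((j:ℝ)) ^ (θ (Fin.last n)) ≤ R →
      ∀ G : Finset (Fin n → ℕ),
        (∀ w ∈ G, (∀ i, 1 ≤ w i) ∧
          ∏ i, (w i : ℝ) ^ (θ (Fin.castSucc i)) ≤ R / (j:ℝ) ^ (θ (Fin.last n))) →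
        (G.card : ℝ) ≤ g j) :
    (F.card : ℝ) ≤ ∑ j ∈ Finset.Icc 1 (⌊R ^ (θ (Fin.last n))⁻¹⌋₊), g j := by
  set t := θ (Fin.last n) with htdef
  have ht : 0 < t := hθpos _
  set J := ⌊R ^ t⁻¹⌋₊ with hJdef
  have hR0 : (0:ℝ) < R := lt_of_lt_of_le one_pos hR
  -- each v ∈ F has v (last) ∈ Icc 1 J
  have hmem : ∀ v ∈ F, v (Fin.last n) ∈ Finset.Icc 1 J := by
    intro v hv
    obtain ⟨hv1, hvP⟩ := hF v hv
    have hprod : ((v (Fin.last n) : ℝ)) ^ t ≤ R := by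
      have hsplit : ∏ i, (v i : ℝ) ^ (θ i)
          = (∏ i : Fin n, (v (Fin.castSucc i) : ℝ) ^ (θ (Fin.castSucc i)))
            * ((v (Fin.last n) : ℝ)) ^ t := Fin.prod_univ_castSucc _
      have hone : (1:ℝ) ≤ ∏ i : Fin n, (v (Fin.castSucc i) : ℝ) ^ (θ (Fin.castSucc i)) := by
        calc (1:ℝ) = ∏ _i : Fin n, (1:ℝ) := by simp
          _ ≤ _ := Finset.prod_le_prod (fun i _ => zero_le_one) (fun i _ =>
              Real.one_le_rpow (by exact_mod_cast hv1 _) (hθpos _).le)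
      nlinarith [Real.rpow_nonneg (Nat.cast_nonneg (v (Fin.last n))) t]
    have : ((v (Fin.last n) : ℝ)) ≤ R ^ t⁻¹ :=
      (Real.le_rpow_inv_iff_of_pos (Nat.cast_nonneg _) hR0.le ht).mpr hprod
    simp only [Finset.mem_Icc]
    exact ⟨hv1 _, Nat.le_floor this⟩
  rw [Finset.card_eq_sum_card_fiberwise hmem]
  push_cast
  apply Finset.sum_le_sum
  intro j hj
  simp only [Finset.mem_Icc] at hj
  have hj1 : 1 ≤ j := hj.1
  have hjR : ((j:ℝ)) ^ t ≤ R := by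
    have h1 : ((j:ℝ)) ≤ R ^ t⁻¹ := le_trans (by exact_mod_cast hj.2) (Nat.floor_le (by positivity))
    calc ((j:ℝ)) ^ t ≤ (R ^ t⁻¹) ^ t :=
          Real.rpow_le_rpow (Nat.cast_nonneg _) h1 ht.le
      _ = R := Real.rpow_inv_rpow hR0.le ht.ne'
  set G := (F.filter (fun v => v (Fin.last n) = j)).image (fun v => v ∘ Fin.castSucc) with hG
  have hinj : Set.InjOn (fun v : Fin (n+1) → ℕ => v ∘ Fin.castSucc)
      (↑(F.filter (fun v => v (Fin.last n) = j)) : Set (Fin (n+1) → ℕ)) := by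
    intro v hv w hw hvw
    simp only [Finset.coe_filter, Set.mem_setOf_eq] at hv hw
    funext i
    refine Fin.lastCases ?_ ?_ i
    · rw [hv.2, hw.2]
    · intro i; exact congrFun hvw i
  have hcard : (F.filter (fun v => v (Fin.last n) = j)).card = G.card :=
    (Finset.card_image_of_injOn hinj).symm
  rw [hcard]
  apply hg j hj1 hjR
  intro w hw
  simp only [hG, Finset.mem_image, Finset.mem_filter] at hw
  obtain ⟨v, ⟨hvF, hvlast⟩, hveq⟩ := hw
  obtain ⟨hv1, hvP⟩ := hF v hvF
  constructor
  · intro i; rw [← hveq]; exact hv1 _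
  · have hsplit : ∏ i, (v i : ℝ) ^ (θ i)
        = (∏ i : Fin n, (v (Fin.castSucc i) : ℝ) ^ (θ (Fin.castSucc i)))
          * ((j : ℝ)) ^ t := by
      rw [Fin.prod_univ_castSucc, hvlast]
    have hjt : (0:ℝ) < ((j:ℝ)) ^ t := by
      apply Real.rpow_pos_of_pos; exact_mod_cast hj1
    have : ∏ i : Fin n, (w i : ℝ) ^ (θ (Fin.castSucc i))
        = ∏ i : Fin n, (v (Fin.castSucc i) : ℝ) ^ (θ (Fin.castSucc i)) := by
      apply Finset.prod_congr rfl
      intro i _; rw [← hveq]; rfl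
    rw [this, le_div_iff₀ hjt]
    nlinarith [hvP, hsplit]

lemma count_le (n : ℕ) : ∀ (θ : Fin n → ℝ) (ϑ0 : ℝ), 0 < ϑ0 → (∀ i, ϑ0 ≤ θ i) →
    ∃ A : ℝ, 0 ≤ A ∧ ∀ R : ℝ, 1 ≤ R → ∀ F : Finset (Fin n → ℕ),
      (∀ v ∈ F, (∀ i, 1 ≤ v i) ∧ ∏ i, (v i : ℝ) ^ (θ i) ≤ R) →
      (F.card : ℝ) ≤ A * R ^ (1/ϑ0) *
        (1 + Real.log R) ^ ((Finset.univ.filter (fun i => θ i = ϑ0)).card - 1) := by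
  induction n with
  | zero =>
    intro θ ϑ0 h0 _
    refine ⟨1, zero_le_one, fun R hR F hF => ?_⟩
    have hcard : F.card ≤ 1 := Finset.card_le_one.mpr (fun a _ b _ => funext fun i => i.elim0)
    have h1 : (1:ℝ) ≤ R ^ (1/ϑ0) := Real.one_le_rpow hR (by positivity)
    have h2 : (1:ℝ) ≤ (1 + Real.log R) ^ ((Finset.univ.filter (fun i : Fin 0 => θ i = ϑ0)).card - 1) :=
      one_le_pow₀ (by linarith [Real.log_nonneg hR])
    calc (F.card:ℝ) ≤ 1 := by exact_mod_cast hcard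
      _ ≤ 1 * R ^ (1/ϑ0) * (1 + Real.log R) ^ ((Finset.univ.filter (fun i : Fin 0 => θ i = ϑ0)).card - 1) := by
        nlinarith
  | succ n IH =>
    intro θ ϑ0 h0 hle
    have hR0 : ∀ R : ℝ, 1 ≤ R → (0:ℝ) < R := fun R hR => lt_of_lt_of_le one_pos hR
    set t := θ (Fin.last n) with htdef
    have ht : 0 < t := lt_of_lt_of_le h0 (hle _)
    set θ' : Fin n → ℝ := θ ∘ Fin.castSucc with hθ'def
    have hle' : ∀ i, ϑ0 ≤ θ' i := fun i => hle _
    have hθpos : ∀ i, 0 < θ i := fun i => lt_of_lt_of_le h0 (hle i)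
    set m' := (Finset.univ.filter (fun i : Fin n => θ' i = ϑ0)).card with hm'def
    have hmrel : (Finset.univ.filter (fun i : Fin (n+1) => θ i = ϑ0)).card
        = m' + (if t = ϑ0 then 1 else 0) := by
      rw [hm'def, Finset.card_filter, Finset.card_filter, Fin.sum_univ_castSucc]
      rfl
    by_cases hcase : t = ϑ0
    · by_cases hm0 : m' = 0
      · -- Case C : t = ϑ0, no other coordinate achieves ϑ0
        have hgt : ∀ i : Fin n, ϑ0 < θ' i := by
          intro i
          rcases lt_or_eq_of_le (hle' i) with h | h
          · exact h
          · exfalso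
            have : i ∈ Finset.univ.filter (fun i : Fin n => θ' i = ϑ0) := by
              simp [← h]
            rw [Finset.card_eq_zero] at hm0
            simp [hm0] at this
        obtain ⟨ϑ1, hϑ1a, hϑ1b⟩ : ∃ ϑ1 : ℝ, ϑ0 < ϑ1 ∧ ∀ i : Fin n, ϑ1 < θ' i := by
          rcases Nat.eq_zero_or_pos n with hn | hn
          · subst hn
            exact ⟨ϑ0 + 1, by linarith, fun i => i.elim0⟩
          · have hne : (Finset.univ : Finset (Fin n)).Nonempty :=
              ⟨⟨0, hn⟩, Finset.mem_univ _⟩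
            have hμle : ∀ i, Finset.univ.inf' hne θ' ≤ θ' i :=
              fun i => Finset.inf'_le _ (Finset.mem_univ i)
            obtain ⟨i0, -, hi0⟩ := Finset.exists_mem_eq_inf' hne θ'
            have hϑμ : ϑ0 < Finset.univ.inf' hne θ' := by rw [hi0]; exact hgt i0
            exact ⟨(ϑ0 + Finset.univ.inf' hne θ')/2, by linarith,
              fun i => by have := hμle i; linarith⟩
        have hϑ1pos : 0 < ϑ1 := h0.trans hϑ1a
        obtain ⟨A', hA'0, hA'⟩ := IH θ' ϑ1 hϑ1pos (fun i => (hϑ1b i).le)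
        have hm1 : (Finset.univ.filter (fun i : Fin n => θ' i = ϑ1)).card = 0 := by
          rw [Finset.card_eq_zero, Finset.filter_eq_empty_iff]
          intro i _
          exact ne_of_gt (hϑ1b i)
        set p := ϑ0 / ϑ1 with hpdef
        have hp0 : 0 < p := by positivity
        have hp1 : p < 1 := (div_lt_one hϑ1pos).mpr hϑ1a
        refine ⟨A' / (1 - p), div_nonneg hA'0 (by linarith), fun R hR F hF => ?_⟩
        have hRpos := hR0 R hR
        have hlogR : 0 ≤ Real.log R := Real.log_nonneg hR
        have key := fiber_card_le n θ hθpos R hR F hF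
          (fun j => A' * R ^ (1/ϑ1) * ((j:ℝ)) ^ (-p)) ?_
        · refine key.trans ?_
          rw [← Finset.mul_sum]
          have hsum := sum_rpow_lt_one p hp0 hp1 (⌊R ^ t⁻¹⌋₊)
          have hfl : ((⌊R ^ t⁻¹⌋₊ : ℝ)) ≤ R ^ (1/ϑ0) := by
            rw [one_div, ← hcase]
            exact Nat.floor_le (by positivity)
          have h2 : ((⌊R ^ t⁻¹⌋₊ : ℝ)) ^ (1-p) ≤ (R ^ (1/ϑ0)) ^ (1-p) :=
            Real.rpow_le_rpow (Nat.cast_nonneg _) hfl (by linarith)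
          have h3 : (R ^ (1/ϑ0)) ^ (1-p) = R ^ (1/ϑ0 - 1/ϑ1) := by
            rw [← Real.rpow_mul hRpos.le]
            congr 1
            rw [hpdef]
            field_simp
          have hsum2 : ∑ j ∈ Finset.Icc 1 (⌊R ^ t⁻¹⌋₊), ((j:ℝ)) ^ (-p)
              ≤ R ^ (1/ϑ0 - 1/ϑ1) / (1-p) := by
            refine hsum.trans ?_
            rw [← h3]
            rw [div_eq_mul_inv, div_eq_mul_inv]
            exact mul_le_mul_of_nonneg_right h2 (inv_nonneg.mpr (by linarith))
          calc A' * R ^ (1/ϑ1) * ∑ j ∈ Finset.Icc 1 (⌊R ^ t⁻¹⌋₊), ((j:ℝ)) ^ (-p)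
              ≤ A' * R ^ (1/ϑ1) * (R ^ (1/ϑ0 - 1/ϑ1) / (1-p)) := by
                apply mul_le_mul_of_nonneg_left hsum2
                positivity
            _ = A' / (1-p) * (R ^ (1/ϑ1) * R ^ (1/ϑ0 - 1/ϑ1)) := by ring
            _ = A' / (1-p) * R ^ (1/ϑ0) := by
                rw [← Real.rpow_add hRpos]
                ring_nf
            _ = A' / (1-p) * R ^ (1/ϑ0)
                * (1 + Real.log R) ^ ((Finset.univ.filter (fun i : Fin (n+1) => θ i = ϑ0)).card - 1) := by
                rw [hmrel, if_pos hcase, hm0]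
                norm_num
        · intro j hj1 hjt G hG
          have hjpos : (0:ℝ) < (j:ℝ) := by exact_mod_cast hj1
          have hjtpos : (0:ℝ) < (j:ℝ) ^ t := Real.rpow_pos_of_pos hjpos _
          have hR'1 : 1 ≤ R / (j:ℝ) ^ t := (le_div_iff₀ hjtpos).mpr (by linarith)
          have := hA' (R / (j:ℝ) ^ t) hR'1 G hG
          rw [hm1] at this
          simp only [Nat.zero_sub, pow_zero, mul_one] at this
          refine this.trans (le_of_eq ?_)
          rw [div_rpow_helper R hRpos.le _ (Nat.cast_nonneg j) t (1/ϑ1)]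
          have hexp : t * (1/ϑ1) = p := by rw [hcase, hpdef]; field_simp
          rw [hexp]
          ring
      · -- Case B : t = ϑ0, m' ≥ 1
        obtain ⟨A', hA'0, hA'⟩ := IH θ' ϑ0 h0 hle'
        refine ⟨A' * max 1 (1/ϑ0), by positivity, fun R hR F hF => ?_⟩
        have hRpos := hR0 R hR
        have hlogR : 0 ≤ Real.log R := Real.log_nonneg hR
        have key := fiber_card_le n θ hθpos R hR F hF
          (fun j => A' * R ^ (1/ϑ0) * (1 + Real.log R) ^ (m' - 1) * ((j:ℝ))⁻¹) ?_
        · refine key.trans ?_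
          rw [← Finset.mul_sum]
          have hsum : ∑ j ∈ Finset.Icc 1 (⌊R ^ t⁻¹⌋₊), ((j:ℝ))⁻¹
              ≤ max 1 (1/ϑ0) * (1 + Real.log R) := by
            have hmax1 : (1:ℝ) ≤ max 1 (1/ϑ0) := le_max_left _ _
            have hmax2 : 1/ϑ0 ≤ max 1 (1/ϑ0) := le_max_right _ _
            rcases Nat.eq_zero_or_pos (⌊R ^ t⁻¹⌋₊) with hJ | hJ
            · rw [hJ]
              simp only [Finset.Icc_eq_empty_of_lt (by norm_num : (1:ℕ) > 0), Finset.sum_empty]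
              nlinarith
            · have h1 := sum_inv_le_one_add_log _ hJ
              have h2 : Real.log (⌊R ^ t⁻¹⌋₊ : ℝ) ≤ Real.log (R ^ t⁻¹) := by
                apply Real.log_le_log (by exact_mod_cast hJ)
                exact Nat.floor_le (by positivity)
              rw [Real.log_rpow hRpos] at h2
              have h2' : Real.log (⌊R ^ t⁻¹⌋₊ : ℝ) ≤ (1/ϑ0) * Real.log R := by
                rw [one_div, ← hcase]; exact h2
              nlinarith
          calc A' * R ^ (1/ϑ0) * (1 + Real.log R) ^ (m' - 1)
                * ∑ j ∈ Finset.Icc 1 (⌊R ^ t⁻¹⌋₊), ((j:ℝ))⁻¹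
              ≤ A' * R ^ (1/ϑ0) * (1 + Real.log R) ^ (m' - 1)
                * (max 1 (1/ϑ0) * (1 + Real.log R)) := by
                apply mul_le_mul_of_nonneg_left hsum
                positivity
            _ = A' * max 1 (1/ϑ0) * R ^ (1/ϑ0) * ((1 + Real.log R) ^ (m' - 1) * (1 + Real.log R)) := by
                ring
            _ = A' * max 1 (1/ϑ0) * R ^ (1/ϑ0) * (1 + Real.log R) ^ (m' - 1 + 1) := by
                rw [pow_succ]
            _ = A' * max 1 (1/ϑ0) * R ^ (1/ϑ0)
                * (1 + Real.log R) ^ ((Finset.univ.filter (fun i : Fin (n+1) => θ i = ϑ0)).card - 1) := by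
                rw [hmrel, if_pos hcase]
                congr 2
                omega
        · -- per fiber bound
          intro j hj1 hjt G hG
          have hjpos : (0:ℝ) < (j:ℝ) := by exact_mod_cast hj1
          have hjtpos : (0:ℝ) < (j:ℝ) ^ t := Real.rpow_pos_of_pos hjpos _
          have hR'1 : 1 ≤ R / (j:ℝ) ^ t := (le_div_iff₀ hjtpos).mpr (by linarith)
          have hR'le : R / (j:ℝ) ^ t ≤ R :=
            div_le_self hRpos.le (Real.one_le_rpow (by exact_mod_cast hj1) ht.le)
          have := hA' (R / (j:ℝ) ^ t) hR'1 G hG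
          refine this.trans ?_
          rw [div_rpow_helper R hRpos.le _ (Nat.cast_nonneg j) t (1/ϑ0)]
          have hexp : t * (1/ϑ0) = 1 := by rw [hcase]; field_simp
          rw [hexp]
          have hpow : (1 + Real.log (R / (j:ℝ) ^ t)) ^ (m' - 1)
              ≤ (1 + Real.log R) ^ (m' - 1) := by
            apply pow_le_pow_left₀
            · have : (0:ℝ) < R / (j:ℝ)^t := by positivity
              linarith [Real.log_nonneg hR'1]
            · linarith [Real.log_le_log (by positivity) hR'le]
          calc A' * (R ^ (1/ϑ0) * (j:ℝ) ^ (-1:ℝ)) * (1 + Real.log (R / (j:ℝ)^t)) ^ (m'-1)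
              ≤ A' * (R ^ (1/ϑ0) * (j:ℝ) ^ (-1:ℝ)) * (1 + Real.log R) ^ (m'-1) := by
                apply mul_le_mul_of_nonneg_left hpow
                positivity
            _ = A' * R ^ (1/ϑ0) * (1 + Real.log R) ^ (m'-1) * ((j:ℝ))⁻¹ := by
                rw [Real.rpow_neg_one]
                ring
    · -- Case A : ϑ0 < t
      have hlt : ϑ0 < t := lt_of_le_of_ne (hle _) (Ne.symm hcase)
      have hq : 1 < t / ϑ0 := (one_lt_div h0).mpr hlt
      obtain ⟨Z, hZ0, hZ⟩ := exists_zeta_bound (t/ϑ0) hq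
      obtain ⟨A', hA'0, hA'⟩ := IH θ' ϑ0 h0 hle'
      refine ⟨A' * Z, by positivity, fun R hR F hF => ?_⟩
      have hRpos := hR0 R hR
      have hlogR : 0 ≤ Real.log R := Real.log_nonneg hR
      have key := fiber_card_le n θ hθpos R hR F hF
        (fun j => A' * R ^ (1/ϑ0) * (1 + Real.log R) ^ (m' - 1) * ((j:ℝ)) ^ (-(t/ϑ0))) ?_
      · refine key.trans ?_
        rw [← Finset.mul_sum]
        have hsum := hZ (Finset.Icc 1 (⌊R ^ t⁻¹⌋₊))
        calc A' * R ^ (1/ϑ0) * (1 + Real.log R) ^ (m' - 1)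
              * ∑ j ∈ Finset.Icc 1 (⌊R ^ t⁻¹⌋₊), ((j:ℝ)) ^ (-(t/ϑ0))
            ≤ A' * R ^ (1/ϑ0) * (1 + Real.log R) ^ (m' - 1) * Z := by
              apply mul_le_mul_of_nonneg_left hsum
              positivity
          _ = A' * Z * R ^ (1/ϑ0) * (1 + Real.log R) ^ (m' - 1) := by ring
          _ = A' * Z * R ^ (1/ϑ0)
              * (1 + Real.log R) ^ ((Finset.univ.filter (fun i : Fin (n+1) => θ i = ϑ0)).card - 1) := by
              rw [hmrel, if_neg hcase]
              norm_num
      · intro j hj1 hjt G hG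
        have hjpos : (0:ℝ) < (j:ℝ) := by exact_mod_cast hj1
        have hjtpos : (0:ℝ) < (j:ℝ) ^ t := Real.rpow_pos_of_pos hjpos _
        have hR'1 : 1 ≤ R / (j:ℝ) ^ t := (le_div_iff₀ hjtpos).mpr (by linarith)
        have hR'le : R / (j:ℝ) ^ t ≤ R :=
          div_le_self hRpos.le (Real.one_le_rpow (by exact_mod_cast hj1) ht.le)
        have := hA' (R / (j:ℝ) ^ t) hR'1 G hG
        refine this.trans ?_
        rw [div_rpow_helper R hRpos.le _ (Nat.cast_nonneg j) t (1/ϑ0)]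
        have hexp : t * (1/ϑ0) = t/ϑ0 := by rw [mul_one_div]
        rw [hexp]
        have hpow : (1 + Real.log (R / (j:ℝ) ^ t)) ^ (m' - 1)
            ≤ (1 + Real.log R) ^ (m' - 1) := by
          apply pow_le_pow_left₀
          · have : (0:ℝ) < R / (j:ℝ)^t := by positivity
            linarith [Real.log_nonneg hR'1]
          · linarith [Real.log_le_log (by positivity) hR'le]
        calc A' * (R ^ (1/ϑ0) * (j:ℝ) ^ (-(t/ϑ0))) * (1 + Real.log (R / (j:ℝ)^t)) ^ (m'-1)
            ≤ A' * (R ^ (1/ϑ0) * (j:ℝ) ^ (-(t/ϑ0))) * (1 + Real.log R) ^ (m'-1) := by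
              apply mul_le_mul_of_nonneg_left hpow
              have : (0:ℝ) ≤ (j:ℝ) ^ (-(t/ϑ0)) := Real.rpow_nonneg hjpos.le _
              positivity
          _ = A' * R ^ (1/ϑ0) * (1 + Real.log R) ^ (m'-1) * ((j:ℝ)) ^ (-(t/ϑ0)) := by ring

lemma glower (d : ℕ) (θ : Fin d → ℝ) (hθpos : ∀ i, 0 < θ i)
    (ψ : ℕ → (Fin d → ℕ))
    (hψsurj : ∀ v : Fin d → ℕ, (∀ i, 1 ≤ v i) → ∃ k : ℕ, 1 ≤ k ∧ ψ k = v)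
    (hψmono : ∀ k l : ℕ, 1 ≤ k → k ≤ l →
      (∏ i, (ψ l i : ℝ) ^ (-(θ i))) ≤ ∏ i, (ψ k i : ℝ) ^ (-(θ i)))
    (k : ℕ) (hk : 1 ≤ k) (i : Fin d) :
    (k:ℝ) ^ (-(θ i)) ≤ ∏ l, (ψ k l : ℝ) ^ (-(θ l)) := by
  classical
  set e : ℕ → (Fin d → ℕ) := fun j l => if l = i then j else 1 with hedef
  have hepos : ∀ j : ℕ, 1 ≤ j → ∀ l, 1 ≤ e j l := by
    intro j hj l
    simp only [hedef]
    split <;> omega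
  have hchoice : ∀ j : ℕ, ∃ l : ℕ, 1 ≤ l ∧ ψ l = e (j+1) :=
    fun j => hψsurj _ (hepos _ (by omega))
  choose L hL1 hL2 using hchoice
  have hLinj : Function.Injective L := by
    intro j j' h
    have he : e (j+1) = e (j'+1) := by rw [← hL2 j, ← hL2 j', h]
    have := congrFun he i
    simp only [hedef, if_pos rfl] at this
    omega
  have hex : ∃ l ∈ (Finset.range k).image L, k ≤ l := by
    by_contra hcon
    push_neg at hcon
    have hsub : (Finset.range k).image L ⊆ Finset.Icc 1 (k-1) := by
      intro l hl
      simp only [Finset.mem_Icc]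
      obtain ⟨j, _, rfl⟩ := Finset.mem_image.mp hl
      exact ⟨hL1 j, by have := hcon _ hl; omega⟩
    have hc := Finset.card_le_card hsub
    rw [Finset.card_image_of_injective _ hLinj, Finset.card_range, Nat.card_Icc] at hc
    omega
  obtain ⟨l, hlM, hkl⟩ := hex
  obtain ⟨j, hjk, hjl⟩ := Finset.mem_image.mp hlM
  have h1 : (∏ p, (ψ l p : ℝ) ^ (-(θ p))) ≤ ∏ p, (ψ k p : ℝ) ^ (-(θ p)) :=
    hψmono k l hk hkl
  have h2 : ∏ p, (ψ l p : ℝ) ^ (-(θ p)) = ((j+1 : ℕ):ℝ) ^ (-(θ i)) := by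
    rw [← hjl, hL2]
    rw [Finset.prod_eq_single i]
    · simp [hedef]
    · intro p _ hp
      simp [hedef, hp]
    · intro h; exact absurd (Finset.mem_univ i) h
  have hjk' : ((j+1:ℕ):ℝ) ≤ (k:ℝ) := by exact_mod_cast (Finset.mem_range.mp hjk)
  have h3 : (k:ℝ) ^ (-(θ i)) ≤ ((j+1:ℕ):ℝ) ^ (-(θ i)) :=
    Real.rpow_le_rpow_of_nonpos (by positivity) hjk' (neg_nonpos.mpr (hθpos i).le)
  rw [h2] at h1
  exact h3.trans h1

lemma psi_le (d : ℕ) (θ : Fin d → ℝ) (hθpos : ∀ i, 0 < θ i)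
    (ψ : ℕ → (Fin d → ℕ))
    (hψpos : ∀ k : ℕ, 1 ≤ k → ∀ i, 1 ≤ ψ k i)
    (hψsurj : ∀ v : Fin d → ℕ, (∀ i, 1 ≤ v i) → ∃ k : ℕ, 1 ≤ k ∧ ψ k = v)
    (hψmono : ∀ k l : ℕ, 1 ≤ k → k ≤ l →
      (∏ i, (ψ l i : ℝ) ^ (-(θ i))) ≤ ∏ i, (ψ k i : ℝ) ^ (-(θ i)))
    (k : ℕ) (hk : 1 ≤ k) (i : Fin d) : ψ k i ≤ k := by
  have h1 := glower d θ hθpos ψ hψsurj hψmono k hk i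
  have hψ1 : ∀ l, (1:ℝ) ≤ (ψ k l : ℝ) := fun l => by exact_mod_cast hψpos k hk l
  have h2 : (∏ l, (ψ k l : ℝ) ^ (-(θ l))) ≤ (ψ k i : ℝ) ^ (-(θ i)) := by
    rw [← Finset.mul_prod_erase Finset.univ _ (Finset.mem_univ i)]
    have hprod : ∏ l ∈ Finset.univ.erase i, (ψ k l : ℝ) ^ (-(θ l)) ≤ 1 :=
      Finset.prod_le_one
        (fun l _ => Real.rpow_nonneg (by linarith [hψ1 l]) _)
        (fun l _ => Real.rpow_le_one_of_one_le_of_nonpos (hψ1 l) (by linarith [hθpos l]))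
    have hnn : (0:ℝ) ≤ (ψ k i : ℝ) ^ (-(θ i)) := Real.rpow_nonneg (by linarith [hψ1 i]) _
    nlinarith
  have h3 : (k:ℝ) ^ (-(θ i)) ≤ (ψ k i : ℝ) ^ (-(θ i)) := h1.trans h2
  have h4 : (ψ k i : ℝ) ≤ (k:ℝ) := by
    have hkpos : (0:ℝ) < k := by exact_mod_cast hk
    exact (Real.rpow_le_rpow_iff_of_neg hkpos (by linarith [hψ1 i])
      (neg_lt_zero.mpr (hθpos i))).mp h3
  exact_mod_cast h4

lemma gk_bound (d : ℕ) (hd : 0 < d) (θ : Fin d → ℝ) (hθpos : ∀ i, 0 < θ i)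
    (ϑ : ℝ) (hϑmem : ∃ i, θ i = ϑ) (hϑle : ∀ i, ϑ ≤ θ i)
    (m : ℕ) (hm : m = (Finset.univ.filter (fun i => θ i = ϑ)).card)
    (ψ : ℕ → (Fin d → ℕ))
    (hψpos : ∀ k : ℕ, 1 ≤ k → ∀ i, 1 ≤ ψ k i)
    (hψinj : ∀ k l : ℕ, 1 ≤ k → 1 ≤ l → ψ k = ψ l → k = l)
    (hψsurj : ∀ v : Fin d → ℕ, (∀ i, 1 ≤ v i) → ∃ k : ℕ, 1 ≤ k ∧ ψ k = v)
    (hψmono : ∀ k l : ℕ, 1 ≤ k → k ≤ l →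
      (∏ i, (ψ l i : ℝ) ^ (-(θ i))) ≤ ∏ i, (ψ k i : ℝ) ^ (-(θ i))) :
    ∃ C : ℝ, 0 ≤ C ∧ ∀ k : ℕ, 2 ≤ k →
      (∏ i, (ψ k i : ℝ) ^ (-(θ i))) ≤ C * (k:ℝ) ^ (-ϑ) * Real.log k ^ (ϑ * ((m:ℝ) - 1)) := by
  classical
  obtain ⟨i0, hi0⟩ := hϑmem
  have hϑ0 : 0 < ϑ := hi0 ▸ hθpos i0
  have hm1 : 1 ≤ m := by
    rw [hm]
    refine Finset.card_pos.mpr ⟨i0, ?_⟩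
    simp [hi0]
  obtain ⟨A, hA0, hA⟩ := count_le d θ ϑ hϑ0 hϑle
  set Θ := ∑ i, θ i with hΘdef
  have hΘ0 : 0 ≤ Θ := Finset.sum_nonneg (fun i _ => (hθpos i).le)
  set c₀ : ℝ := 1 / Real.log 2 + Θ with hc₀def
  have hlog2 : 0 < Real.log 2 := Real.log_pos (by norm_num)
  have hc₀0 : 0 < c₀ := by positivity
  set B : ℝ := A * c₀ ^ (m - 1) + 1 with hBdef
  have hB0 : 0 < B := by positivity
  refine ⟨B ^ ϑ, Real.rpow_nonneg hB0.le _, fun k hk => ?_⟩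
  have hk1 : 1 ≤ k := by omega
  have hkpos : (0:ℝ) < k := by exact_mod_cast (by omega : 0 < k)
  have hlogk : 0 < Real.log k :=
    Real.log_pos (by exact_mod_cast (by omega : 1 < k))
  have hlogk2 : Real.log 2 ≤ Real.log k :=
    Real.log_le_log (by norm_num) (by exact_mod_cast hk)
  set gk := ∏ i, (ψ k i : ℝ) ^ (-(θ i)) with hgkdef
  set hk_ := ∏ i, (ψ k i : ℝ) ^ (θ i) with hhkdef
  have hψ1 : ∀ l : ℕ, 1 ≤ l → ∀ i, (1:ℝ) ≤ (ψ l i : ℝ) :=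
    fun l hl i => by exact_mod_cast hψpos l hl i
  have hprod_pair : ∀ l : ℕ, 1 ≤ l →
      (∏ i, (ψ l i : ℝ) ^ (-(θ i))) * (∏ i, (ψ l i : ℝ) ^ (θ i)) = 1 := by
    intro l hl
    rw [← Finset.prod_mul_distrib]
    rw [Finset.prod_congr rfl (fun i _ => ?_), Finset.prod_const_one]
    rw [← Real.rpow_add (by linarith [hψ1 l hl i]), neg_add_cancel, Real.rpow_zero]
  have hgh := hprod_pair k hk1
  have hgpos : 0 < gk :=
    Finset.prod_pos (fun i _ => Real.rpow_pos_of_pos (by linarith [hψ1 k hk1 i]) _)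
  have hhpos : 0 < hk_ :=
    Finset.prod_pos (fun i _ => Real.rpow_pos_of_pos (by linarith [hψ1 k hk1 i]) _)
  have hgle1 : gk ≤ 1 :=
    Finset.prod_le_one
      (fun i _ => Real.rpow_nonneg (by linarith [hψ1 k hk1 i]) _)
      (fun i _ => Real.rpow_le_one_of_one_le_of_nonpos (hψ1 k hk1 i) (by linarith [hθpos i]))
  have hR1 : 1 ≤ hk_ := by nlinarith
  -- counting
  set F := (Finset.Icc 1 k).image ψ with hFdef
  have hFcard : F.card = k := by
    rw [hFdef, Finset.card_image_of_injOn, Nat.card_Icc]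
    · omega
    · intro x hx y hy hxy
      simp only [Finset.mem_coe, Finset.mem_Icc] at hx hy
      exact hψinj x y hx.1 hy.1 hxy
  have hcount : (k:ℝ) ≤ A * hk_ ^ (1/ϑ) * (1 + Real.log hk_) ^ (m - 1) := by
    have hF : ∀ v ∈ F, (∀ i, 1 ≤ v i) ∧ ∏ i, (v i : ℝ) ^ (θ i) ≤ hk_ := by
      intro v hv
      obtain ⟨l, hl, rfl⟩ := Finset.mem_image.mp hv
      simp only [Finset.mem_Icc] at hl
      refine ⟨hψpos l hl.1, ?_⟩
      have hmono := hψmono l k hl.1 hl.2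
      have hpl := hprod_pair l hl.1
      have hlpos : 0 < ∏ i, (ψ l i : ℝ) ^ (θ i) :=
        Finset.prod_pos (fun i _ => Real.rpow_pos_of_pos (by linarith [hψ1 l hl.1 i]) _)
      have hglpos : 0 < ∏ i, (ψ l i : ℝ) ^ (-(θ i)) :=
        Finset.prod_pos (fun i _ => Real.rpow_pos_of_pos (by linarith [hψ1 l hl.1 i]) _)
      nlinarith
    have := hA hk_ hR1 F hF
    rw [hFcard, ← hm] at this
    exact this
  -- bound 1 + log hk_
  have hhk_le : hk_ ≤ (k:ℝ) ^ Θ := by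
    rw [hΘdef, Real.rpow_sum_of_pos hkpos]
    apply Finset.prod_le_prod
    · intro i _; exact Real.rpow_nonneg (by linarith [hψ1 k hk1 i]) _
    · intro i _
      apply Real.rpow_le_rpow (by linarith [hψ1 k hk1 i]) ?_ (hθpos i).le
      exact_mod_cast psi_le d θ hθpos ψ hψpos hψsurj hψmono k hk1 i
  have hlogh : Real.log hk_ ≤ Θ * Real.log k := by
    calc Real.log hk_ ≤ Real.log ((k:ℝ) ^ Θ) := Real.log_le_log hhpos hhk_le
      _ = Θ * Real.log k := Real.log_rpow hkpos _
  have h1c : 1 + Real.log hk_ ≤ c₀ * Real.log k := by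
    have h1 : (1:ℝ) ≤ Real.log k / Real.log 2 := (one_le_div hlog2).mpr hlogk2
    have : c₀ * Real.log k = Real.log k / Real.log 2 + Θ * Real.log k := by
      rw [hc₀def]; ring
    rw [this]
    linarith
  have hnn : (0:ℝ) ≤ 1 + Real.log hk_ := by
    have : 0 ≤ Real.log hk_ := Real.log_nonneg hR1
    linarith
  have hcount2 : (k:ℝ) ≤ B * Real.log k ^ (m-1) * hk_ ^ (1/ϑ) := by
    have hp : (1 + Real.log hk_) ^ (m-1) ≤ (c₀ * Real.log k) ^ (m-1) :=
      pow_le_pow_left₀ hnn h1c _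
    have hXnn : (0:ℝ) ≤ hk_ ^ (1/ϑ) := Real.rpow_nonneg hhpos.le _
    calc (k:ℝ) ≤ A * hk_ ^ (1/ϑ) * (1 + Real.log hk_) ^ (m - 1) := hcount
      _ ≤ A * hk_ ^ (1/ϑ) * (c₀ * Real.log k) ^ (m-1) := by
          apply mul_le_mul_of_nonneg_left hp (by positivity)
      _ = (A * c₀ ^ (m-1)) * Real.log k ^ (m-1) * hk_ ^ (1/ϑ) := by
          rw [mul_pow]; ring
      _ ≤ B * Real.log k ^ (m-1) * hk_ ^ (1/ϑ) := by
          apply mul_le_mul_of_nonneg_right ?_ hXnn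
          apply mul_le_mul_of_nonneg_right ?_ (by positivity)
          rw [hBdef]; linarith
  -- invert
  set L := Real.log k ^ (m-1) with hLdef
  have hL0 : 0 < L := by positivity
  have hX : (k:ℝ) / (B * L) ≤ hk_ ^ (1/ϑ) := by
    rw [div_le_iff₀ (by positivity)]
    calc (k:ℝ) ≤ B * L * hk_ ^ (1/ϑ) := by rw [hLdef]; exact hcount2.trans (le_of_eq (by ring))
      _ = hk_ ^ (1/ϑ) * (B * L) := by ring
  have hXpow : ((k:ℝ) / (B * L)) ^ ϑ ≤ hk_ := by
    have h := Real.rpow_le_rpow (by positivity) hX hϑ0.le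
    rwa [one_div, Real.rpow_inv_rpow hhpos.le hϑ0.ne'] at h
  have hgk_le : gk ≤ ((B * L) / (k:ℝ)) ^ ϑ := by
    have hq : (0:ℝ) < ((k:ℝ) / (B * L)) ^ ϑ := Real.rpow_pos_of_pos (by positivity) _
    have hginv : gk = hk_⁻¹ := by
      field_simp
      linarith [hgh]
    rw [hginv]
    calc hk_⁻¹ ≤ (((k:ℝ) / (B * L)) ^ ϑ)⁻¹ := by
          apply inv_anti₀ hq hXpow
      _ = (((k:ℝ) / (B * L))⁻¹) ^ ϑ := (Real.inv_rpow (by positivity) _).symm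
      _ = ((B * L) / (k:ℝ)) ^ ϑ := by rw [inv_div]
  refine hgk_le.trans (le_of_eq ?_)
  rw [Real.div_rpow (by positivity) hkpos.le, Real.mul_rpow hB0.le hL0.le]
  have hLϑ : L ^ ϑ = Real.log k ^ (ϑ * ((m:ℝ) - 1)) := by
    rw [hLdef, ← Real.rpow_natCast (Real.log k) (m-1), ← Real.rpow_mul hlogk.le]
    congr 1
    have : ((m - 1 : ℕ) : ℝ) = (m:ℝ) - 1 := by
      have := Nat.cast_sub hm1 (R := ℝ)
      simpa using this
    rw [this]; ring
  rw [hLϑ, Real.rpow_neg hkpos.le]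
  ring


set_option maxHeartbeats 1000000 in
/-- a nonincreasing arrangement (along the bound `∏ j_i^{-ϑ_i}`) of the
tensor products `⊗_i f^i_{j_i}` of sequences satisfying (A1),(A2) with `γ_i = 0`
satisfies `‖f_k‖ ≤ C k^{-ϑ} (log k)^{ϑ(m-1)}` and `[f_k]_a ≤ C k^b`, where
`ϑ = min ϑ_i`, `m = #{i : ϑ_i = ϑ}`, `a = min a_i`, `b = (max b_i)₊`. -/
theorem stmt10 (d : ℕ) (hd : 0 < d) (T : ℝ) (hT : 0 < T)
    (ϑi ai bi : Fin d → ℝ) (C₁ C₂ : ℝ)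
    (hϑi : ∀ i, 1/2 < ϑi i) (hai : ∀ i, 0 < ai i) (hai1 : ∀ i, ai i ≤ 1)
    (fi : Fin d → ℕ → ℝ → ℝ)
    (hconti : ∀ i j, ContinuousOn (fi i j) (Set.Icc 0 T))
    (hboundi : ∀ i, ∀ j : ℕ, 1 ≤ j → ∀ t ∈ Set.Icc (0:ℝ) T,
      |fi i j t| ≤ C₁ * (j:ℝ) ^ (-(ϑi i)))
    (hholderi : ∀ i, ∀ j : ℕ, 1 ≤ j → ∀ s ∈ Set.Icc (0:ℝ) T, ∀ t ∈ Set.Icc (0:ℝ) T,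
      |fi i j s - fi i j t| ≤ C₂ * (j:ℝ) ^ (bi i) * |s - t| ^ (ai i))
    (ϑ : ℝ) (hϑ : IsLeast (Set.range ϑi) ϑ)
    (m : ℕ) (hm : m = (Finset.univ.filter (fun i => ϑi i = ϑ)).card)
    (a : ℝ) (ha : IsLeast (Set.range ai) a)
    (b : ℝ) (hb : IsGreatest (insert 0 (Set.range bi)) b)
    (ψ : ℕ → (Fin d → ℕ))
    (hψpos : ∀ k : ℕ, 1 ≤ k → ∀ i, 1 ≤ ψ k i)
    (hψinj : ∀ k l : ℕ, 1 ≤ k → 1 ≤ l → ψ k = ψ l → k = l)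
    (hψsurj : ∀ v : Fin d → ℕ, (∀ i, 1 ≤ v i) → ∃ k : ℕ, 1 ≤ k ∧ ψ k = v)
    (hψmono : ∀ k l : ℕ, 1 ≤ k → k ≤ l →
      (∏ i, (ψ l i : ℝ) ^ (-(ϑi i))) ≤ ∏ i, (ψ k i : ℝ) ^ (-(ϑi i))) :
    ∃ C : ℝ, ∀ k : ℕ, 2 ≤ k →
      (∀ t : EuclideanSpace ℝ (Fin d), t ∈ cube d T →
        |∏ i, fi i (ψ k i) (t i)| ≤ C * (k:ℝ) ^ (-ϑ) * Real.log k ^ (ϑ * ((m:ℝ) - 1))) ∧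
      (∀ s : EuclideanSpace ℝ (Fin d), s ∈ cube d T →
       ∀ t : EuclideanSpace ℝ (Fin d), t ∈ cube d T →
        |(∏ i, fi i (ψ k i) (s i)) - ∏ i, fi i (ψ k i) (t i)| ≤
          C * (k:ℝ) ^ b * dist s t ^ a) := by
  classical
  obtain ⟨i0m, hi0m⟩ := Set.mem_range.mp hϑ.1
  have hϑle : ∀ i, ϑ ≤ ϑi i := fun i => hϑ.2 (Set.mem_range_self i)
  have hθpos : ∀ i, 0 < ϑi i := fun i => by linarith [hϑi i]
  have hϑ0 : 0 < ϑ := hi0m ▸ hθpos i0m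
  have hale : ∀ i, a ≤ ai i := fun i => ha.2 (Set.mem_range_self i)
  obtain ⟨ia, hia⟩ := Set.mem_range.mp ha.1
  have ha0 : 0 < a := hia ▸ hai ia
  have hb0 : 0 ≤ b := hb.2 (Set.mem_insert 0 _)
  have hble : ∀ i, bi i ≤ b := fun i => hb.2 (Set.mem_insert_of_mem _ (Set.mem_range_self i))
  set i0 : Fin d := ⟨0, hd⟩ with hi0def
  have h0T : (0:ℝ) ∈ Set.Icc (0:ℝ) T := ⟨le_refl 0, hT.le⟩
  have hTT : T ∈ Set.Icc (0:ℝ) T := ⟨hT.le, le_refl T⟩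
  have hC₁ : 0 ≤ C₁ := by
    have h := hboundi i0 1 le_rfl 0 h0T
    simp only [Nat.cast_one, Real.one_rpow, mul_one] at h
    exact le_trans (abs_nonneg _) h
  have hC₂ : 0 ≤ C₂ := by
    have h := hholderi i0 1 le_rfl T hTT 0 h0T
    simp only [Nat.cast_one, Real.one_rpow, mul_one, sub_zero] at h
    have h2 : (0:ℝ) ≤ C₂ * |T| ^ (ai i0) := le_trans (abs_nonneg _) h
    have h3 : (0:ℝ) < |T| ^ (ai i0) :=
      Real.rpow_pos_of_pos (abs_pos.mpr hT.ne') _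
    nlinarith
  obtain ⟨C0, hC00, hC0⟩ := gk_bound d hd ϑi hθpos ϑ ⟨i0m, hi0m⟩ hϑle m hm ψ
    hψpos hψinj hψsurj hψmono
  set M := max C₁ 1 with hMdef
  have hM0 : (0:ℝ) ≤ M := le_trans zero_le_one (le_max_right _ _)
  have hC₁M : C₁ ≤ M := le_max_left _ _
  set K := max 1 (T * Real.sqrt d) with hKdef
  have hK1 : (1:ℝ) ≤ K := le_max_left _ _
  refine ⟨C₁ ^ d * C0 + (d:ℝ) * M ^ (d-1) * C₂ * K, fun k hk => ?_⟩
  have hk1 : 1 ≤ k := by omega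
  have hkR : (1:ℝ) ≤ (k:ℝ) := by exact_mod_cast hk1
  have hlogk : 0 < Real.log k := Real.log_pos (by exact_mod_cast (by omega : 1 < k))
  have hψ1 : ∀ i, (1:ℝ) ≤ (ψ k i : ℝ) := fun i => by exact_mod_cast hψpos k hk1 i
  have hChold0 : (0:ℝ) ≤ (d:ℝ) * M ^ (d-1) * C₂ * K := by positivity
  constructor
  · -- sup-norm bound
    intro t htc
    have hti : ∀ i, t i ∈ Set.Icc (0:ℝ) T := htc
    have h1 : |∏ i, fi i (ψ k i) (t i)| ≤ ∏ i, (C₁ * (ψ k i : ℝ) ^ (-(ϑi i))) := by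
      rw [Finset.abs_prod]
      apply Finset.prod_le_prod (fun i _ => abs_nonneg _)
      intro i _
      exact hboundi i (ψ k i) (hψpos k hk1 i) (t i) (hti i)
    have h2 : ∏ i, (C₁ * (ψ k i : ℝ) ^ (-(ϑi i)))
        = C₁ ^ d * ∏ i, (ψ k i : ℝ) ^ (-(ϑi i)) := by
      rw [Finset.prod_mul_distrib, Finset.prod_const, Finset.card_fin]
    have h3 := hC0 k hk
    have h4 : (0:ℝ) ≤ (k:ℝ) ^ (-ϑ) * Real.log k ^ (ϑ * ((m:ℝ)-1)) := by positivity
    calc |∏ i, fi i (ψ k i) (t i)|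
        ≤ C₁ ^ d * ∏ i, (ψ k i : ℝ) ^ (-(ϑi i)) := by rw [← h2]; exact h1
      _ ≤ C₁ ^ d * (C0 * (k:ℝ) ^ (-ϑ) * Real.log k ^ (ϑ * ((m:ℝ)-1))) := by
          apply mul_le_mul_of_nonneg_left h3 (by positivity)
      _ = (C₁ ^ d * C0) * (k:ℝ) ^ (-ϑ) * Real.log k ^ (ϑ * ((m:ℝ)-1)) := by ring
      _ ≤ (C₁ ^ d * C0 + (d:ℝ) * M ^ (d-1) * C₂ * K) * (k:ℝ) ^ (-ϑ)
            * Real.log k ^ (ϑ * ((m:ℝ)-1)) := by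
          have : (0:ℝ) ≤ C₁ ^ d * C0 := by positivity
          nlinarith
  · -- Hölder bound
    intro s hs t ht
    have hsi : ∀ i, s i ∈ Set.Icc (0:ℝ) T := hs
    have hti : ∀ i, t i ∈ Set.Icc (0:ℝ) T := ht
    have hdist : dist s t = Real.sqrt (∑ i, (s i - t i)^2) := by
      rw [EuclideanSpace.dist_eq]
      congr 1
      apply Finset.sum_congr rfl
      intro i _
      rw [Real.dist_eq, sq_abs]
    have hδ0 : (0:ℝ) ≤ dist s t := dist_nonneg
    have hcoord : ∀ i, |s i - t i| ≤ dist s t := by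
      intro i
      rw [hdist, ← Real.sqrt_sq_eq_abs]
      apply Real.sqrt_le_sqrt
      exact Finset.single_le_sum (f := fun j => (s j - t j)^2) (fun j _ => sq_nonneg _) (Finset.mem_univ i)
    have hdle : dist s t ≤ T * Real.sqrt d := by
      rw [hdist]
      have hsum : ∑ i, (s i - t i)^2 ≤ ∑ _i : Fin d, T^2 := by
        apply Finset.sum_le_sum
        intro i _
        have h1 : |s i - t i| ≤ T := by
          rw [abs_le]
          have h2 := hsi i; have h3 := hti i
          constructor <;> [linarith [h2.1, h3.2]; linarith [h2.2, h3.1]]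
        nlinarith [abs_nonneg (s i - t i), sq_abs (s i - t i)]
      calc Real.sqrt (∑ i, (s i - t i)^2) ≤ Real.sqrt (∑ _i : Fin d, T^2) :=
            Real.sqrt_le_sqrt hsum
        _ = T * Real.sqrt d := by
          rw [Finset.sum_const, Finset.card_fin, nsmul_eq_mul,
            Real.sqrt_mul (Nat.cast_nonneg d), Real.sqrt_sq hT.le]
          ring
    have hterm : ∀ i, |fi i (ψ k i) (s i) - fi i (ψ k i) (t i)|
        ≤ C₂ * (k:ℝ) ^ b * (K * dist s t ^ a) := by
      intro i
      have h1 := hholderi i (ψ k i) (hψpos k hk1 i) (s i) (hsi i) (t i) (hti i)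
      have hψk : (ψ k i : ℝ) ≤ (k:ℝ) := by
        exact_mod_cast psi_le d ϑi hθpos ψ hψpos hψsurj hψmono k hk1 i
      have hb1 : (ψ k i : ℝ) ^ (bi i) ≤ (k:ℝ) ^ b := by
        rcases le_or_gt 0 (bi i) with hbi | hbi
        · calc (ψ k i : ℝ) ^ (bi i) ≤ (k:ℝ) ^ (bi i) :=
              Real.rpow_le_rpow (by linarith [hψ1 i]) hψk hbi
            _ ≤ (k:ℝ) ^ b := Real.rpow_le_rpow_of_exponent_le hkR (hble i)
        · calc (ψ k i : ℝ) ^ (bi i) ≤ 1 :=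
              Real.rpow_le_one_of_one_le_of_nonpos (hψ1 i) hbi.le
            _ ≤ (k:ℝ) ^ b := Real.one_le_rpow hkR hb0
      have hx1 : |s i - t i| ^ (ai i) ≤ K * dist s t ^ a := by
        have hxa : |s i - t i| ^ (ai i) ≤ dist s t ^ (ai i) :=
          Real.rpow_le_rpow (abs_nonneg _) (hcoord i) (hai i).le
        rcases eq_or_lt_of_le hδ0 with hδ | hδ
        · rw [← hδ] at hxa ⊢
          rw [Real.zero_rpow (ne_of_gt (hai i))] at hxa
          rw [Real.zero_rpow (ne_of_gt ha0)]
          rw [mul_zero]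
          exact hxa
        · rcases le_or_gt (dist s t) 1 with h1d | h1d
          · have h2 : dist s t ^ (ai i) ≤ dist s t ^ a :=
              Real.rpow_le_rpow_of_exponent_ge hδ h1d (hale i)
            have h2' : (0:ℝ) ≤ (K - 1) * dist s t ^ a :=
              mul_nonneg (by linarith) (Real.rpow_nonneg hδ0 a)
            nlinarith [hxa]
          · have h2 : dist s t ^ (ai i) ≤ dist s t ^ (1:ℝ) :=
              Real.rpow_le_rpow_of_exponent_le h1d.le (hai1 i)
            rw [Real.rpow_one] at h2
            have h3 : dist s t ≤ K := le_trans hdle (le_max_right _ _)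
            have h4 : 1 ≤ dist s t ^ a := Real.one_le_rpow h1d.le ha0.le
            have h5 : K * 1 ≤ K * dist s t ^ a :=
              mul_le_mul_of_nonneg_left h4 (by linarith)
            linarith
      calc |fi i (ψ k i) (s i) - fi i (ψ k i) (t i)|
          ≤ C₂ * (ψ k i : ℝ) ^ (bi i) * |s i - t i| ^ (ai i) := h1
        _ ≤ C₂ * (k:ℝ) ^ b * (K * dist s t ^ a) := by
            apply mul_le_mul (mul_le_mul_of_nonneg_left hb1 hC₂)
              hx1 (Real.rpow_nonneg (abs_nonneg _) _)
              (by positivity)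
    have hus : ∀ i ∈ Finset.univ, |fi i (ψ k i) (s i)| ≤ M := by
      intro i _
      have h1 := hboundi i (ψ k i) (hψpos k hk1 i) (s i) (hsi i)
      have h2 : (ψ k i : ℝ) ^ (-(ϑi i)) ≤ 1 :=
        Real.rpow_le_one_of_one_le_of_nonpos (hψ1 i) (by linarith [hθpos i])
      have h3 : (0:ℝ) ≤ (ψ k i : ℝ) ^ (-(ϑi i)) := Real.rpow_nonneg (by linarith [hψ1 i]) _
      calc |fi i (ψ k i) (s i)| ≤ C₁ * (ψ k i : ℝ) ^ (-(ϑi i)) := h1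
        _ ≤ C₁ := by nlinarith
        _ ≤ M := hC₁M
    have hws : ∀ i ∈ Finset.univ, |fi i (ψ k i) (t i)| ≤ M := by
      intro i _
      have h1 := hboundi i (ψ k i) (hψpos k hk1 i) (t i) (hti i)
      have h2 : (ψ k i : ℝ) ^ (-(ϑi i)) ≤ 1 :=
        Real.rpow_le_one_of_one_le_of_nonpos (hψ1 i) (by linarith [hθpos i])
      have h3 : (0:ℝ) ≤ (ψ k i : ℝ) ^ (-(ϑi i)) := Real.rpow_nonneg (by linarith [hψ1 i]) _
      calc |fi i (ψ k i) (t i)| ≤ C₁ * (ψ k i : ℝ) ^ (-(ϑi i)) := h1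
        _ ≤ C₁ := by nlinarith
        _ ≤ M := hC₁M
    have htel := prod_sub_prod_bound Finset.univ (fun i => fi i (ψ k i) (s i))
      (fun i => fi i (ψ k i) (t i)) M hM0 hus hws
    rw [Finset.card_fin] at htel
    have hsumterm : ∑ i, |fi i (ψ k i) (s i) - fi i (ψ k i) (t i)|
        ≤ (d:ℝ) * (C₂ * (k:ℝ) ^ b * (K * dist s t ^ a)) := by
      calc ∑ i, |fi i (ψ k i) (s i) - fi i (ψ k i) (t i)|
          ≤ ∑ _i : Fin d, C₂ * (k:ℝ) ^ b * (K * dist s t ^ a) :=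
            Finset.sum_le_sum (fun i _ => hterm i)
        _ = (d:ℝ) * (C₂ * (k:ℝ) ^ b * (K * dist s t ^ a)) := by
            rw [Finset.sum_const, Finset.card_fin, nsmul_eq_mul]
    calc |(∏ i, fi i (ψ k i) (s i)) - ∏ i, fi i (ψ k i) (t i)|
        ≤ M ^ (d-1) * ∑ i, |fi i (ψ k i) (s i) - fi i (ψ k i) (t i)| := htel
      _ ≤ M ^ (d-1) * ((d:ℝ) * (C₂ * (k:ℝ) ^ b * (K * dist s t ^ a))) := by
          apply mul_le_mul_of_nonneg_left hsumterm (by positivity)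
      _ = ((d:ℝ) * M ^ (d-1) * C₂ * K) * (k:ℝ) ^ b * dist s t ^ a := by ring
      _ ≤ (C₁ ^ d * C0 + (d:ℝ) * M ^ (d-1) * C₂ * K) * (k:ℝ) ^ b * dist s t ^ a := by
          have h5 : (0:ℝ) ≤ C₁ ^ d * C0 := by positivity
          have h6 : (0:ℝ) ≤ (k:ℝ) ^ b := Real.rpow_nonneg (Nat.cast_nonneg k) _
          have h7 : (0:ℝ) ≤ dist s t ^ a := Real.rpow_nonneg hδ0 _
          nlinarith [mul_nonneg (mul_nonneg h5 h6) h7]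
end

section
/- Let ψ : [0,T] → ℝ have finite total variation and define f_j(t) = √(2/T) ∫₀^t ψ(s) cos((t−s)/√λ_j) ds with λ_j = (π(j−1/2)/T)^{−2}. Then ‖f_j‖_∞ ≤ √(2λ_j/T) (|ψ(0)| + Var(ψ,[0,T])); in particular ‖f_j‖_∞ ≤ C j^{−1} for a constant C depending only on T and ψ. -/
open Real MeasureTheory

lemma cos_int (c t a : ℝ) (hc : c ≠ 0) :
    ∫ s in a..t, Real.cos ((t - s)/c) = c * Real.sin ((t - a)/c) := by
  rw [intervalIntegral.integral_comp_sub_left (fun u => Real.cos (u / c)) t,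
    intervalIntegral.integral_comp_div (fun u => Real.cos u) hc]
  simp [integral_cos]

lemma keyA (c t : ℝ) (hc : 0 < c) (ht : 0 ≤ t) (g : ℝ → ℝ) (hg : Monotone g)
    (hg0 : g 0 = 0) :
    |∫ s in (0:ℝ)..t, g s * Real.cos ((t - s) / c)| ≤ c * g t := by
  have hgt : 0 ≤ g t := hg0 ▸ hg ht
  set F : ℝ → ℝ → ℝ := fun s y => (if y < g s then (1:ℝ) else 0) * Real.cos ((t - s)/c)
    with hF
  -- inner identity in y
  have inner_y : ∀ s ∈ Set.Ioc (0:ℝ) t,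
      g s * Real.cos ((t - s)/c) = ∫ y in Set.Ioc (0:ℝ) (g t), F s y := by
    intro s hs
    have hgs0 : 0 ≤ g s := hg0 ▸ hg hs.1.le
    have hgst : g s ≤ g t := hg hs.2
    have h1 : (fun y => if y < g s then (1:ℝ) else 0)
        = (Set.Iio (g s)).indicator (fun _ => (1:ℝ)) := by
      ext y; by_cases h : y < g s <;> simp [Set.indicator, Set.mem_Iio, h]
    have h2 : Set.Ioc (0:ℝ) (g t) ∩ Set.Iio (g s) = Set.Ioo 0 (g s) := by
      ext y
      simp only [Set.mem_inter_iff, Set.mem_Ioc, Set.mem_Iio, Set.mem_Ioo]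
      constructor
      · rintro ⟨⟨h0, _⟩, hlt⟩; exact ⟨h0, hlt⟩
      · rintro ⟨h0, hlt⟩; exact ⟨⟨h0, hlt.le.trans hgst⟩, hlt⟩
    calc g s * Real.cos ((t - s)/c)
        = (∫ y in Set.Ioc (0:ℝ) (g t), (if y < g s then (1:ℝ) else 0)) *
            Real.cos ((t - s)/c) := by
          rw [h1, MeasureTheory.setIntegral_indicator measurableSet_Iio, h2]
          simp [Real.volume_Ioo, ENNReal.toReal_ofReal hgs0, hgs0]
      _ = ∫ y in Set.Ioc (0:ℝ) (g t), F s y := by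
          rw [← MeasureTheory.integral_mul_const]
  -- integrability of F on the product
  have hmeas : Measurable (Function.uncurry F) := by
    apply Measurable.mul
    · exact Measurable.ite (measurableSet_lt measurable_snd (hg.measurable.comp measurable_fst))
        measurable_const measurable_const
    · exact (Real.continuous_cos.comp ((continuous_const.sub continuous_fst).div_const c)).measurable
  haveI h1fin : IsFiniteMeasure (volume.restrict (Set.Ioc (0:ℝ) t)) :=
    ⟨by rw [Measure.restrict_apply_univ]; exact measure_Ioc_lt_top⟩
  haveI h2fin : IsFiniteMeasure (volume.restrict (Set.Ioc (0:ℝ) (g t))) :=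
    ⟨by rw [Measure.restrict_apply_univ]; exact measure_Ioc_lt_top⟩
  have hFint : Integrable (Function.uncurry F)
      ((volume.restrict (Set.Ioc (0:ℝ) t)).prod (volume.restrict (Set.Ioc (0:ℝ) (g t)))) := by
    refine (integrable_const (1:ℝ)).mono' hmeas.aestronglyMeasurable ?_
    filter_upwards with p
    have : ‖Function.uncurry F p‖ = |(if p.2 < g p.1 then (1:ℝ) else 0)| * |Real.cos ((t - p.1)/c)| := by
      rw [show Function.uncurry F p = (if p.2 < g p.1 then (1:ℝ) else 0) * Real.cos ((t - p.1)/c) from rfl,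
        Real.norm_eq_abs, abs_mul]
    rw [this]
    calc |(if p.2 < g p.1 then (1:ℝ) else 0)| * |Real.cos ((t - p.1)/c)|
        ≤ 1 * 1 := mul_le_mul (by split <;> simp) (Real.abs_cos_le_one _) (abs_nonneg _) zero_le_one
      _ = 1 := by ring
  -- swap
  have hswap : ∫ s in Set.Ioc (0:ℝ) t, ∫ y in Set.Ioc (0:ℝ) (g t), F s y
      = ∫ y in Set.Ioc (0:ℝ) (g t), ∫ s in Set.Ioc (0:ℝ) t, F s y :=
    MeasureTheory.integral_integral_swap hFint
  -- bound the inner s-integral for each y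
  have hinner : ∀ y ∈ Set.Ioc (0:ℝ) (g t), ‖∫ s in Set.Ioc (0:ℝ) t, F s y‖ ≤ c := by
    intro y hy
    by_cases hS : {x | x ∈ Set.Icc (0:ℝ) t ∧ y < g x}.Nonempty
    · set S := {x | x ∈ Set.Icc (0:ℝ) t ∧ y < g x} with hSdef
      have hbdd : BddBelow S := ⟨0, fun x hx => hx.1.1⟩
      set a := sInf S with ha
      have ha0 : 0 ≤ a := le_csInf hS fun x hx => hx.1.1
      have hat : a ≤ t := by
        obtain ⟨x, hx⟩ := hS
        exact (csInf_le hbdd hx).trans hx.1.2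
      have hcongr : ∀ᵐ s ∂(volume.restrict (Set.Ioc (0:ℝ) t)),
          F s y = (Set.Ioi a).indicator (fun s => Real.cos ((t - s)/c)) s := by
        have hne : ∀ᵐ s : ℝ, s ≠ a := by
          rw [MeasureTheory.ae_iff]
          simpa using measure_singleton a
        filter_upwards [MeasureTheory.ae_restrict_of_ae hne,
          MeasureTheory.ae_restrict_mem measurableSet_Ioc] with s hsne hsmem
        rcases lt_trichotomy s a with hlt | heq | hgt
        · have hns : s ∉ S := fun hmem => absurd (csInf_le hbdd hmem) (not_le.mpr hlt)
          have : ¬ (y < g s) := fun hy' => hns ⟨⟨hsmem.1.le, hsmem.2⟩, hy'⟩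
          simp [hF, this, Set.indicator_of_notMem (by simpa using hlt.not_gt : s ∉ Set.Ioi a)]
        · exact absurd heq hsne
        · obtain ⟨x, hxS, hxs⟩ := exists_lt_of_csInf_lt hS hgt
          have : y < g s := lt_of_lt_of_le hxS.2 (hg hxs.le)
          simp [hF, this, Set.indicator_of_mem (by simpa using hgt : s ∈ Set.Ioi a)]
      have hval : ∫ s in Set.Ioc (0:ℝ) t, F s y = c * Real.sin ((t - a)/c) := by
        rw [MeasureTheory.integral_congr_ae hcongr,
          MeasureTheory.setIntegral_indicator measurableSet_Ioi]
        have : Set.Ioc (0:ℝ) t ∩ Set.Ioi a = Set.Ioc a t := by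
          ext x
          simp only [Set.mem_inter_iff, Set.mem_Ioc, Set.mem_Ioi]
          constructor
          · rintro ⟨⟨_, hxt⟩, hax⟩; exact ⟨hax, hxt⟩
          · rintro ⟨hax, hxt⟩; exact ⟨⟨lt_of_le_of_lt ha0 hax, hxt⟩, hax⟩
        rw [this, ← intervalIntegral.integral_of_le hat, cos_int c t a hc.ne']
      rw [hval]
      calc ‖c * Real.sin ((t - a)/c)‖ = c * |Real.sin ((t - a)/c)| := by
            rw [norm_mul, Real.norm_eq_abs, Real.norm_eq_abs, abs_of_pos hc]
        _ ≤ c * 1 := by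
            exact mul_le_mul_of_nonneg_left (Real.abs_sin_le_one _) hc.le
        _ = c := mul_one c
    · have : ∀ᵐ s ∂(volume.restrict (Set.Ioc (0:ℝ) t)), F s y = 0 := by
        filter_upwards [MeasureTheory.ae_restrict_mem measurableSet_Ioc] with s hsmem
        have : ¬ (y < g s) := fun hy' => hS ⟨s, ⟨hsmem.1.le, hsmem.2⟩, hy'⟩
        simp [hF, this]
      rw [MeasureTheory.integral_congr_ae this]
      simpa using hc.le
  -- put everything together
  have hmeasIoc : volume (Set.Ioc (0:ℝ) (g t)) < ⊤ := measure_Ioc_lt_top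
  have hbound : ‖∫ y in Set.Ioc (0:ℝ) (g t), ∫ s in Set.Ioc (0:ℝ) t, F s y‖
      ≤ c * (volume (Set.Ioc (0:ℝ) (g t))).toReal := by
    exact MeasureTheory.norm_setIntegral_le_of_norm_le_const hmeasIoc hinner
  have hvol : (volume (Set.Ioc (0:ℝ) (g t))).toReal = g t := by
    rw [Real.volume_Ioc, ENNReal.toReal_ofReal (by linarith), sub_zero]
  calc |∫ s in (0:ℝ)..t, g s * Real.cos ((t - s) / c)|
      = ‖∫ s in Set.Ioc (0:ℝ) t, g s * Real.cos ((t - s)/c)‖ := by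
        rw [intervalIntegral.integral_of_le ht, Real.norm_eq_abs]
    _ = ‖∫ y in Set.Ioc (0:ℝ) (g t), ∫ s in Set.Ioc (0:ℝ) t, F s y‖ := by
        rw [MeasureTheory.setIntegral_congr_fun measurableSet_Ioc inner_y, hswap]
    _ ≤ c * (volume (Set.Ioc (0:ℝ) (g t))).toReal := hbound
    _ = c * g t := by rw [hvol]

/-- if `ψ` has finite total variation on `[0,T]` and
`f_j(t) = √(2/T) ∫₀^t ψ(s) cos((t-s)/√λ_j) ds` with `λ_j = (π(j-1/2)/T)^{-2}`, then
`‖f_j‖_∞ ≤ √(2λ_j/T)(|ψ(0)| + Var(ψ,[0,T]))`; in particular `‖f_j‖_∞ ≤ C j⁻¹`. -/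
theorem stmt13 (T : ℝ) (hT : 0 < T) (ψ : ℝ → ℝ)
    (hψint : IntegrableOn ψ (Set.Icc 0 T))
    (hBV : eVariationOn ψ (Set.Icc 0 T) ≠ ⊤)
    (lam : ℕ → ℝ) (hlam : ∀ j : ℕ, lam j = (π * ((j:ℝ) - 1/2) / T) ^ (-(2:ℝ)))
    (f : ℕ → ℝ → ℝ)
    (hf : ∀ (j : ℕ) (t : ℝ), f j t =
      Real.sqrt (2/T) * ∫ s in (0:ℝ)..t, ψ s * Real.cos ((t - s) / Real.sqrt (lam j))) :
    (∀ j : ℕ, 1 ≤ j → ∀ t ∈ Set.Icc (0:ℝ) T,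
      |f j t| ≤ Real.sqrt (2 * lam j / T) *
        (|ψ 0| + (eVariationOn ψ (Set.Icc 0 T)).toReal)) ∧
    ∃ C : ℝ, ∀ j : ℕ, 1 ≤ j → ∀ t ∈ Set.Icc (0:ℝ) T, |f j t| ≤ C / (j:ℝ) := by
  have hs0 : (0:ℝ) ∈ Set.Icc (0:ℝ) T := ⟨le_rfl, hT.le⟩
  have hsT : T ∈ Set.Icc (0:ℝ) T := ⟨hT.le, le_rfl⟩
  have hBVon : BoundedVariationOn ψ (Set.Icc 0 T) := hBV
  have hloc := hBVon.locallyBoundedVariationOn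
  set S := Set.Icc (0:ℝ) T with hSdef
  set v : ℝ → ℝ := fun x => variationOnFromTo ψ S 0 x with hv
  set Var := (eVariationOn ψ S).toReal with hVar
  have hv0 : v 0 = 0 := variationOnFromTo.self ψ S 0
  have hvT : v T = Var := by
    rw [hv]
    dsimp only
    rw [variationOnFromTo.eq_of_le ψ S hT.le, hVar]
    congr 1
    rw [hSdef, Set.inter_self]
  have hvmono : MonotoneOn v S := variationOnFromTo.monotoneOn hloc hs0
  have habs : ∀ x ∈ S, ∀ y ∈ S, x ≤ y → |ψ y - ψ x| ≤ v y - v x := by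
    intro x hx y hy hxy
    have hadd := variationOnFromTo.add hloc hs0 hx hy
    have h1 : variationOnFromTo ψ S x y = v y - v x := by
      rw [hv]; dsimp only; linarith [hadd]
    rw [← h1, variationOnFromTo.eq_of_le ψ S hxy]
    have hed := eVariationOn.edist_le ψ
      (show y ∈ S ∩ Set.Icc x y from ⟨hy, hxy, le_rfl⟩)
      (show x ∈ S ∩ Set.Icc x y from ⟨hx, le_rfl, hxy⟩)
    have hfin : eVariationOn ψ (S ∩ Set.Icc x y) ≠ ⊤ := hloc x y hx hy
    have := ENNReal.toReal_mono hfin hed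
    rwa [edist_dist, ENNReal.toReal_ofReal dist_nonneg, Real.dist_eq] at this
  set cl : ℝ → ℝ := fun x => max 0 (min x T) with hcl
  have hclmono : Monotone cl := monotone_const.max (monotone_id.min monotone_const)
  have hclmem : ∀ x, cl x ∈ S := fun x => ⟨le_max_left _ _, max_le hT.le (min_le_right _ _)⟩
  have hcleq : ∀ x ∈ S, cl x = x := by
    intro x hx
    rw [hcl]; dsimp only; rw [min_eq_left hx.2, max_eq_right hx.1]
  set P : ℝ → ℝ := fun x => (v (cl x) + ψ (cl x) - ψ 0)/2 with hP
  set N : ℝ → ℝ := fun x => (v (cl x) - ψ (cl x) + ψ 0)/2 with hN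
  have hPmono : Monotone P := by
    intro x y hxy
    have h2 := habs (cl x) (hclmem x) (cl y) (hclmem y) (hclmono hxy)
    have h3 := (abs_le.mp h2).1
    rw [hP]; dsimp only; linarith
  have hNmono : Monotone N := by
    intro x y hxy
    have h2 := habs (cl x) (hclmem x) (cl y) (hclmem y) (hclmono hxy)
    have h3 := (abs_le.mp h2).2
    rw [hN]; dsimp only; linarith
  have hcl0 : cl 0 = 0 := hcleq 0 hs0
  have hP0 : P 0 = 0 := by rw [hP]; dsimp only; rw [hcl0, hv0]; ring
  have hN0 : N 0 = 0 := by rw [hN]; dsimp only; rw [hcl0, hv0]; ring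
  have hψeq : ∀ x ∈ S, ψ x = ψ 0 + P x - N x := by
    intro x hx
    rw [hP, hN]; dsimp only; rw [hcleq x hx]; ring
  have key : ∀ j : ℕ, 1 ≤ j → ∀ t ∈ Set.Icc (0:ℝ) T,
      |f j t| ≤ Real.sqrt (2/T) * Real.sqrt (lam j) * (|ψ 0| + Var) := by
    intro j hj t ht
    set c := Real.sqrt (lam j) with hcdef
    have hj1 : (1:ℝ) ≤ (j:ℝ) := by exact_mod_cast hj
    have hbpos : 0 < π * ((j:ℝ) - 1/2) / T :=
      div_pos (mul_pos Real.pi_pos (by linarith)) hT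
    have hlampos : 0 < lam j := by rw [hlam]; exact Real.rpow_pos_of_pos hbpos _
    have hcpos : 0 < c := Real.sqrt_pos.mpr hlampos
    have hcos_cont : ContinuousOn (fun x => Real.cos ((t - x)/c)) (Set.uIcc 0 t) :=
      (Real.continuous_cos.comp ((continuous_const.sub continuous_id).div_const c)).continuousOn
    have hPint : IntervalIntegrable (fun x => P x * Real.cos ((t - x)/c)) volume 0 t :=
      ((hPmono.monotoneOn _).intervalIntegrable).mul_continuousOn hcos_cont
    have hNint : IntervalIntegrable (fun x => N x * Real.cos ((t - x)/c)) volume 0 t :=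
      ((hNmono.monotoneOn _).intervalIntegrable).mul_continuousOn hcos_cont
    have hconst : IntervalIntegrable (fun x => ψ 0 * Real.cos ((t - x)/c)) volume 0 t :=
      (continuous_const.mul
        (Real.continuous_cos.comp ((continuous_const.sub continuous_id).div_const c))).intervalIntegrable 0 t
    have hsplit : ∫ x in (0:ℝ)..t, ψ x * Real.cos ((t - x)/c)
        = (∫ x in (0:ℝ)..t, ψ 0 * Real.cos ((t - x)/c))
          + (∫ x in (0:ℝ)..t, P x * Real.cos ((t - x)/c))
          - (∫ x in (0:ℝ)..t, N x * Real.cos ((t - x)/c)) := by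
      rw [← intervalIntegral.integral_add hconst hPint,
        ← intervalIntegral.integral_sub (hconst.add hPint) hNint]
      apply intervalIntegral.integral_congr
      intro x hx
      rw [Set.uIcc_of_le ht.1] at hx
      have hxS : x ∈ S := ⟨hx.1, hx.2.trans ht.2⟩
      show ψ x * Real.cos ((t - x)/c)
        = ψ 0 * Real.cos ((t - x)/c) + P x * Real.cos ((t - x)/c) - N x * Real.cos ((t - x)/c)
      rw [hψeq x hxS]; ring
    have e1 : |∫ x in (0:ℝ)..t, ψ 0 * Real.cos ((t - x)/c)| ≤ |ψ 0| * c := by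
      rw [intervalIntegral.integral_const_mul, cos_int c t 0 hcpos.ne', abs_mul, abs_mul,
        abs_of_pos hcpos]
      have h1 : |Real.sin ((t - 0)/c)| ≤ 1 := Real.abs_sin_le_one _
      have h2 : c * |Real.sin ((t - 0)/c)| ≤ c := by nlinarith
      exact mul_le_mul_of_nonneg_left h2 (abs_nonneg _)
    have e2 := keyA c t hcpos ht.1 P hPmono hP0
    have e3 := keyA c t hcpos ht.1 N hNmono hN0
    have hPt : 0 ≤ P t := hP0 ▸ hPmono ht.1
    have hNt : 0 ≤ N t := hN0 ▸ hNmono ht.1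
    have hsum : P t + N t ≤ Var := by
      have hPNt : P t + N t = v t := by
        rw [hP, hN]; dsimp only; rw [hcleq t ht]; ring
      rw [hPNt, ← hvT]
      exact hvmono ht hsT ht.2
    have hint : |∫ x in (0:ℝ)..t, ψ x * Real.cos ((t - x)/c)| ≤ c * (|ψ 0| + Var) := by
      rw [hsplit]
      calc |(∫ x in (0:ℝ)..t, ψ 0 * Real.cos ((t - x)/c))
              + (∫ x in (0:ℝ)..t, P x * Real.cos ((t - x)/c))
              - (∫ x in (0:ℝ)..t, N x * Real.cos ((t - x)/c))|
          ≤ |(∫ x in (0:ℝ)..t, ψ 0 * Real.cos ((t - x)/c))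
              + (∫ x in (0:ℝ)..t, P x * Real.cos ((t - x)/c))|
            + |∫ x in (0:ℝ)..t, N x * Real.cos ((t - x)/c)| := abs_sub _ _
        _ ≤ |∫ x in (0:ℝ)..t, ψ 0 * Real.cos ((t - x)/c)|
            + |∫ x in (0:ℝ)..t, P x * Real.cos ((t - x)/c)|
            + |∫ x in (0:ℝ)..t, N x * Real.cos ((t - x)/c)| := by
            have := abs_add_le (∫ x in (0:ℝ)..t, ψ 0 * Real.cos ((t - x)/c))
              (∫ x in (0:ℝ)..t, P x * Real.cos ((t - x)/c))
            linarith
        _ ≤ |ψ 0| * c + c * P t + c * N t := by linarith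
        _ = c * (|ψ 0| + (P t + N t)) := by ring
        _ ≤ c * (|ψ 0| + Var) := by nlinarith [hcpos.le]
    rw [hf j t, abs_mul, abs_of_nonneg (Real.sqrt_nonneg (2/T))]
    calc Real.sqrt (2/T) * |∫ s in (0:ℝ)..t, ψ s * Real.cos ((t - s)/Real.sqrt (lam j))|
        ≤ Real.sqrt (2/T) * (c * (|ψ 0| + Var)) :=
          mul_le_mul_of_nonneg_left hint (Real.sqrt_nonneg _)
      _ = Real.sqrt (2/T) * c * (|ψ 0| + Var) := by ring
  have hsqrt : ∀ j : ℕ, Real.sqrt (2/T) * Real.sqrt (lam j) = Real.sqrt (2 * lam j / T) := by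
    intro j
    rw [← Real.sqrt_mul (by positivity : (0:ℝ) ≤ 2/T)]
    congr 1; ring
  constructor
  · intro j hj t ht
    rw [← hsqrt j]
    exact key j hj t ht
  · refine ⟨Real.sqrt (2/T) * (2*T/π) * (|ψ 0| + Var), ?_⟩
    intro j hj t ht
    have hj1 : (1:ℝ) ≤ (j:ℝ) := by exact_mod_cast hj
    have hjpos : (0:ℝ) < (j:ℝ) := by linarith
    have hbpos : 0 < π * ((j:ℝ) - 1/2) / T :=
      div_pos (mul_pos Real.pi_pos (by linarith)) hT
    have hcval : Real.sqrt (lam j) = (π * ((j:ℝ) - 1/2) / T)⁻¹ := by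
      have h2 : lam j = ((π * ((j:ℝ) - 1/2) / T) ^ (2:ℕ))⁻¹ := by
        rw [hlam, ← Real.rpow_natCast _ 2, ← Real.rpow_neg hbpos.le]
        norm_num
      rw [h2, Real.sqrt_inv, Real.sqrt_sq hbpos.le]
    have hble : (π * ((j:ℝ) - 1/2) / T)⁻¹ ≤ (2*T/π)/(j:ℝ) := by
      rw [inv_eq_one_div, div_le_div_iff₀ hbpos hjpos]
      have heq : 2*T/π * (π*((j:ℝ)-1/2)/T) = 2*((j:ℝ)-1/2) := by
        field_simp
      rw [heq]
      linarith
    have hB : 0 ≤ |ψ 0| + Var := add_nonneg (abs_nonneg _) ENNReal.toReal_nonneg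
    calc |f j t| ≤ Real.sqrt (2/T) * Real.sqrt (lam j) * (|ψ 0| + Var) := key j hj t ht
      _ ≤ Real.sqrt (2/T) * ((2*T/π)/(j:ℝ)) * (|ψ 0| + Var) := by
          refine mul_le_mul_of_nonneg_right ?_ hB
          refine mul_le_mul_of_nonneg_left ?_ (Real.sqrt_nonneg _)
          rw [hcval]; exact hble
      _ = Real.sqrt (2/T) * (2*T/π) * (|ψ 0| + Var) / (j:ℝ) := by ring
end

section
/- Let ψ ∈ L¹([0,T]) be positive and nonincreasing on (0,T], with φ(t) = ∫₀^t ψ(s) ds being β-Hölder continuous, β ∈ (0,1]. Let λ_j = (π(j−1/2)/T)^{−2} and f_j(t) = √(2/T) ∫₀^t ψ(s) cos((t−s)/√λ_j) ds. Then ‖f_j‖_∞ ≤ 3√(2/T) φ(√λ_j) ≤ C λ_j^{β/2} ≤ C' j^{−β} for constants C, C' depending only on T, β and [φ]_β. -/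
open Real MeasureTheory
open Set Filter

lemma second_mvt_bound {a b M : ℝ} (hab : a ≤ b) {ψ g : ℝ → ℝ}
    (hψanti : AntitoneOn ψ (Set.Icc a b))
    (hψb : 0 ≤ ψ b)
    (hg : Continuous g)
    (hM0 : 0 ≤ M)
    (hM : ∀ x ∈ Set.Icc a b, |∫ s in a..x, g s| ≤ M) :
    |∫ s in a..b, ψ s * g s| ≤ M * ψ a := by
  -- clamped version of ψ
  set Ψ : ℝ → ℝ := fun x => ψ (max a (min x b)) with hΨdef
  have hclamp : ∀ x, max a (min x b) ∈ Set.Icc a b := fun x =>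
    ⟨le_max_left _ _, max_le hab (min_le_right _ _)⟩
  have hΨanti : Antitone Ψ := by
    intro x y hxy
    exact hψanti (hclamp x) (hclamp y) (max_le_max le_rfl (min_le_min hxy le_rfl))
  have hF : Monotone (fun x => -Ψ x) := fun x y h => neg_le_neg (hΨanti h)
  set S := hF.stieltjesFunction with hSdef
  have hSeq : ∀ x, S x = Function.rightLim (fun x => -Ψ x) x := fun x =>
    hF.stieltjesFunction_eq x
  have hSb : S b = -ψ b := by
    rw [hSeq b]
    apply rightLim_eq_of_tendsto
    have hev : (fun x => -Ψ x) =ᶠ[nhdsWithin b (Set.Ioi b)] fun _ => -ψ b := by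
      filter_upwards [self_mem_nhdsWithin] with x hx
      have : max a (min x b) = b := by
        rw [min_eq_right (le_of_lt hx), max_eq_right hab]
      simp only [hΨdef, this]
    exact Tendsto.congr' hev.symm tendsto_const_nhds
  have hSa : -ψ a ≤ S a := by
    have h1 : (fun x => -Ψ x) a ≤ Function.rightLim (fun x => -Ψ x) a :=
      hF.le_rightLim le_rfl
    have h2 : Ψ a = ψ a := by
      simp only [hΨdef, min_eq_left hab, max_self]
    rw [hSeq a]
    simpa [h2] using h1
  set μ := S.measure with hμdef
  have hSmeas : Measurable S := S.mono.measurable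
  -- a.e. identification of ψ with -S on Ioc a b
  have hcount : Set.Countable {x | ¬ContinuousAt (fun x => -Ψ x) x} :=
    hF.countable_not_continuousAt
  have hae : ∀ᵐ x ∂(volume : Measure ℝ), x ∈ Set.Ioc a b → ψ x * g x = -S x * g x := by
    have h0 : (volume : Measure ℝ) {x | ¬ContinuousAt (fun x => -Ψ x) x} = 0 :=
      hcount.measure_zero _
    filter_upwards [measure_eq_zero_iff_ae_notMem.mp h0] with x hx hxab
    have hcx : ContinuousWithinAt (fun x => -Ψ x) (Set.Ioi x) x :=
      (Classical.not_not.mp hx).continuousWithinAt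
    have hrl : Function.rightLim (fun x => -Ψ x) x = -Ψ x :=
      hF.continuousWithinAt_Ioi_iff_rightLim_eq.mp hcx
    have hcl : max a (min x b) = x := by
      rw [min_eq_left hxab.2, max_eq_right hxab.1.le]
    have : S x = -ψ x := by
      rw [hSeq x, hrl]; simp only [hΨdef, hcl]
    rw [this]; ring
  have habint : ∫ s in a..b, ψ s * g s = ∫ x in Set.Ioc a b, -S x * g x := by
    rw [intervalIntegral.integral_of_le hab]
    exact setIntegral_congr_ae measurableSet_Ioc hae
  -- bound for g on [a, b]
  obtain ⟨K, hK⟩ := isCompact_Icc.exists_bound_of_continuousOn (hg.continuousOn (s := Set.Icc a b))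
  have hK0 : 0 ≤ K := le_trans (norm_nonneg _) (hK a ⟨le_rfl, hab⟩)
  have hgint : IntegrableOn g (Set.Ioc a b) :=
    (hg.integrableOn_Icc).mono_set Set.Ioc_subset_Icc_self
  -- the finite measures
  set ν := μ.restrict (Set.Ioc a b) with hνdef
  haveI hνfin : IsFiniteMeasure ν := by
    constructor
    rw [hνdef, Measure.restrict_apply_univ, hμdef, S.measure_Ioc]
    exact ENNReal.ofReal_lt_top
  have hνuniv : (ν Set.univ).toReal = S b - S a := by
    rw [hνdef, Measure.restrict_apply_univ, hμdef, S.measure_Ioc,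
      ENNReal.toReal_ofReal (sub_nonneg.mpr (S.mono hab))]
  have hδ : ∀ x ∈ Set.Ioc a b, (ν (Set.Ioi x)).toReal = S b - S x := by
    intro x hx
    rw [hνdef, Measure.restrict_apply measurableSet_Ioi]
    have hI : Set.Ioi x ∩ Set.Ioc a b = Set.Ioc x b := by
      ext y
      simp only [Set.mem_inter_iff, Set.mem_Ioi, Set.mem_Ioc]
      exact ⟨fun ⟨h1, _, h3⟩ => ⟨h1, h3⟩, fun ⟨h1, h2⟩ => ⟨h1, lt_trans hx.1 h1, h2⟩⟩
    rw [hI, hμdef, S.measure_Ioc, ENNReal.toReal_ofReal (sub_nonneg.mpr (S.mono hx.2))]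
  set ρ := (volume : Measure ℝ).restrict (Set.Ioc a b) with hρdef
  haveI hρfin : IsFiniteMeasure ρ := by
    constructor
    rw [hρdef, Measure.restrict_apply_univ]
    exact measure_Ioc_lt_top
  -- splitting the integral
  have h1int : IntegrableOn (fun x => -S b * g x) (Set.Ioc a b) := hgint.const_mul _
  have h2meas : Measurable fun x => (S b - S x) * g x :=
    (measurable_const.sub hSmeas).mul hg.measurable
  have h2int : IntegrableOn (fun x => (S b - S x) * g x) (Set.Ioc a b) := by
    apply Integrable.mono' (integrable_const ((S b - S a) * K)) h2meas.aestronglyMeasurable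
    rw [ae_restrict_iff' measurableSet_Ioc]
    filter_upwards with x hx
    rw [Real.norm_eq_abs, abs_mul]
    have h1 : |S b - S x| ≤ S b - S a := by
      rw [abs_of_nonneg (sub_nonneg.mpr (S.mono hx.2))]
      exact sub_le_sub_left (S.mono hx.1.le) _
    exact mul_le_mul h1 (hK x ⟨hx.1.le, hx.2⟩) (abs_nonneg _) (sub_nonneg.mpr (S.mono hab))
  have hsplit : ∫ x in Set.Ioc a b, -S x * g x
      = -S b * (∫ x in Set.Ioc a b, g x) + ∫ x in Set.Ioc a b, (S b - S x) * g x := by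
    rw [← integral_const_mul, ← integral_add h1int h2int]
    exact integral_congr_ae (Filter.Eventually.of_forall fun x => by ring)
  -- Fubini for the second piece
  set P : ℝ → ℝ → ℝ := fun x u => g x * Set.indicator (Set.Ioi x) (fun _ => (1 : ℝ)) u
    with hPdef
  have hPinner : ∀ x ∈ Set.Ioc a b, (S b - S x) * g x = ∫ u, P x u ∂ν := by
    intro x hx
    have : ∫ u, P x u ∂ν = g x * ∫ u, Set.indicator (Set.Ioi x) (fun _ => (1 : ℝ)) u ∂ν :=
      integral_const_mul _ _
    rw [this, integral_indicator_const (1 : ℝ) measurableSet_Ioi, smul_eq_mul, mul_one,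
      measureReal_def, hδ x hx, mul_comm]
  have hmeasP : Measurable (Function.uncurry P) := by
    apply Measurable.mul (hg.measurable.comp measurable_fst)
    have : (fun p : ℝ × ℝ => Set.indicator (Set.Ioi p.1) (fun _ => (1 : ℝ)) p.2)
        = fun p : ℝ × ℝ => if p.1 < p.2 then 1 else 0 := by
      funext p
      simp [Set.indicator_apply, Set.mem_Ioi]
    show Measurable fun p : ℝ × ℝ => Set.indicator (Set.Ioi p.1) (fun _ => (1 : ℝ)) p.2
    rw [this]
    exact Measurable.ite (measurableSet_lt measurable_fst measurable_snd) measurable_const measurable_const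
  have haefst : ∀ᵐ p ∂(ρ.prod ν), p.1 ∈ Set.Ioc a b := by
    have h0 : (ρ.prod ν) ((Set.Ioc a b)ᶜ ×ˢ Set.univ) = 0 := by
      rw [Measure.prod_prod, hρdef, Measure.restrict_apply measurableSet_Ioc.compl]
      simp
    filter_upwards [measure_eq_zero_iff_ae_notMem.mp h0] with p hp
    by_contra h
    exact hp ⟨h, Set.mem_univ _⟩
  have hintP : Integrable (Function.uncurry P) (ρ.prod ν) := by
    apply Integrable.mono' (integrable_const K) hmeasP.aestronglyMeasurable
    filter_upwards [haefst] with p hp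
    rw [Function.uncurry, Real.norm_eq_abs, abs_mul]
    have h1 : |Set.indicator (Set.Ioi p.1) (fun _ => (1 : ℝ)) p.2| ≤ 1 := by
      rw [Set.indicator_apply]
      split <;> simp
    calc |g p.1| * |Set.indicator (Set.Ioi p.1) (fun _ => (1 : ℝ)) p.2|
        ≤ K * 1 := mul_le_mul (hK p.1 ⟨hp.1.le, hp.2⟩) h1 (abs_nonneg _) hK0
      _ = K := mul_one K
  have hswap : ∫ x, (∫ u, P x u ∂ν) ∂ρ = ∫ u, (∫ x, P x u ∂ρ) ∂ν :=
    MeasureTheory.integral_integral_swap hintP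
  -- computing the inner integral after the swap
  have hinner2 : ∀ u ∈ Set.Ioc a b, ∫ x, P x u ∂ρ = ∫ s in a..u, g s := by
    intro u hu
    have hPu : (fun x => P x u) = Set.indicator (Set.Iio u) g := by
      funext x
      simp only [hPdef, Set.indicator_apply, Set.mem_Ioi, Set.mem_Iio]
      split <;> simp
    rw [hPu, integral_indicator measurableSet_Iio, hρdef,
      Measure.restrict_restrict measurableSet_Iio]
    have hI : Set.Iio u ∩ Set.Ioc a b = Set.Ioo a u := by
      ext y
      simp only [Set.mem_inter_iff, Set.mem_Iio, Set.mem_Ioc, Set.mem_Ioo]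
      exact ⟨fun ⟨h1, h2, _⟩ => ⟨h2, h1⟩, fun ⟨h1, h2⟩ => ⟨h2, h1, le_trans h2.le hu.2⟩⟩
    rw [hI, ← integral_Ioc_eq_integral_Ioo, intervalIntegral.integral_of_le hu.1.le]
  -- bounding the swapped integral
  have hbound2 : |∫ u, (∫ x, P x u ∂ρ) ∂ν| ≤ M * (S b - S a) := by
    rw [← Real.norm_eq_abs, ← hνuniv]
    apply norm_integral_le_of_norm_le_const
    filter_upwards [ae_restrict_mem measurableSet_Ioc] with u hu
    rw [Real.norm_eq_abs, hinner2 u hu]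
    exact hM u ⟨hu.1.le, hu.2⟩
  -- assembling everything
  have hJ : |∫ x in Set.Ioc a b, (S b - S x) * g x| ≤ M * (S b - S a) := by
    have : ∫ x in Set.Ioc a b, (S b - S x) * g x = ∫ x, (∫ u, P x u ∂ν) ∂ρ := by
      rw [hρdef]
      exact setIntegral_congr_ae measurableSet_Ioc
        (Filter.Eventually.of_forall fun x hx => hPinner x hx)
    rw [this, hswap]
    exact hbound2
  have hI0 : |∫ x in Set.Ioc a b, g x| ≤ M := by
    rw [← intervalIntegral.integral_of_le hab]
    exact hM b ⟨hab, le_rfl⟩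
  have hSab : 0 ≤ S b - S a := sub_nonneg.mpr (S.mono hab)
  calc |∫ s in a..b, ψ s * g s|
      = |(-S b) * (∫ x in Set.Ioc a b, g x) + ∫ x in Set.Ioc a b, (S b - S x) * g x| := by
        rw [habint, hsplit]
    _ ≤ |(-S b) * (∫ x in Set.Ioc a b, g x)| + |∫ x in Set.Ioc a b, (S b - S x) * g x| :=
        abs_add_le _ _
    _ ≤ |(-S b)| * M + M * (S b - S a) := by
        refine add_le_add ?_ hJ
        rw [abs_mul]
        exact mul_le_mul_of_nonneg_left hI0 (abs_nonneg _)
    _ ≤ M * ψ a := by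
        have h1 : |(-S b : ℝ)| = ψ b := by rw [hSb, neg_neg, abs_of_nonneg hψb]
        rw [h1, hSb]
        nlinarith [mul_le_mul_of_nonneg_left hSa hM0]

/-- if `ψ ∈ L¹` is positive and nonincreasing on `(0,T]` and
`φ(t) = ∫₀^t ψ` is `β`-Hölder, then with `λ_j = (π(j-1/2)/T)^{-2}` and
`f_j(t) = √(2/T) ∫₀^t ψ(s) cos((t-s)/√λ_j) ds`:
`‖f_j‖_∞ ≤ 3√(2/T) φ(√λ_j) ≤ C λ_j^{β/2} ≤ C' j^{-β}`. -/
theorem stmt14 (T β Hβ : ℝ) (hT : 0 < T) (hβ : 0 < β) (hβ1 : β ≤ 1) (hHβ : 0 ≤ Hβ)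
    (ψ : ℝ → ℝ) (hψint : IntegrableOn ψ (Set.Icc 0 T))
    (hψpos : ∀ t ∈ Set.Ioc (0:ℝ) T, 0 < ψ t)
    (hψmono : ∀ s ∈ Set.Ioc (0:ℝ) T, ∀ t ∈ Set.Ioc (0:ℝ) T, s ≤ t → ψ t ≤ ψ s)
    (φ : ℝ → ℝ) (hφ : ∀ t, φ t = ∫ s in (0:ℝ)..t, ψ s)
    (hHol : ∀ s ∈ Set.Icc (0:ℝ) T, ∀ t ∈ Set.Icc (0:ℝ) T,
      |φ s - φ t| ≤ Hβ * |s - t| ^ β)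
    (lam : ℕ → ℝ) (hlam : ∀ j : ℕ, lam j = (π * ((j:ℝ) - 1/2) / T) ^ (-(2:ℝ)))
    (f : ℕ → ℝ → ℝ)
    (hf : ∀ (j : ℕ) (t : ℝ), f j t =
      Real.sqrt (2/T) * ∫ s in (0:ℝ)..t, ψ s * Real.cos ((t - s) / Real.sqrt (lam j))) :
    (∀ j : ℕ, 1 ≤ j → ∀ t ∈ Set.Icc (0:ℝ) T,
      |f j t| ≤ 3 * Real.sqrt (2/T) * φ (Real.sqrt (lam j))) ∧
    ∃ C C' : ℝ,
      (∀ j : ℕ, 1 ≤ j →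
        3 * Real.sqrt (2/T) * φ (Real.sqrt (lam j)) ≤ C * lam j ^ (β/2)) ∧
      (∀ j : ℕ, 1 ≤ j → C * lam j ^ (β/2) ≤ C' * (j:ℝ) ^ (-β)) := by
  -- basic facts about `lam`
  have hfacts : ∀ j : ℕ, 1 ≤ j → 0 < Real.sqrt (lam j) ∧ Real.sqrt (lam j) ≤ T ∧
      lam j ^ (β/2) = Real.sqrt (lam j) ^ β ∧
      Real.sqrt (lam j) ≤ 2 * T / π * ((j:ℝ))⁻¹ := by
    intro j hj
    have hjR : (1:ℝ) ≤ (j:ℝ) := by exact_mod_cast hj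
    have hπ := Real.pi_gt_three
    have hx : 0 < π * ((j:ℝ) - 1/2) := by nlinarith
    have hx1 : 1 ≤ π * ((j:ℝ) - 1/2) := by nlinarith
    set r : ℝ := π * ((j:ℝ) - 1/2) / T with hrdef
    have hr : 0 < r := div_pos hx hT
    have hlamval : lam j = (r⁻¹) ^ 2 := by
      rw [hlam j, ← hrdef, Real.rpow_neg hr.le,
        show ((2:ℝ)) = ((2:ℕ):ℝ) by norm_num, Real.rpow_natCast, ← inv_pow]
    have ha : Real.sqrt (lam j) = r⁻¹ := by
      rw [hlamval, Real.sqrt_sq (inv_nonneg.mpr hr.le)]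
    have hrT : 1/T ≤ r := by
      rw [hrdef, div_le_div_iff₀ hT hT]
      nlinarith
    refine ⟨by rw [ha]; exact inv_pos.mpr hr, ?_, ?_, ?_⟩
    · rw [ha]
      have h1 : r * r⁻¹ = 1 := mul_inv_cancel₀ hr.ne'
      apply le_of_mul_le_mul_left _ hr
      rw [h1]
      calc (1:ℝ) = (1/T) * T := by field_simp
        _ ≤ r * T := by
            apply mul_le_mul_of_nonneg_right hrT hT.le
    · rw [ha, hlam j, ← hrdef, ← Real.rpow_mul hr.le,
        show (-(2:ℝ)) * (β/2) = -β by ring, Real.rpow_neg hr.le, ← Real.inv_rpow hr.le]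
    · rw [ha]
      have hj0 : (0:ℝ) < (j:ℝ) := lt_of_lt_of_le one_pos hjR
      have hπj : 0 < π * (j:ℝ) := by positivity
      rw [hrdef, inv_div, show 2 * T / π * ((j:ℝ))⁻¹ = 2 * T / (π * (j:ℝ)) by ring,
        div_le_div_iff₀ hx hπj]
      nlinarith [mul_nonneg (mul_pos hT Real.pi_pos).le (sub_nonneg.mpr hjR)]
  -- interval integrability of ψ on subintervals of [0, T]
  have hψii : ∀ u v : ℝ, 0 ≤ u → u ≤ v → v ≤ T → IntervalIntegrable ψ volume u v := by
    intro u v hu huv hvT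
    rw [intervalIntegrable_iff_integrableOn_Ioc_of_le huv]
    exact hψint.mono_set fun s hs => ⟨le_trans hu hs.1.le, le_trans hs.2 hvT⟩
  -- interval integrability of ψ times a bounded continuous function
  have hmulii : ∀ (g : ℝ → ℝ), Continuous g → (∀ x, |g x| ≤ 1) →
      ∀ u v : ℝ, 0 ≤ u → u ≤ v → v ≤ T →
      IntervalIntegrable (fun s => ψ s * g s) volume u v := by
    intro g hg hgb u v hu huv hvT
    rw [intervalIntegrable_iff_integrableOn_Ioc_of_le huv]
    have h1 : IntegrableOn ψ (Set.Ioc u v) :=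
      hψint.mono_set fun s hs => ⟨le_trans hu hs.1.le, le_trans hs.2 hvT⟩
    have h2 : IntegrableOn (fun s => g s * ψ s) (Set.Ioc u v) :=
      h1.bdd_mul hg.aestronglyMeasurable
        (c := 1) (Filter.Eventually.of_forall fun x => by rw [Real.norm_eq_abs]; exact hgb x)
    exact h2.congr (Filter.Eventually.of_forall fun x => mul_comm _ _)
  -- φ basics
  have hφ0 : φ 0 = 0 := by rw [hφ 0, intervalIntegral.integral_same]
  have hφdiffnn : ∀ u v : ℝ, 0 ≤ u → u ≤ v → v ≤ T → 0 ≤ ∫ s in u..v, ψ s := by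
    intro u v hu huv hvT
    rw [intervalIntegral.integral_of_le huv]
    apply setIntegral_nonneg measurableSet_Ioc
    intro s hs
    exact (hψpos s ⟨lt_of_le_of_lt hu hs.1, le_trans hs.2 hvT⟩).le
  have hφmono : ∀ u v : ℝ, 0 ≤ u → u ≤ v → v ≤ T → φ u ≤ φ v := by
    intro u v hu huv hvT
    have hsplit := intervalIntegral.integral_add_adjacent_intervals
      (hψii 0 u le_rfl hu (le_trans huv hvT)) (hψii u v hu huv hvT)
    have := hφdiffnn u v hu huv hvT
    rw [hφ u, hφ v, ← hsplit]
    linarith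
  have hφnn : ∀ u : ℝ, 0 ≤ u → u ≤ T → 0 ≤ φ u := by
    intro u hu huT
    rw [← hφ0]
    exact hφmono 0 u le_rfl hu huT
  -- bound A
  have hboundA : ∀ (g : ℝ → ℝ), Continuous g → (∀ x, |g x| ≤ 1) → ∀ x : ℝ, 0 ≤ x → x ≤ T →
      |∫ s in (0:ℝ)..x, ψ s * g s| ≤ φ x := by
    intro g hg hgb x hx hxT
    rw [hφ x]
    have h1 : |∫ s in (0:ℝ)..x, ψ s * g s| ≤ |∫ s in (0:ℝ)..x, ψ s| := by
      rw [← Real.norm_eq_abs (∫ s in (0:ℝ)..x, ψ s * g s)]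
      apply intervalIntegral.norm_integral_le_abs_of_norm_le ?_ (hψii 0 x le_rfl hx hxT)
      rw [Set.uIoc_of_le hx]
      filter_upwards [ae_restrict_mem measurableSet_Ioc] with s hs
      rw [Real.norm_eq_abs, abs_mul]
      have hψs := hψpos s ⟨hs.1, le_trans hs.2 hxT⟩
      calc |ψ s| * |g s| ≤ |ψ s| * 1 := mul_le_mul_of_nonneg_left (hgb s) (abs_nonneg _)
        _ = ψ s := by rw [mul_one, abs_of_pos hψs]
    rwa [abs_of_nonneg (hφdiffnn 0 x le_rfl hx hxT)] at h1
  -- bound C : a ψ(a) ≤ φ(a)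
  have hboundC : ∀ a : ℝ, 0 < a → a ≤ T → a * ψ a ≤ φ a := by
    intro a ha haT
    rw [hφ a, intervalIntegral.integral_of_le ha.le]
    have h1 : ∫ _ in Set.Ioc (0:ℝ) a, ψ a = a * ψ a := by
      rw [setIntegral_const, Real.volume_real_Ioc_of_le ha.le, smul_eq_mul]
      ring
    rw [← h1]
    apply setIntegral_mono_on
      (integrableOn_const measure_Ioc_lt_top.ne)
      (hψint.mono_set fun s hs => ⟨hs.1.le, le_trans hs.2 haT⟩)
      measurableSet_Ioc
    intro s hs
    exact hψmono s ⟨hs.1, le_trans hs.2 haT⟩ a ⟨ha, haT⟩ hs.2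
  -- FTC bound for the cosine integral
  have hcosint : ∀ (c t x y : ℝ), 0 < c →
      |∫ s in y..x, Real.cos ((t - s)/c)| ≤ 2 * c := by
    intro c t x y hc
    have hd : ∀ s : ℝ,
        HasDerivAt (fun s => -c * Real.sin ((t - s)/c)) (Real.cos ((t - s)/c)) s := by
      intro s
      have h1 : HasDerivAt (fun s : ℝ => (t - s)/c) (-1/c) s :=
        ((hasDerivAt_id s).const_sub t).div_const c
      have h2 := (h1.sin).const_mul (-c)
      rw [show -c * (Real.cos ((t - s)/c) * (-1/c)) = Real.cos ((t - s)/c) * (c / c) by ring,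
        div_self hc.ne', mul_one] at h2
      exact h2
    rw [intervalIntegral.integral_eq_sub_of_hasDerivAt (fun s _ => hd s)
      ((Real.continuous_cos.comp
        ((continuous_const.sub continuous_id).div_const c)).intervalIntegrable _ _)]
    have hsin : ∀ z : ℝ, |(-c) * Real.sin z| ≤ c := by
      intro z
      rw [abs_mul, abs_neg, abs_of_pos hc]
      calc c * |Real.sin z| ≤ c * 1 :=
            mul_le_mul_of_nonneg_left
              (abs_le.mpr ⟨Real.neg_one_le_sin z, Real.sin_le_one z⟩) hc.le
        _ = c := mul_one c
    calc |(-c) * Real.sin ((t - x)/c) - (-c) * Real.sin ((t - y)/c)|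
        ≤ |(-c) * Real.sin ((t - x)/c)| + |(-c) * Real.sin ((t - y)/c)| := by
          rw [sub_eq_add_neg]
          exact (abs_add_le _ _).trans (by rw [abs_neg])
      _ ≤ c + c := add_le_add (hsin _) (hsin _)
      _ = 2 * c := by ring
  -- Part 1
  have part1 : ∀ j : ℕ, 1 ≤ j → ∀ t ∈ Set.Icc (0:ℝ) T,
      |f j t| ≤ 3 * Real.sqrt (2/T) * φ (Real.sqrt (lam j)) := by
    intro j hj t ht
    obtain ⟨ha0, haT, -, -⟩ := hfacts j hj
    set a := Real.sqrt (lam j) with hadef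
    set g : ℝ → ℝ := fun s => Real.cos ((t - s)/a) with hgdef
    have hgc : Continuous g :=
      Real.continuous_cos.comp ((continuous_const.sub continuous_id).div_const a)
    have hgb : ∀ x, |g x| ≤ 1 := fun x =>
      abs_le.mpr ⟨Real.neg_one_le_cos _, Real.cos_le_one _⟩
    have hsqnn : (0:ℝ) ≤ Real.sqrt (2/T) := Real.sqrt_nonneg _
    have hφa : 0 ≤ φ a := hφnn a ha0.le haT
    rw [hf j t, abs_mul, abs_of_nonneg hsqnn,
      show (3:ℝ) * Real.sqrt (2/T) * φ a = Real.sqrt (2/T) * (3 * φ a) by ring]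
    apply mul_le_mul_of_nonneg_left ?_ hsqnn
    rcases le_or_gt t a with hta | hat
    · have h1 := hboundA g hgc hgb t ht.1 ht.2
      have h2 : φ t ≤ φ a := hφmono t a ht.1 hta haT
      linarith
    · have hsplit : ∫ s in (0:ℝ)..t, ψ s * g s
          = (∫ s in (0:ℝ)..a, ψ s * g s) + ∫ s in a..t, ψ s * g s :=
        (intervalIntegral.integral_add_adjacent_intervals
          (hmulii g hgc hgb 0 a le_rfl ha0.le haT)
          (hmulii g hgc hgb a t ha0.le hat.le ht.2)).symm
      have h1 := hboundA g hgc hgb a ha0.le haT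
      have h2 : |∫ s in a..t, ψ s * g s| ≤ (2 * a) * ψ a := by
        apply second_mvt_bound hat.le ?_ ?_ hgc (by positivity) ?_
        · intro u hu v hv huv
          exact hψmono u ⟨lt_of_lt_of_le ha0 hu.1, le_trans hu.2 ht.2⟩
            v ⟨lt_of_lt_of_le ha0 hv.1, le_trans hv.2 ht.2⟩ huv
        · exact (hψpos t ⟨lt_trans ha0 hat, ht.2⟩).le
        · intro x _
          exact hcosint a t x a ha0
      have h3 : a * ψ a ≤ φ a := hboundC a ha0 haT
      have hψa : 0 ≤ ψ a := (hψpos a ⟨ha0, haT⟩).le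
      calc |∫ s in (0:ℝ)..t, ψ s * g s|
          ≤ |∫ s in (0:ℝ)..a, ψ s * g s| + |∫ s in a..t, ψ s * g s| := by
            rw [hsplit]; exact abs_add_le _ _
        _ ≤ φ a + 2 * a * ψ a := by linarith
        _ ≤ 3 * φ a := by linarith
  refine ⟨part1, 3 * Real.sqrt (2/T) * Hβ, 3 * Real.sqrt (2/T) * Hβ * (2 * T / π) ^ β,
    ?_, ?_⟩
  · intro j hj
    obtain ⟨ha0, haT, hpow, -⟩ := hfacts j hj
    have h1 := hHol (Real.sqrt (lam j)) ⟨ha0.le, haT⟩ 0 ⟨le_rfl, hT.le⟩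
    rw [hφ0, sub_zero, sub_zero, abs_of_nonneg ha0.le] at h1
    have h2 : φ (Real.sqrt (lam j)) ≤ Hβ * Real.sqrt (lam j) ^ β :=
      le_trans (le_abs_self _) h1
    rw [hpow]
    calc 3 * Real.sqrt (2/T) * φ (Real.sqrt (lam j))
        ≤ 3 * Real.sqrt (2/T) * (Hβ * Real.sqrt (lam j) ^ β) :=
          mul_le_mul_of_nonneg_left h2 (by positivity)
      _ = 3 * Real.sqrt (2/T) * Hβ * Real.sqrt (lam j) ^ β := by ring
  · intro j hj
    obtain ⟨ha0, haT, hpow, hbnd⟩ := hfacts j hj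
    have hj0 : (0:ℝ) < (j:ℝ) := by
      have : (1:ℝ) ≤ (j:ℝ) := by exact_mod_cast hj
      linarith
    rw [hpow]
    have h1 : Real.sqrt (lam j) ^ β ≤ (2 * T / π * ((j:ℝ))⁻¹) ^ β :=
      Real.rpow_le_rpow ha0.le hbnd hβ.le
    have h2 : ((2 * T / π * ((j:ℝ))⁻¹ : ℝ)) ^ β = (2 * T / π) ^ β * (j:ℝ) ^ (-β) := by
      rw [Real.mul_rpow (by positivity) (by positivity), Real.inv_rpow hj0.le,
        ← Real.rpow_neg hj0.le]
    calc 3 * Real.sqrt (2/T) * Hβ * Real.sqrt (lam j) ^ β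
        ≤ 3 * Real.sqrt (2/T) * Hβ * ((2 * T / π) ^ β * (j:ℝ) ^ (-β)) :=
          mul_le_mul_of_nonneg_left (h2 ▸ h1) (by positivity)
      _ = 3 * Real.sqrt (2/T) * Hβ * (2 * T / π) ^ β * (j:ℝ) ^ (-β) := by ring
end

section
/- Let ψ ∈ L¹([0,T]) with ψ(0) = 0, ψ being β-Hölder continuous (β ∈ (0,1]) and differentiable on (0,T] with ψ' positive and nonincreasing on (0,T]. With λ_j = (π(j−1/2)/T)^{−2} and f_j(t) = √(2/T) ∫₀^t ψ(s) cos((t−s)/√λ_j) ds, one has ‖f_j‖_∞ ≤ 3√(2λ_j/T) ψ(√λ_j) ≤ C λ_j^{(1+β)/2} ≤ C' j^{−(1+β)} for constants depending only on T, β and the Hölder constant of ψ. -/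
open Real MeasureTheory Filter


lemma altSum (N : ℕ) : ∀ (b : ℕ → ℝ), (∀ k, b (k+1) ≤ b k) → (∀ k, 0 ≤ b k) →
    0 ≤ (∑ k ∈ Finset.range N, (-1:ℝ)^k * b k) ∧
      (∑ k ∈ Finset.range N, (-1:ℝ)^k * b k) ≤ b 0 := by
  induction N with
  | zero => intro b hm hn; simp [hn 0]
  | succ N ih =>
    intro b hm hn
    obtain ⟨h1, h2⟩ := ih (fun k => b (k+1)) (fun k => hm (k+1)) (fun k => hn (k+1))
    have e : (∑ k ∈ Finset.range (N+1), (-1:ℝ)^k * b k)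
        = -(∑ k ∈ Finset.range N, (-1:ℝ)^k * b (k+1)) + b 0 := by
      rw [Finset.sum_range_succ']
      have : ∀ i, (-1:ℝ)^(i+1) * b (i+1) = -((-1:ℝ)^i * b (i+1)) := by intro i; ring
      simp_rw [this, Finset.sum_neg_distrib]
      simp
    rw [e]
    constructor
    · have := hm 0; linarith
    · linarith [hn 0]

lemma sinShift : ∀ (k : ℕ) (x : ℝ), Real.sin (x - k * π) = (-1:ℝ)^k * Real.sin x := by
  intro k
  induction k with
  | zero => simp
  | succ k ih =>
    intro x
    have : x - (k+1 : ℕ) * π = (x - k * π) - π := by push_cast; ring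
    rw [this, Real.sin_sub_pi, ih, pow_succ]
    ring

lemma intAbsSin (x : ℝ) : (∫ u in x..(x+π), |Real.sin u|) = 2 := by
  have hper : Function.Periodic (fun u => |Real.sin u|) π := by
    intro u; simp [Real.sin_add_pi]
  rw [hper.intervalIntegral_add_eq x 0]
  have : (∫ u in (0:ℝ)..(0+π), |Real.sin u|) = ∫ u in (0:ℝ)..(0+π), Real.sin u := by
    apply intervalIntegral.integral_congr
    intro u hu
    rw [Set.uIcc_of_le (by positivity)] at hu
    simp only [zero_add] at hu
    exact abs_of_nonneg (Real.sin_nonneg_of_nonneg_of_le_pi hu.1 hu.2)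
  rw [this]
  rw [zero_add, integral_sin]
  norm_num

lemma intAbsSinArg (t a c : ℝ) (hc : 0 < c) :
    (∫ u in a..(a + π * c), |Real.sin ((t - u)/c)|) = 2 * c := by
  have h1 : ∀ u : ℝ, |Real.sin ((t - u)/c)| = (fun v => |Real.sin (v / c)|) (u - t) := by
    intro u
    simp only
    rw [show (u - t)/c = -((t-u)/c) by ring, Real.sin_neg, abs_neg]
  simp_rw [h1]
  rw [intervalIntegral.integral_comp_sub_right (fun v => |Real.sin (v/c)|) t]
  rw [intervalIntegral.integral_comp_div (f := fun v => |Real.sin v|) (ne_of_gt hc)]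
  rw [show (a + π * c - t)/c = (a - t)/c + π by field_simp; ring]
  rw [intAbsSin]
  simp [smul_eq_mul]
  ring

set_option maxHeartbeats 1000000 in
lemma oscBound {g : ℝ → ℝ} {a b t c : ℝ} (hc : 0 < c) (hab : a ≤ b)
    (hg : AntitoneOn g (Set.Icc a b)) (hg0 : 0 ≤ g b) :
    |∫ s in a..b, g s * Real.sin ((t - s) / c)| ≤ 2 * c * g a := by
  have hπc : 0 < π * c := by positivity
  have hga : 0 ≤ g a := le_trans hg0 (hg ⟨le_rfl, hab⟩ ⟨hab, le_rfl⟩ hab)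
  set P := π * c with hP
  -- extended function
  set G : ℝ → ℝ := fun s => if s < a then g a else if s ≤ b then g s else 0 with hG
  have hGval : ∀ s ∈ Set.Icc a b, G s = g s := by
    intro s hs
    simp only [hG]
    rw [if_neg (not_lt.mpr hs.1), if_pos hs.2]
  have hGanti : Antitone G := by
    intro x y hxy
    simp only [hG]
    by_cases hy1 : y < a
    · rw [if_pos hy1, if_pos (lt_of_le_of_lt hxy hy1)]
    · rw [if_neg hy1]
      by_cases hy2 : y ≤ b
      · rw [if_pos hy2]
        by_cases hx1 : x < a
        · rw [if_pos hx1]; exact hg ⟨le_rfl, hab⟩ ⟨not_lt.mp hy1, hy2⟩ (not_lt.mp hy1)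
        · rw [if_neg hx1, if_pos (hxy.trans hy2)]
          exact hg ⟨not_lt.mp hx1, hxy.trans hy2⟩ ⟨not_lt.mp hy1, hy2⟩ hxy
      · rw [if_neg hy2]
        by_cases hx1 : x < a
        · rw [if_pos hx1]; exact hga
        · by_cases hx2 : x ≤ b
          · rw [if_neg hx1, if_pos hx2]
            exact le_trans hg0 (hg ⟨not_lt.mp hx1, hx2⟩ ⟨hab, le_rfl⟩ hx2)
          · rw [if_neg hx1, if_neg hx2]
  have hGnn : ∀ s, 0 ≤ G s := by
    intro s
    simp only [hG]
    split_ifs with h1 h2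
    · exact hga
    · exact le_trans hg0 (hg ⟨not_lt.mp h1, h2⟩ ⟨hab, le_rfl⟩ h2)
    · exact le_rfl
  have hGlea : ∀ s, G s ≤ g a := by
    intro s
    rcases lt_or_ge s a with h | h
    · simp only [hG]; rw [if_pos h]
    · calc G s ≤ G a := hGanti h
        _ = g a := hGval a ⟨le_rfl, hab⟩
  -- integrability
  have hGint : ∀ u v : ℝ, IntervalIntegrable G volume u v := by
    intro u v
    exact (hGanti.antitoneOn _).intervalIntegrable
  have hsin_cont : Continuous (fun s : ℝ => Real.sin ((t - s)/c)) := by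
    fun_prop
  have hFint : ∀ u v : ℝ,
      IntervalIntegrable (fun s => G s * Real.sin ((t - s)/c)) volume u v := by
    intro u v
    exact (hGint u v).mul_continuousOn hsin_cont.continuousOn
  -- choose N
  obtain ⟨N, hN⟩ := exists_nat_gt ((b - a)/P)
  have hNb : b ≤ a + (N+1) * P := by
    have h1 : b - a < N * P := by
      have := (div_lt_iff₀ hπc).mp hN
      linarith
    nlinarith [hπc]
  set X := a + (N+1) * P with hX
  have hbX : b ≤ X := hNb
  -- step 1 : replace g by G
  have e1 : (∫ s in a..b, g s * Real.sin ((t - s)/c))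
      = ∫ s in a..b, G s * Real.sin ((t - s)/c) := by
    apply intervalIntegral.integral_congr
    intro s hs
    rw [Set.uIcc_of_le hab] at hs
    show g s * Real.sin ((t - s)/c) = G s * Real.sin ((t - s)/c)
    rw [hGval s hs]
  -- step 2 : extend to X
  have hzero : (∫ s in b..X, G s * Real.sin ((t - s)/c)) = 0 := by
    have : (∫ s in b..X, G s * Real.sin ((t - s)/c)) = ∫ s in b..X, (0:ℝ) := by
      apply intervalIntegral.integral_congr_ae
      filter_upwards with x hx
      rw [Set.uIoc_of_le hbX] at hx
      have hxa : ¬ x < a := not_lt.mpr (le_trans hab hx.1.le)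
      have hxb : ¬ x ≤ b := not_le.mpr hx.1
      simp only [hG]
      rw [if_neg hxa, if_neg hxb, zero_mul]
    rw [this, intervalIntegral.integral_zero]
  have e2 : (∫ s in a..b, G s * Real.sin ((t - s)/c))
      = ∫ s in a..X, G s * Real.sin ((t - s)/c) := by
    rw [← intervalIntegral.integral_add_adjacent_intervals (hFint a b) (hFint b X), hzero,
      add_zero]
  -- step 3 : decompose into arcs
  have e3 : (∫ s in a..X, G s * Real.sin ((t - s)/c))
      = ∑ k ∈ Finset.range (N+1),
          ∫ s in (a + k*P)..(a + (k+1:ℕ)*P), G s * Real.sin ((t - s)/c) := by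
    rw [intervalIntegral.sum_integral_adjacent_intervals (a := fun k : ℕ => a + k * P)
      (fun k _ => hFint _ _)]
    norm_num
    rfl
  -- step 4 : each arc
  have e4 : ∀ k : ℕ,
      (∫ s in (a + k*P)..(a + (k+1:ℕ)*P), G s * Real.sin ((t - s)/c))
      = ∫ u in a..(a+P), ((-1:ℝ)^k * G (u + k*P)) * Real.sin ((t - u)/c) := by
    intro k
    have := intervalIntegral.integral_comp_add_right
      (a := a) (b := a + P) (fun s => G s * Real.sin ((t - s)/c)) (k*P)
    rw [show a + P + k * P = a + (k+1:ℕ)*P by push_cast; ring] at this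
    rw [← this]
    apply intervalIntegral.integral_congr
    intro u _
    have harg : (t - (u + k*P))/c = (t - u)/c - k * π := by
      rw [hP]; field_simp; ring
    show G (u + k*P) * Real.sin ((t - (u + k*P))/c)
        = (-1:ℝ)^k * G (u + k*P) * Real.sin ((t - u)/c)
    rw [harg, sinShift k ((t-u)/c)]
    ring
  simp_rw [e4] at e3
  -- step 5 : interchange sum and integral
  have hFkint : ∀ k : ℕ, IntervalIntegrable
      (fun u => ((-1:ℝ)^k * G (u + k*P)) * Real.sin ((t - u)/c)) volume a (a+P) := by
    intro k
    have h1 : Antitone (fun u => G (u + k*P)) := fun x y hxy => hGanti (by linarith)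
    exact (((h1.antitoneOn _).intervalIntegrable).const_mul
      ((-1:ℝ)^k)).mul_continuousOn hsin_cont.continuousOn
  have e5 : (∑ k ∈ Finset.range (N+1),
      ∫ u in a..(a+P), ((-1:ℝ)^k * G (u + k*P)) * Real.sin ((t - u)/c))
      = ∫ u in a..(a+P),
          (∑ k ∈ Finset.range (N+1), (-1:ℝ)^k * G (u + k*P)) * Real.sin ((t - u)/c) := by
    rw [← intervalIntegral.integral_finset_sum (fun k _ => hFkint k)]
    apply intervalIntegral.integral_congr
    intro u _
    show (∑ k ∈ Finset.range (N+1), (-1:ℝ)^k * G (u + k*P) * Real.sin ((t - u)/c))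
        = (∑ k ∈ Finset.range (N+1), (-1:ℝ)^k * G (u + k*P)) * Real.sin ((t - u)/c)
    rw [Finset.sum_mul]
  -- step 6 : bound
  set S : ℝ → ℝ := fun u => ∑ k ∈ Finset.range (N+1), (-1:ℝ)^k * G (u + k*P) with hS
  have hSbound : ∀ u : ℝ, |S u| ≤ g a := by
    intro u
    have h := altSum (N+1) (fun k => G (u + k*P))
      (fun k => hGanti (by push_cast; nlinarith [hπc])) (fun k => hGnn _)
    rw [abs_le]
    constructor
    · linarith [h.1]
    · calc S u ≤ G (u + (0:ℕ)*P) := h.2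
        _ ≤ g a := by push_cast; rw [zero_mul, add_zero]; exact hGlea u
  have hSsin_int : IntervalIntegrable (fun u => S u * Real.sin ((t - u)/c))
      volume a (a+P) := by
    have h := IntervalIntegrable.sum (μ := volume) (a := a) (b := a+P)
      (Finset.range (N+1))
      (f := fun k => fun u => ((-1:ℝ)^k * G (u + k*P)) * Real.sin ((t - u)/c))
      (fun k _ => hFkint k)
    have e : (∑ k ∈ Finset.range (N+1),
          fun u => ((-1:ℝ)^k * G (u + k*P)) * Real.sin ((t - u)/c))
        = fun u => S u * Real.sin ((t - u)/c) := by
      funext u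
      rw [Finset.sum_apply]
      simp only [hS]
      rw [← Finset.sum_mul]
    rwa [e] at h
  have haP : a ≤ a + P := by linarith
  have e6 : |∫ u in a..(a+P), S u * Real.sin ((t - u)/c)| ≤ 2 * c * g a := by
    calc |∫ u in a..(a+P), S u * Real.sin ((t - u)/c)|
        ≤ ∫ u in a..(a+P), |S u * Real.sin ((t - u)/c)| :=
          intervalIntegral.abs_integral_le_integral_abs haP
      _ ≤ ∫ u in a..(a+P), g a * |Real.sin ((t - u)/c)| := by
          apply intervalIntegral.integral_mono_on haP hSsin_int.abs
          · exact (continuous_const.mul hsin_cont.abs).intervalIntegrable _ _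
          · intro x _
            rw [abs_mul]
            exact mul_le_mul_of_nonneg_right (hSbound x) (abs_nonneg _)
      _ = g a * ∫ u in a..(a+P), |Real.sin ((t - u)/c)| :=
          intervalIntegral.integral_const_mul _ _
      _ = g a * (2*c) := by rw [intAbsSinArg t a c hc]
      _ = 2 * c * g a := by ring
  rw [e1, e2, e3, e5]
  exact e6


lemma holderCont {ψ : ℝ → ℝ} {T Hβ β : ℝ} (hβ : 0 < β)
    (hHol : ∀ s ∈ Set.Icc (0:ℝ) T, ∀ t ∈ Set.Icc (0:ℝ) T,
      |ψ s - ψ t| ≤ Hβ * |s - t| ^ β) :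
    ContinuousOn ψ (Set.Icc 0 T) := by
  intro x hx
  rw [ContinuousWithinAt, tendsto_iff_dist_tendsto_zero]
  have h0 : Tendsto (fun y : ℝ => |y - x|) (nhdsWithin x (Set.Icc 0 T)) (nhds 0) := by
    have hcont : Continuous (fun y : ℝ => |y - x|) :=
      (continuous_id.sub continuous_const).abs
    have h := hcont.tendsto x
    simp only [sub_self, abs_zero] at h
    exact h.mono_left nhdsWithin_le_nhds
  have h1 : Tendsto (fun y : ℝ => Hβ * |y - x| ^ β)
      (nhdsWithin x (Set.Icc 0 T)) (nhds 0) := by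
    have hc : ContinuousAt (fun z : ℝ => z ^ β) 0 :=
      Real.continuousAt_rpow_const 0 β (Or.inr hβ.le)
    have h2 := (hc.tendsto.comp h0)
    rw [Real.zero_rpow hβ.ne'] at h2
    have := h2.const_mul Hβ
    simpa using this
  apply squeeze_zero' (Eventually.of_forall (fun y => dist_nonneg)) ?_ h1
  filter_upwards [self_mem_nhdsWithin] with y hy
  rw [Real.dist_eq]
  exact hHol y hy x hx

set_option maxHeartbeats 1000000 in
/-- if `ψ(0) = 0`, `ψ` is `β`-Hölder on `[0,T]` and differentiable on
`(0,T]` with `ψ'` positive and nonincreasing there, then with `λ_j = (π(j-1/2)/T)^{-2}`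
and `f_j(t) = √(2/T) ∫₀^t ψ(s) cos((t-s)/√λ_j) ds`:
`‖f_j‖_∞ ≤ 3√(2λ_j/T) ψ(√λ_j) ≤ C λ_j^{(1+β)/2} ≤ C' j^{-(1+β)}`. -/
theorem stmt16 (T β Hβ : ℝ) (hT : 0 < T) (hβ : 0 < β) (hβ1 : β ≤ 1) (hHβ : 0 ≤ Hβ)
    (ψ ψ' : ℝ → ℝ) (hψint : IntegrableOn ψ (Set.Icc 0 T)) (hψ0 : ψ 0 = 0)
    (hHol : ∀ s ∈ Set.Icc (0:ℝ) T, ∀ t ∈ Set.Icc (0:ℝ) T,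
      |ψ s - ψ t| ≤ Hβ * |s - t| ^ β)
    (hderiv : ∀ t ∈ Set.Ioc (0:ℝ) T, HasDerivAt ψ (ψ' t) t)
    (hψ'pos : ∀ t ∈ Set.Ioc (0:ℝ) T, 0 < ψ' t)
    (hψ'mono : ∀ s ∈ Set.Ioc (0:ℝ) T, ∀ t ∈ Set.Ioc (0:ℝ) T, s ≤ t → ψ' t ≤ ψ' s)
    (lam : ℕ → ℝ) (hlam : ∀ j : ℕ, lam j = (π * ((j:ℝ) - 1/2) / T) ^ (-(2:ℝ)))
    (f : ℕ → ℝ → ℝ)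
    (hf : ∀ (j : ℕ) (t : ℝ), f j t =
      Real.sqrt (2/T) * ∫ s in (0:ℝ)..t, ψ s * Real.cos ((t - s) / Real.sqrt (lam j))) :
    (∀ j : ℕ, 1 ≤ j → ∀ t ∈ Set.Icc (0:ℝ) T,
      |f j t| ≤ 3 * Real.sqrt (2 * lam j / T) * ψ (Real.sqrt (lam j))) ∧
    ∃ C C' : ℝ,
      (∀ j : ℕ, 1 ≤ j →
        3 * Real.sqrt (2 * lam j / T) * ψ (Real.sqrt (lam j)) ≤
          C * lam j ^ ((1 + β)/2)) ∧
      (∀ j : ℕ, 1 ≤ j → C * lam j ^ ((1 + β)/2) ≤ C' * (j:ℝ) ^ (-(1 + β))) := by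
  -- basic facts about ψ
  have hcont : ContinuousOn ψ (Set.Icc 0 T) := holderCont hβ hHol
  have hmono : MonotoneOn ψ (Set.Icc 0 T) := by
    apply (strictMonoOn_of_deriv_pos (convex_Icc 0 T) hcont ?_).monotoneOn
    intro x hx
    rw [interior_Icc] at hx
    rw [(hderiv x ⟨hx.1, hx.2.le⟩).deriv]
    exact hψ'pos x ⟨hx.1, hx.2.le⟩
  have hψnn : ∀ s ∈ Set.Icc (0:ℝ) T, 0 ≤ ψ s := by
    intro s hs
    have := hmono ⟨le_rfl, hT.le⟩ hs hs.1
    rwa [hψ0] at this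
  -- facts about lam
  have hfact : ∀ j : ℕ, 1 ≤ j → 0 < lam j ∧
      Real.sqrt (lam j) = (π * ((j:ℝ) - 1/2) / T)⁻¹ ∧ Real.sqrt (lam j) ≤ T := by
    intro j hj
    have hj1 : (1:ℝ) ≤ (j:ℝ) := by exact_mod_cast hj
    set r := π * ((j:ℝ) - 1/2) / T with hr
    have hrpos : 0 < r := div_pos (mul_pos Real.pi_pos (by linarith)) hT
    have hlameq : lam j = (r ^ 2)⁻¹ := by
      rw [hlam j, ← hr, show ((2:ℝ)) = ((2:ℕ):ℝ) by norm_num, Real.rpow_neg hrpos.le,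
        Real.rpow_natCast]
    have hlampos : 0 < lam j := by rw [hlameq]; positivity
    have hsqrt : Real.sqrt (lam j) = r⁻¹ := by
      rw [hlameq, ← inv_pow, Real.sqrt_sq (inv_nonneg.mpr hrpos.le)]
    refine ⟨hlampos, hsqrt, ?_⟩
    rw [hsqrt]
    have hTr : 1 ≤ T * r := by
      have h2 : T * r = π * ((j:ℝ) - 1/2) := by
        rw [hr]; field_simp
      rw [h2]
      nlinarith [Real.pi_gt_three]
    have h3 : r⁻¹ * (T * r) = T := by field_simp
    have h4 := mul_le_mul_of_nonneg_left hTr (inv_nonneg.2 hrpos.le)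
    rw [h3, mul_one] at h4
    exact h4
  -- Part 1
  have part1 : ∀ j : ℕ, 1 ≤ j → ∀ t ∈ Set.Icc (0:ℝ) T,
      |f j t| ≤ 3 * Real.sqrt (2 * lam j / T) * ψ (Real.sqrt (lam j)) := by
    intro j hj t ht
    obtain ⟨hlampos, _, hcT'⟩ := hfact j hj
    set c := Real.sqrt (lam j) with hcdef
    have hcpos : 0 < c := Real.sqrt_pos.mpr hlampos
    have hcT : c ≤ T := hcT'
    have hcmem : c ∈ Set.Icc (0:ℝ) T := ⟨hcpos.le, hcT⟩
    have hψc : 0 ≤ ψ c := hψnn c hcmem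
    have ht0 : 0 ≤ t := ht.1
    have htT : t ≤ T := ht.2
    rw [hf j t, abs_mul, abs_of_nonneg (Real.sqrt_nonneg (2/T))]
    have hsqrtsplit : Real.sqrt (2 * lam j / T) = Real.sqrt (2/T) * c := by
      rw [show 2 * lam j / T = (2/T) * lam j by ring,
        Real.sqrt_mul (by positivity) (lam j)]
    -- integrability of ψ * cos on subintervals
    have hψcosint : ∀ u v : ℝ, 0 ≤ u → v ≤ T → u ≤ v →
        IntervalIntegrable (fun s => ψ s * Real.cos ((t - s)/c)) volume u v := by
      intro u v hu hv huv
      apply ContinuousOn.intervalIntegrable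
      apply ContinuousOn.mul
      · apply hcont.mono
        rw [Set.uIcc_of_le huv]
        exact Set.Icc_subset_Icc hu hv
      · exact (Continuous.continuousOn (by fun_prop))
    suffices h : |∫ s in (0:ℝ)..t, ψ s * Real.cos ((t - s)/c)| ≤ 3 * c * ψ c by
      rw [hsqrtsplit]
      calc Real.sqrt (2/T) * |∫ s in (0:ℝ)..t, ψ s * Real.cos ((t - s)/c)|
          ≤ Real.sqrt (2/T) * (3 * c * ψ c) :=
            mul_le_mul_of_nonneg_left h (Real.sqrt_nonneg _)
        _ = 3 * (Real.sqrt (2/T) * c) * ψ c := by ring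
    by_cases hcase : t ≤ c
    · -- easy case t ≤ c
      have hb := intervalIntegral.norm_integral_le_of_norm_le_const
        (C := ψ c) (f := fun s => ψ s * Real.cos ((t - s)/c)) (a := 0) (b := t) ?_
      · rw [Real.norm_eq_abs] at hb
        rw [sub_zero, abs_of_nonneg ht0] at hb
        have : ψ c * t ≤ c * ψ c := by nlinarith
        calc |∫ s in (0:ℝ)..t, ψ s * Real.cos ((t - s)/c)| ≤ ψ c * t := hb
          _ ≤ c * ψ c := this
          _ ≤ 3 * c * ψ c := by nlinarith
      · intro x hx
        rw [Set.uIoc_of_le ht0] at hx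
        have hxm : x ∈ Set.Icc (0:ℝ) T := ⟨hx.1.le, le_trans hx.2 htT⟩
        rw [Real.norm_eq_abs, abs_mul]
        calc |ψ x| * |Real.cos ((t - x)/c)| ≤ |ψ x| * 1 :=
              mul_le_mul_of_nonneg_left (Real.abs_cos_le_one _) (abs_nonneg _)
          _ = ψ x := by rw [mul_one, abs_of_nonneg (hψnn x hxm)]
          _ ≤ ψ c := hmono hxm hcmem (le_trans hx.2 hcase)
    · -- hard case c < t
      push_neg at hcase
      have hct : c ≤ t := hcase.le
      -- integrability of ψ'
      have hψ'int : ∀ u v : ℝ, 0 < u → v ≤ T → u ≤ v →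
          IntervalIntegrable ψ' volume u v := by
        intro u v hu hv huv
        apply AntitoneOn.intervalIntegrable
        rw [Set.uIcc_of_le huv]
        intro x hx y hy hxy
        exact hψ'mono x ⟨lt_of_lt_of_le hu hx.1, le_trans hx.2 hv⟩
          y ⟨lt_of_lt_of_le hu hy.1, le_trans hy.2 hv⟩ hxy
      have hsinc : Continuous (fun s : ℝ => Real.sin ((t - s)/c)) := by fun_prop
      have hFsin_int : ∀ u v : ℝ, 0 < u → v ≤ T → u ≤ v →
          IntervalIntegrable (fun s => ψ' s * Real.sin ((t - s)/c)) volume u v := by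
        intro u v hu hv huv
        exact (hψ'int u v hu hv huv).mul_continuousOn hsinc.continuousOn
      -- FTC for ψ'
      have hFTC : ∀ u v : ℝ, 0 < u → v ≤ T → u ≤ v →
          (∫ s in u..v, ψ' s) = ψ v - ψ u := by
        intro u v hu hv huv
        apply intervalIntegral.integral_eq_sub_of_hasDerivAt
        · intro x hx
          rw [Set.uIcc_of_le huv] at hx
          exact hderiv x ⟨lt_of_lt_of_le hu hx.1, le_trans hx.2 hv⟩
        · exact hψ'int u v hu hv huv
      -- c * ψ' c ≤ ψ c
      have hcψ' : c * ψ' c ≤ ψ c := by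
        have hev : ∀ ε ∈ Set.Ioo (0:ℝ) c, (c - ε) * ψ' c ≤ ψ c := by
          intro ε hε
          have h1 : (∫ s in ε..c, ψ' c) ≤ ∫ s in ε..c, ψ' s := by
            apply intervalIntegral.integral_mono_on hε.2.le
              intervalIntegrable_const (hψ'int ε c hε.1 hcT hε.2.le)
            intro x hx
            exact hψ'mono x ⟨lt_of_lt_of_le hε.1 hx.1, le_trans hx.2 hcT⟩
              c ⟨hcpos, hcT⟩ hx.2
          rw [intervalIntegral.integral_const, hFTC ε c hε.1 hcT hε.2.le] at h1
          have hψε : 0 ≤ ψ ε := hψnn ε ⟨hε.1.le, le_trans hε.2.le hcT⟩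
          rw [smul_eq_mul] at h1
          linarith
        apply le_of_tendsto (f := fun ε : ℝ => (c - ε) * ψ' c)
          (x := nhdsWithin 0 (Set.Ioi 0)) ?_ ?_
        · have h1 : Tendsto (fun ε : ℝ => (c - ε) * ψ' c) (nhds 0)
              (nhds ((c - 0) * ψ' c)) := by
            exact ((tendsto_const_nhds.sub tendsto_id).mul_const (ψ' c))
          rw [sub_zero] at h1
          exact h1.mono_left nhdsWithin_le_nhds
        · filter_upwards [Ioo_mem_nhdsGT hcpos] with ε hε
          exact hev ε hε
      -- the ε-estimate
      have hkey : ∀ ε ∈ Set.Ioo (0:ℝ) c,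
          |∫ s in (0:ℝ)..t, ψ s * Real.cos ((t - s)/c)|
            ≤ 3 * c * ψ c + (ψ T * ε + c * (Hβ * ε ^ β)) := by
        intro ε hε
        have hε0 : 0 < ε := hε.1
        have hεc : ε < c := hε.2
        have hεt : ε ≤ t := le_trans hεc.le hct
        have hεT : ε ≤ T := le_trans hεt htT
        -- split the integral
        have hsplit : (∫ s in (0:ℝ)..t, ψ s * Real.cos ((t - s)/c))
            = (∫ s in (0:ℝ)..ε, ψ s * Real.cos ((t - s)/c))
              + ∫ s in ε..t, ψ s * Real.cos ((t - s)/c) :=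
          (intervalIntegral.integral_add_adjacent_intervals
            (hψcosint 0 ε le_rfl hεT hε0.le) (hψcosint ε t hε0.le htT hεt)).symm
        -- A1
        have hA1 : |∫ s in (0:ℝ)..ε, ψ s * Real.cos ((t - s)/c)| ≤ ψ T * ε := by
          have hb := intervalIntegral.norm_integral_le_of_norm_le_const
            (C := ψ T) (f := fun s => ψ s * Real.cos ((t - s)/c)) (a := 0) (b := ε) ?_
          · rw [Real.norm_eq_abs, sub_zero, abs_of_nonneg hε0.le] at hb
            exact hb
          · intro x hx
            rw [Set.uIoc_of_le hε0.le] at hx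
            have hxm : x ∈ Set.Icc (0:ℝ) T := ⟨hx.1.le, le_trans hx.2 hεT⟩
            rw [Real.norm_eq_abs, abs_mul]
            calc |ψ x| * |Real.cos ((t - x)/c)| ≤ |ψ x| * 1 :=
                  mul_le_mul_of_nonneg_left (Real.abs_cos_le_one _) (abs_nonneg _)
              _ = ψ x := by rw [mul_one, abs_of_nonneg (hψnn x hxm)]
              _ ≤ ψ T := hmono hxm ⟨hT.le, le_rfl⟩ hxm.2
        -- integration by parts on [ε, t]
        have hv : ∀ x : ℝ, HasDerivAt (fun y => -c * Real.sin ((t - y)/c))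
            (Real.cos ((t - x)/c)) x := by
          intro x
          have h1 : HasDerivAt (fun y : ℝ => (t - y)/c) (-1/c) x := by
            simpa using ((hasDerivAt_id x).const_sub t).div_const c
          have h2 := (h1.sin).const_mul (-c)
          refine h2.congr_deriv ?_
          have hc0 : c ≠ 0 := hcpos.ne'
          field_simp
        have hu : ∀ x ∈ Set.uIcc ε t, HasDerivAt ψ (ψ' x) x := by
          intro x hx
          rw [Set.uIcc_of_le hεt] at hx
          exact hderiv x ⟨lt_of_lt_of_le hε0 hx.1, le_trans hx.2 htT⟩
        have hIBP := intervalIntegral.integral_mul_deriv_eq_deriv_mul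
          (u := ψ) (v := fun y => -c * Real.sin ((t - y)/c)) (u' := ψ')
          (v' := fun y => Real.cos ((t - y)/c))
          (a := ε) (b := t) hu (fun x _ => hv x)
          (hψ'int ε t hε0 htT hεt)
          ((Continuous.continuousOn (by fun_prop)).intervalIntegrable)
        beta_reduce at hIBP
        -- simplify boundary terms
        rw [show (t - t)/c = 0 by rw [sub_self, zero_div], Real.sin_zero, mul_zero, mul_zero,
          zero_sub] at hIBP
        have hBsin : (∫ s in ε..t, ψ' s * (-c * Real.sin ((t - s)/c)))
            = -c * ∫ s in ε..t, ψ' s * Real.sin ((t - s)/c) := by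
          rw [← intervalIntegral.integral_const_mul]
          apply intervalIntegral.integral_congr
          intro x _
          ring
        rw [hBsin] at hIBP
        -- hIBP : ∫_ε^t ψ cos = -(ψ ε * (-c * sin((t-ε)/c))) - (-c * ∫ ψ' sin)
        -- split ψ' sin at c
        have hsplit2 : (∫ s in ε..t, ψ' s * Real.sin ((t - s)/c))
            = (∫ s in ε..c, ψ' s * Real.sin ((t - s)/c))
              + ∫ s in c..t, ψ' s * Real.sin ((t - s)/c) :=
          (intervalIntegral.integral_add_adjacent_intervals
            (hFsin_int ε c hε0 hcT hεc.le) (hFsin_int c t hcpos htT hct)).symm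
        -- A2 : ψ ε small
        have hψεb : ψ ε ≤ Hβ * ε ^ β := by
          have h := hHol ε ⟨hε0.le, hεT⟩ 0 ⟨le_rfl, hT.le⟩
          rw [hψ0, sub_zero, sub_zero, abs_of_nonneg hε0.le] at h
          exact le_trans (le_abs_self _) h
        have hψεnn : 0 ≤ ψ ε := hψnn ε ⟨hε0.le, hεT⟩
        -- A3a
        have hA3a : |∫ s in ε..c, ψ' s * Real.sin ((t - s)/c)| ≤ ψ c := by
          have hstep : (∫ s in ε..c, |ψ' s * Real.sin ((t - s)/c)|)
              ≤ ∫ s in ε..c, ψ' s := by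
            apply intervalIntegral.integral_mono_on hεc.le
              (hFsin_int ε c hε0 hcT hεc.le).abs (hψ'int ε c hε0 hcT hεc.le)
            intro x hx
            have hx' : x ∈ Set.Ioc (0:ℝ) T :=
              ⟨lt_of_lt_of_le hε0 hx.1, le_trans hx.2 hcT⟩
            rw [abs_mul, abs_of_nonneg (hψ'pos x hx').le]
            calc ψ' x * |Real.sin ((t - x)/c)| ≤ ψ' x * 1 :=
                  mul_le_mul_of_nonneg_left (abs_le.mpr ⟨neg_one_le_sin _, sin_le_one _⟩)
                    (hψ'pos x hx').le
              _ = ψ' x := mul_one _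
          calc |∫ s in ε..c, ψ' s * Real.sin ((t - s)/c)|
              ≤ ∫ s in ε..c, |ψ' s * Real.sin ((t - s)/c)| :=
                intervalIntegral.abs_integral_le_integral_abs hεc.le
            _ ≤ ∫ s in ε..c, ψ' s := hstep
            _ = ψ c - ψ ε := hFTC ε c hε0 hcT hεc.le
            _ ≤ ψ c := by linarith
        -- A3b : oscillation bound
        have hA3b : |∫ s in c..t, ψ' s * Real.sin ((t - s)/c)| ≤ 2 * c * ψ' c := by
          apply oscBound hcpos hct ?_ (hψ'pos t ⟨lt_of_lt_of_le hcpos hct, htT⟩).le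
          intro x hx y hy hxy
          exact hψ'mono x ⟨lt_of_lt_of_le hcpos hx.1, le_trans hx.2 htT⟩
            y ⟨lt_of_lt_of_le hcpos hy.1, le_trans hy.2 htT⟩ hxy
        -- combine
        rw [hsplit, hIBP, hsplit2]
        have habs1 : |Real.sin ((t - ε)/c)| ≤ 1 :=
          abs_le.mpr ⟨neg_one_le_sin _, sin_le_one _⟩
        set I1 := ∫ s in (0:ℝ)..ε, ψ s * Real.cos ((t - s)/c) with hI1
        set J1 := ∫ s in ε..c, ψ' s * Real.sin ((t - s)/c) with hJ1
        set J2 := ∫ s in c..t, ψ' s * Real.sin ((t - s)/c) with hJ2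
        have e1 : |(-(ψ ε * (-c * Real.sin ((t - ε)/c))) - -c * (J1 + J2))|
            ≤ c * ψ ε + c * (|J1| + |J2|) := by
          have h1 : |(-(ψ ε * (-c * Real.sin ((t - ε)/c))))| ≤ c * ψ ε := by
            rw [abs_neg, abs_mul, abs_mul, abs_neg, abs_of_nonneg hcpos.le,
              abs_of_nonneg hψεnn]
            calc ψ ε * (c * |Real.sin ((t - ε)/c)|) ≤ ψ ε * (c * 1) := by
                  apply mul_le_mul_of_nonneg_left _ hψεnn
                  exact mul_le_mul_of_nonneg_left habs1 hcpos.le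
              _ = c * ψ ε := by ring
          have h2 : |(-c * (J1 + J2))| ≤ c * (|J1| + |J2|) := by
            rw [abs_mul, abs_neg, abs_of_nonneg hcpos.le]
            exact mul_le_mul_of_nonneg_left (abs_add_le _ _) hcpos.le
          calc |(-(ψ ε * (-c * Real.sin ((t - ε)/c))) - -c * (J1 + J2))|
              ≤ |(-(ψ ε * (-c * Real.sin ((t - ε)/c))))| + |(-c * (J1 + J2))| :=
                abs_sub _ _
            _ ≤ c * ψ ε + c * (|J1| + |J2|) := add_le_add h1 h2
        calc |I1 + (-(ψ ε * (-c * Real.sin ((t - ε)/c))) - -c * (J1 + J2))|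
            ≤ |I1| + |(-(ψ ε * (-c * Real.sin ((t - ε)/c))) - -c * (J1 + J2))| :=
              abs_add_le _ _
          _ ≤ ψ T * ε + (c * ψ ε + c * (|J1| + |J2|)) := add_le_add hA1 e1
          _ ≤ ψ T * ε + (c * (Hβ * ε ^ β) + c * (ψ c + 2 * c * ψ' c)) := by
              have := mul_le_mul_of_nonneg_left hψεb hcpos.le
              have h4 : |J1| + |J2| ≤ ψ c + 2 * c * ψ' c := add_le_add hA3a hA3b
              have := mul_le_mul_of_nonneg_left h4 hcpos.le
              linarith
          _ ≤ 3 * c * ψ c + (ψ T * ε + c * (Hβ * ε ^ β)) := by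
              have h5 : c * (2 * c * ψ' c) ≤ 2 * c * ψ c := by nlinarith [hcψ', hcpos.le]
              nlinarith [hcpos.le, hψc]
      -- conclude by limit
      have htend : Tendsto (fun ε : ℝ => 3 * c * ψ c + (ψ T * ε + c * (Hβ * ε ^ β)))
          (nhdsWithin 0 (Set.Ioi 0)) (nhds (3 * c * ψ c)) := by
        have h1 : Tendsto (fun ε : ℝ => ε ^ β) (nhdsWithin 0 (Set.Ioi 0)) (nhds 0) := by
          have h := (Real.continuousAt_rpow_const 0 β (Or.inr hβ.le)).tendsto
          rw [Real.zero_rpow hβ.ne'] at h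
          exact h.mono_left nhdsWithin_le_nhds
        have h2 : Tendsto (fun ε : ℝ => ψ T * ε + c * (Hβ * ε ^ β))
            (nhdsWithin 0 (Set.Ioi 0)) (nhds 0) := by
          have ha : Tendsto (fun ε : ℝ => ψ T * ε) (nhdsWithin 0 (Set.Ioi 0)) (nhds 0) := by
            have hco : Continuous (fun ε : ℝ => ψ T * ε) :=
              continuous_const.mul continuous_id
            have h := hco.tendsto (0:ℝ)
            simp only [mul_zero] at h
            exact h.mono_left nhdsWithin_le_nhds
          have hb := (h1.const_mul Hβ).const_mul c
          simp only [mul_zero] at hb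
          simpa using ha.add hb
        have h3 := tendsto_const_nhds (x := 3 * c * ψ c)
          (f := nhdsWithin (0:ℝ) (Set.Ioi 0)) |>.add h2
        simpa using h3
      apply ge_of_tendsto htend
      filter_upwards [Ioo_mem_nhdsGT hcpos] with ε hε
      exact hkey ε hε
  refine ⟨part1, 3 * Real.sqrt (2/T) * Hβ, 3 * Real.sqrt (2/T) * Hβ * (2*T/π) ^ ((1:ℝ)+β),
    ?_, ?_⟩
  · -- Part 2
    intro j hj
    obtain ⟨hlampos, hsqrt, hcT⟩ := hfact j hj
    set c := Real.sqrt (lam j) with hcdef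
    have hcpos : 0 < c := Real.sqrt_pos.mpr hlampos
    have hψcb : ψ c ≤ Hβ * c ^ β := by
      have h := hHol c ⟨hcpos.le, hcT⟩ 0 ⟨le_rfl, hT.le⟩
      rw [hψ0, sub_zero, sub_zero, abs_of_nonneg hcpos.le] at h
      exact le_trans (le_abs_self _) h
    have hsqrtsplit : Real.sqrt (2 * lam j / T) = Real.sqrt (2/T) * c := by
      rw [show 2 * lam j / T = (2/T) * lam j by ring,
        Real.sqrt_mul (by positivity) (lam j)]
    have hpow : c * c ^ β = lam j ^ ((1 + β)/2) := by
      have hs : c = lam j ^ ((1:ℝ)/2) := by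
        rw [hcdef, Real.sqrt_eq_rpow]
      rw [hs, ← Real.rpow_mul hlampos.le, ← Real.rpow_add hlampos]
      congr 1
      ring
    calc 3 * Real.sqrt (2 * lam j / T) * ψ c
        = 3 * Real.sqrt (2/T) * (c * ψ c) := by rw [hsqrtsplit]; ring
      _ ≤ 3 * Real.sqrt (2/T) * (c * (Hβ * c ^ β)) := by
          apply mul_le_mul_of_nonneg_left _ (by positivity)
          exact mul_le_mul_of_nonneg_left hψcb hcpos.le
      _ = 3 * Real.sqrt (2/T) * Hβ * (c * c ^ β) := by ring
      _ = 3 * Real.sqrt (2/T) * Hβ * lam j ^ ((1 + β)/2) := by rw [hpow]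
  · -- Part 3
    intro j hj
    have hj1 : (1:ℝ) ≤ (j:ℝ) := by exact_mod_cast hj
    set r := π * ((j:ℝ) - 1/2) / T with hr
    have hrpos : 0 < r := div_pos (mul_pos Real.pi_pos (by linarith)) hT
    set q := π / (2*T) * (j:ℝ) with hq
    have hqpos : 0 < q := by
      rw [hq]
      exact mul_pos (div_pos Real.pi_pos (by linarith)) (by linarith)
    have hrq : q ≤ r := by
      rw [hq, hr]
      rw [div_mul_eq_mul_div, div_le_div_iff₀ (by linarith) hT]
      nlinarith [mul_nonneg (mul_nonneg Real.pi_pos.le hT.le) (sub_nonneg.mpr hj1)]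
    have h1 : lam j ^ ((1 + β)/2 : ℝ) = r ^ (-(1+β) : ℝ) := by
      rw [hlam j, ← hr, ← Real.rpow_mul hrpos.le]
      congr 1
      ring
    have h2 : r ^ (-(1+β) : ℝ) ≤ q ^ (-(1+β) : ℝ) := by
      rw [Real.rpow_neg hrpos.le, Real.rpow_neg hqpos.le]
      exact inv_anti₀ (Real.rpow_pos_of_pos hqpos _)
        (Real.rpow_le_rpow hqpos.le hrq (by linarith))
    have h3 : q ^ (-(1+β) : ℝ) = (2*T/π) ^ ((1:ℝ)+β) * (j:ℝ) ^ (-(1+β)) := by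
      rw [hq, Real.mul_rpow (by positivity) (by positivity)]
      congr 1
      rw [Real.rpow_neg (by positivity), ← Real.inv_rpow (by positivity)]
      congr 1
      rw [inv_div]
    have hCnn : (0:ℝ) ≤ 3 * Real.sqrt (2/T) * Hβ := by positivity
    calc 3 * Real.sqrt (2/T) * Hβ * lam j ^ ((1 + β)/2)
        = 3 * Real.sqrt (2/T) * Hβ * r ^ (-(1+β) : ℝ) := by rw [h1]
      _ ≤ 3 * Real.sqrt (2/T) * Hβ * q ^ (-(1+β) : ℝ) :=
          mul_le_mul_of_nonneg_left h2 hCnn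
      _ = 3 * Real.sqrt (2/T) * Hβ * (2*T/π) ^ ((1:ℝ)+β) * (j:ℝ) ^ (-(1+β)) := by
          rw [h3]; ring
end

section
/- Riemann–Liouville kernel: for ψ(t) = t^{ρ−1/2} with ρ ∈ (0, 3/2], ρ ≠ 1/2, and f_j(t) = √(2/T) ∫₀^t ψ(s) cos(π(j−1/2)(t−s)/T) ds, one has ‖f_j‖_∞ ≤ C j^{−(ρ+1/2)} for a constant C depending only on T and ρ. -/
open Real MeasureTheory

section Aux
open intervalIntegral

lemma intInt_rpow_mul (γ : ℝ) (hγ : -1 < γ) (g : ℝ → ℝ) (hg : Continuous g) (a b : ℝ) :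
    IntervalIntegrable (fun v => v ^ γ * g v) volume a b :=
  (intervalIntegrable_rpow' hγ).mul_continuousOn hg.continuousOn

lemma small_bound (γ : ℝ) (hγ1 : -1 < γ) (hγ2 : γ ≤ 0) (g : ℝ → ℝ)
    (hg : Continuous g) (hg1 : ∀ v, |g v| ≤ 1) (Y : ℝ) (hY0 : 0 ≤ Y) :
    |∫ v in (0:ℝ)..Y, v ^ γ * g v| ≤ Y ^ (γ + 1) / (γ + 1) := by
  have hγp : 0 < γ + 1 := by linarith
  have h1 : |∫ v in (0:ℝ)..Y, v ^ γ * g v| ≤ ∫ v in (0:ℝ)..Y, v ^ γ := by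
    rw [abs_le]
    constructor
    · rw [neg_le]
      rw [show -∫ v in (0:ℝ)..Y, v ^ γ * g v = ∫ v in (0:ℝ)..Y, -(v ^ γ * g v) from
        (intervalIntegral.integral_neg).symm ]
      apply intervalIntegral.integral_mono_on hY0
      · exact (intInt_rpow_mul γ hγ1 g hg 0 Y).neg
      · exact intervalIntegrable_rpow' hγ1
      · intro x hx
        have hx0 : (0:ℝ) ≤ x := hx.1
        have h2 : |x ^ γ * g x| ≤ x ^ γ := by
          rw [abs_mul, abs_of_nonneg (rpow_nonneg hx0 γ)]
          calc x ^ γ * |g x| ≤ x ^ γ * 1 :=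
            mul_le_mul_of_nonneg_left (hg1 x) (rpow_nonneg hx0 γ)
          _ = x ^ γ := mul_one _
        have := neg_abs_le (x ^ γ * g x)
        linarith [abs_le.mp h2]
    · apply intervalIntegral.integral_mono_on hY0
      · exact intInt_rpow_mul γ hγ1 g hg 0 Y
      · exact intervalIntegrable_rpow' hγ1
      · intro x hx
        have hx0 : (0:ℝ) ≤ x := hx.1
        have h2 : |x ^ γ * g x| ≤ x ^ γ := by
          rw [abs_mul, abs_of_nonneg (rpow_nonneg hx0 γ)]
          calc x ^ γ * |g x| ≤ x ^ γ * 1 :=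
            mul_le_mul_of_nonneg_left (hg1 x) (rpow_nonneg hx0 γ)
          _ = x ^ γ := mul_one _
        linarith [abs_le.mp h2]
  calc |∫ v in (0:ℝ)..Y, v ^ γ * g v| ≤ ∫ v in (0:ℝ)..Y, v ^ γ := h1
    _ = (Y ^ (γ+1) - 0 ^ (γ+1)) / (γ+1) := integral_rpow (Or.inl hγ1)
    _ = Y ^ (γ+1) / (γ+1) := by rw [Real.zero_rpow hγp.ne', sub_zero]

lemma osc_bound (γ : ℝ) (hγ1 : -1 < γ) (hγ2 : γ ≤ 0) (g G : ℝ → ℝ)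
    (hG : ∀ v, HasDerivAt G (g v) v) (hg : Continuous g)
    (hg1 : ∀ v, |g v| ≤ 1) (hG1 : ∀ v, |G v| ≤ 1)
    (X : ℝ) (hX : 0 ≤ X) :
    |∫ v in (0:ℝ)..X, v ^ γ * g v| ≤ π ^ (γ + 1) / (γ + 1) + 3 * π ^ γ := by
  have hγp : 0 < γ + 1 := by linarith
  have hπγ : 0 ≤ π ^ γ := rpow_nonneg pi_pos.le γ
  have hGc : Continuous G := by
    apply continuous_iff_continuousAt.2
    exact fun v => (hG v).continuousAt
  rcases le_or_gt X π with hXπ | hπX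
  · calc |∫ v in (0:ℝ)..X, v ^ γ * g v| ≤ X ^ (γ+1) / (γ+1) :=
        small_bound γ hγ1 hγ2 g hg hg1 X hX
    _ ≤ π ^ (γ+1) / (γ+1) := by gcongr
    _ ≤ π ^ (γ+1) / (γ+1) + 3 * π ^ γ := by linarith
  · -- X > π : split at π and integrate by parts on [π, X]
    have hsplit : (∫ v in (0:ℝ)..X, v ^ γ * g v)
        = (∫ v in (0:ℝ)..π, v ^ γ * g v) + ∫ v in π..X, v ^ γ * g v :=
      (intervalIntegral.integral_add_adjacent_intervals
        (intInt_rpow_mul γ hγ1 g hg 0 π) (intInt_rpow_mul γ hγ1 g hg π X)).symm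
    have h0π : |∫ v in (0:ℝ)..π, v ^ γ * g v| ≤ π ^ (γ+1) / (γ+1) :=
      small_bound γ hγ1 hγ2 g hg hg1 π pi_pos.le
    have hne : (0:ℝ) ∉ Set.uIcc π X := by
      rw [Set.uIcc_of_le hπX.le]
      intro h
      exact absurd h.1 (not_le.mpr pi_pos)
    -- integration by parts
    have hibp : (∫ v in π..X, v ^ γ * g v)
        = X ^ γ * G X - π ^ γ * G π - ∫ v in π..X, (γ * v ^ (γ-1)) * G v := by
      apply intervalIntegral.integral_mul_deriv_eq_deriv_mul
      · intro x hx
        have hx0 : x ≠ 0 := by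
          intro h; exact hne (h ▸ hx)
        exact Real.hasDerivAt_rpow_const (Or.inl hx0)
      · exact fun x _ => hG x
      · exact (intervalIntegrable_rpow (Or.inr hne)).const_mul γ
      · exact hg.intervalIntegrable π X
    have hXγ : X ^ γ ≤ π ^ γ := Real.rpow_le_rpow_of_nonpos pi_pos hπX.le hγ2
    have hXγ0 : 0 ≤ X ^ γ := rpow_nonneg (by linarith [pi_pos] : (0:ℝ) ≤ X) γ
    -- bound the boundary terms
    have hb1 : |X ^ γ * G X| ≤ π ^ γ := by
      rw [abs_mul, abs_of_nonneg hXγ0]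
      calc X ^ γ * |G X| ≤ X ^ γ * 1 := mul_le_mul_of_nonneg_left (hG1 X) hXγ0
      _ = X ^ γ := mul_one _
      _ ≤ π ^ γ := hXγ
    have hb2 : |π ^ γ * G π| ≤ π ^ γ := by
      rw [abs_mul, abs_of_nonneg hπγ]
      calc π ^ γ * |G π| ≤ π ^ γ * 1 := mul_le_mul_of_nonneg_left (hG1 π) hπγ
      _ = π ^ γ := mul_one _
    -- bound the remaining integral
    have hb3 : |∫ v in π..X, (γ * v ^ (γ-1)) * G v| ≤ π ^ γ := by
      rcases eq_or_lt_of_le hγ2 with hγ0 | hγ0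
    -- γ = 0 : the integrand vanishes
      · simp [hγ0]
      · have hint1 : IntervalIntegrable (fun v => v ^ (γ-1)) volume π X :=
          intervalIntegrable_rpow (Or.inr hne)
        have h1 : |∫ v in π..X, (γ * v ^ (γ-1)) * G v|
            ≤ ∫ v in π..X, (-γ) * v ^ (γ-1) := by
          rw [abs_le]
          constructor
          · rw [neg_le, show -∫ v in π..X, (γ * v ^ (γ-1)) * G v
              = ∫ v in π..X, -((γ * v ^ (γ-1)) * G v) from
                (intervalIntegral.integral_neg).symm]
            apply intervalIntegral.integral_mono_on hπX.le
            · exact (((hint1.const_mul γ).mul_continuousOn hGc.continuousOn).neg)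
            · exact hint1.const_mul (-γ)
            · intro x hx
              have hx0 : (0:ℝ) < x := lt_of_lt_of_le pi_pos hx.1
              have hxr : 0 ≤ x ^ (γ-1) := rpow_nonneg hx0.le _
              have h2 : |(γ * x ^ (γ-1)) * G x| ≤ (-γ) * x ^ (γ-1) := by
                rw [abs_mul, abs_mul, abs_of_nonneg hxr, abs_of_neg hγ0]
                calc -γ * x ^ (γ-1) * |G x| ≤ -γ * x ^ (γ-1) * 1 :=
                  mul_le_mul_of_nonneg_left (hG1 x) (mul_nonneg (by linarith) hxr)
                _ = -γ * x ^ (γ-1) := mul_one _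
              linarith [abs_le.mp h2]
          · apply intervalIntegral.integral_mono_on hπX.le
            · exact ((hint1.const_mul γ).mul_continuousOn hGc.continuousOn)
            · exact hint1.const_mul (-γ)
            · intro x hx
              have hx0 : (0:ℝ) < x := lt_of_lt_of_le pi_pos hx.1
              have hxr : 0 ≤ x ^ (γ-1) := rpow_nonneg hx0.le _
              have h2 : |(γ * x ^ (γ-1)) * G x| ≤ (-γ) * x ^ (γ-1) := by
                rw [abs_mul, abs_mul, abs_of_nonneg hxr, abs_of_neg hγ0]
                calc -γ * x ^ (γ-1) * |G x| ≤ -γ * x ^ (γ-1) * 1 :=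
                  mul_le_mul_of_nonneg_left (hG1 x) (mul_nonneg (by linarith) hxr)
                _ = -γ * x ^ (γ-1) := mul_one _
              linarith [abs_le.mp h2]
        have h3 : (∫ v in π..X, (-γ) * v ^ (γ-1)) = (-γ) * ((X ^ γ - π ^ γ) / γ) := by
          rw [intervalIntegral.integral_const_mul, integral_rpow
            (Or.inr ⟨by intro h; linarith, hne⟩)]
          norm_num
        calc |∫ v in π..X, (γ * v ^ (γ-1)) * G v| ≤ (-γ) * ((X ^ γ - π ^ γ) / γ) :=
            h3 ▸ h1
        _ = π ^ γ - X ^ γ := by field_simp [hγ0.ne]; ring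
        _ ≤ π ^ γ := by linarith
    calc |∫ v in (0:ℝ)..X, v ^ γ * g v|
        ≤ |∫ v in (0:ℝ)..π, v ^ γ * g v|
          + (|X ^ γ * G X| + |π ^ γ * G π| + |∫ v in π..X, (γ * v ^ (γ-1)) * G v|) := by
          rw [hsplit, hibp]
          have := abs_add_le (∫ v in (0:ℝ)..π, v ^ γ * g v)
            (X ^ γ * G X - π ^ γ * G π - ∫ v in π..X, (γ * v ^ (γ-1)) * G v)
          have h4 : |X ^ γ * G X - π ^ γ * G π - ∫ v in π..X, (γ * v ^ (γ-1)) * G v|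
              ≤ |X ^ γ * G X| + |π ^ γ * G π| + |∫ v in π..X, (γ * v ^ (γ-1)) * G v| := by
            calc _ ≤ |X ^ γ * G X - π ^ γ * G π| + |∫ v in π..X, (γ * v ^ (γ-1)) * G v| :=
                abs_sub _ _
            _ ≤ _ := by linarith [abs_sub (X ^ γ * G X) (π ^ γ * G π)]
          linarith
      _ ≤ π ^ (γ+1) / (γ+1) + (π ^ γ + π ^ γ + π ^ γ) := by linarith
      _ = π ^ (γ+1) / (γ+1) + 3 * π ^ γ := by ring

lemma ibp_zero (β : ℝ) (hβ0 : 0 < β) (g G : ℝ → ℝ)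
    (hG : ∀ v, HasDerivAt G (g v) v) (hg : Continuous g) (X : ℝ) (hX : 0 ≤ X) :
    ∫ v in (0:ℝ)..X, v ^ β * g v
      = X ^ β * G X - β * ∫ v in (0:ℝ)..X, v ^ (β-1) * G v := by
  have hGc : Continuous G := continuous_iff_continuousAt.2 fun v => (hG v).continuousAt
  have hint1 : IntervalIntegrable (fun v => v ^ (β-1) * G v) volume 0 X :=
    intInt_rpow_mul (β-1) (by linarith) G hGc 0 X
  have hint2 : IntervalIntegrable (fun v => v ^ β * g v) volume 0 X :=
    intInt_rpow_mul β (by linarith) g hg 0 X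
  have hftc : (∫ v in (0:ℝ)..X, (β * (v ^ (β-1) * G v) + v ^ β * g v))
      = X ^ β * G X - 0 ^ (β:ℝ) * G 0 := by
    apply intervalIntegral.integral_eq_sub_of_hasDerivAt_of_le hX
    · exact ((Real.continuous_rpow_const hβ0.le).mul hGc).continuousOn
    · intro x hx
      have h := (Real.hasDerivAt_rpow_const (p := β) (Or.inl hx.1.ne')).mul (hG x)
      refine (show HasDerivAt (fun y => y ^ β * G y) _ x from h).congr_deriv ?_
      ring
    · exact (hint1.const_mul β).add hint2
  rw [intervalIntegral.integral_add (hint1.const_mul β) hint2,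
    intervalIntegral.integral_const_mul] at hftc
  rw [Real.zero_rpow hβ0.ne'] at hftc
  linarith

lemma key (β : ℝ) (hβ1 : -(1:ℝ)/2 < β) (hβ2 : β ≤ 1) (hβ3 : β ≠ 0) :
    ∃ M : ℝ, 0 ≤ M ∧ ∀ X : ℝ, 0 ≤ X →
      |∫ v in (0:ℝ)..X, v ^ β * Real.cos (X - v)| ≤ M := by
  have hβ1' : -1 < β := by linarith
  have hsin : ∀ v : ℝ, HasDerivAt Real.sin (Real.cos v) v := Real.hasDerivAt_sin
  have hnegcos : ∀ v : ℝ, HasDerivAt (fun v => -Real.cos v) (Real.sin v) v := by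
    intro v
    have := (Real.hasDerivAt_cos v).neg; simp only [neg_neg] at this; exact this
  have habs_sin : ∀ v : ℝ, |Real.sin v| ≤ 1 := fun v => Real.abs_sin_le_one v
  have habs_cos : ∀ v : ℝ, |Real.cos v| ≤ 1 := fun v => Real.abs_cos_le_one v
  have habs_negcos : ∀ v : ℝ, |-Real.cos v| ≤ 1 := by
    intro v; rw [abs_neg]; exact habs_cos v
  have hexpand : ∀ X : ℝ, (∫ v in (0:ℝ)..X, v ^ β * Real.cos (X - v))
      = Real.cos X * (∫ v in (0:ℝ)..X, v ^ β * Real.cos v)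
        + Real.sin X * (∫ v in (0:ℝ)..X, v ^ β * Real.sin v) := by
    intro X
    rw [← intervalIntegral.integral_const_mul, ← intervalIntegral.integral_const_mul,
      ← intervalIntegral.integral_add
        ((intInt_rpow_mul β hβ1' _ Real.continuous_cos 0 X).const_mul _)
        ((intInt_rpow_mul β hβ1' _ Real.continuous_sin 0 X).const_mul _)]
    apply intervalIntegral.integral_congr
    intro v _
    simp only [Real.cos_sub]
    ring
  rcases lt_or_gt_of_ne hβ3 with hβneg | hβpos
  · -- β < 0
    have hb1 : (0:ℝ) < β + 1 := by linarith
    refine ⟨2 * (π ^ (β+1) / (β+1) + 3 * π ^ β), by positivity, fun X hX => ?_⟩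
    have h1 := osc_bound β hβ1' hβneg.le Real.cos Real.sin hsin
      Real.continuous_cos habs_cos habs_sin X hX
    have h2 := osc_bound β hβ1' hβneg.le Real.sin (fun v => -Real.cos v) hnegcos
      Real.continuous_sin habs_sin habs_negcos X hX
    rw [hexpand X]
    calc |Real.cos X * (∫ v in (0:ℝ)..X, v ^ β * Real.cos v)
          + Real.sin X * (∫ v in (0:ℝ)..X, v ^ β * Real.sin v)|
        ≤ |Real.cos X * (∫ v in (0:ℝ)..X, v ^ β * Real.cos v)|
          + |Real.sin X * (∫ v in (0:ℝ)..X, v ^ β * Real.sin v)| := abs_add_le _ _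
      _ ≤ |∫ v in (0:ℝ)..X, v ^ β * Real.cos v|
          + |∫ v in (0:ℝ)..X, v ^ β * Real.sin v| := by
          rw [abs_mul, abs_mul]
          have := abs_nonneg (∫ v in (0:ℝ)..X, v ^ β * Real.cos v)
          have := abs_nonneg (∫ v in (0:ℝ)..X, v ^ β * Real.sin v)
          nlinarith [habs_cos X, habs_sin X]
      _ ≤ 2 * (π ^ (β+1) / (β+1) + 3 * π ^ β) := by linarith
  · -- β > 0
    refine ⟨2 * (π ^ β / β + 3 * π ^ (β-1)), by positivity, fun X hX => ?_⟩
    have hic := ibp_zero β hβpos Real.cos Real.sin hsin Real.continuous_cos X hX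
    have his := ibp_zero β hβpos Real.sin (fun v => -Real.cos v) hnegcos
      Real.continuous_sin X hX
    have hγ2 : β - 1 ≤ 0 := by linarith
    have hγ1 : -1 < β - 1 := by linarith
    have h1 := osc_bound (β-1) hγ1 hγ2 Real.cos Real.sin hsin
      Real.continuous_cos habs_cos habs_sin X hX
    have h2 := osc_bound (β-1) hγ1 hγ2 Real.sin (fun v => -Real.cos v) hnegcos
      Real.continuous_sin habs_sin habs_negcos X hX
    -- rewrite ∫ v^{β-1} * (-cos v) as -∫ v^{β-1} cos v
    have hneg : (∫ v in (0:ℝ)..X, v ^ (β-1) * (-Real.cos v))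
        = -∫ v in (0:ℝ)..X, v ^ (β-1) * Real.cos v := by
      rw [← intervalIntegral.integral_neg]
      apply intervalIntegral.integral_congr
      intro v _; ring
    rw [hexpand X, hic, his, hneg]
    have hcancel : Real.cos X * (X ^ β * Real.sin X
          - β * ∫ v in (0:ℝ)..X, v ^ (β-1) * Real.sin v)
        + Real.sin X * (X ^ β * (-Real.cos X)
          - β * -∫ v in (0:ℝ)..X, v ^ (β-1) * Real.cos v)
        = β * (Real.sin X * (∫ v in (0:ℝ)..X, v ^ (β-1) * Real.cos v)
          - Real.cos X * (∫ v in (0:ℝ)..X, v ^ (β-1) * Real.sin v)) := by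
      ring
    rw [hcancel, abs_mul, abs_of_pos hβpos]
    have heq : β - 1 + 1 = β := by ring
    rw [heq] at h1 h2
    have hB0 : 0 ≤ π ^ β / β + 3 * π ^ (β-1) := by positivity
    have hb : |Real.sin X * (∫ v in (0:ℝ)..X, v ^ (β-1) * Real.cos v)
        - Real.cos X * (∫ v in (0:ℝ)..X, v ^ (β-1) * Real.sin v)|
        ≤ (π ^ β / β + 3 * π ^ (β-1)) + (π ^ β / β + 3 * π ^ (β-1)) := by
      calc |Real.sin X * (∫ v in (0:ℝ)..X, v ^ (β-1) * Real.cos v)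
          - Real.cos X * (∫ v in (0:ℝ)..X, v ^ (β-1) * Real.sin v)|
          ≤ |Real.sin X * (∫ v in (0:ℝ)..X, v ^ (β-1) * Real.cos v)|
            + |Real.cos X * (∫ v in (0:ℝ)..X, v ^ (β-1) * Real.sin v)| := abs_sub _ _
        _ ≤ |∫ v in (0:ℝ)..X, v ^ (β-1) * Real.cos v|
            + |∫ v in (0:ℝ)..X, v ^ (β-1) * Real.sin v| := by
            rw [abs_mul, abs_mul]
            nlinarith [abs_nonneg (∫ v in (0:ℝ)..X, v ^ (β-1) * Real.cos v),
              abs_nonneg (∫ v in (0:ℝ)..X, v ^ (β-1) * Real.sin v),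
              habs_sin X, habs_cos X]
        _ ≤ _ := by linarith
    nlinarith [abs_nonneg (Real.sin X * (∫ v in (0:ℝ)..X, v ^ (β-1) * Real.cos v)
      - Real.cos X * (∫ v in (0:ℝ)..X, v ^ (β-1) * Real.sin v))]

end Aux


/-- Riemann–Liouville kernel: for `ψ(t) = t^{ρ-1/2}`, `ρ ∈ (0,3/2]`,
`ρ ≠ 1/2`, and `f_j(t) = √(2/T) ∫₀^t ψ(s) cos(π(j-1/2)(t-s)/T) ds`, one has
`‖f_j‖_∞ ≤ C j^{-(ρ+1/2)}` with `C = C(T,ρ)`. -/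
theorem stmt17 (T ρ : ℝ) (hT : 0 < T) (hρ : 0 < ρ) (hρ2 : ρ ≤ 3/2) (hρ3 : ρ ≠ 1/2)
    (f : ℕ → ℝ → ℝ)
    (hf : ∀ (j : ℕ) (t : ℝ), f j t =
      Real.sqrt (2/T) * ∫ s in (0:ℝ)..t,
        s ^ (ρ - 1/2) * Real.cos (π * ((j:ℝ) - 1/2) * (t - s) / T)) :
    ∃ C : ℝ, ∀ j : ℕ, 1 ≤ j → ∀ t ∈ Set.Icc (0:ℝ) T,
      |f j t| ≤ C * (j:ℝ) ^ (-(ρ + 1/2)) := by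
  have hβ1 : -(1:ℝ)/2 < ρ - 1/2 := by linarith
  have hβ2 : ρ - 1/2 ≤ 1 := by linarith
  have hβ3 : ρ - 1/2 ≠ 0 := sub_ne_zero.mpr hρ3
  obtain ⟨M, hM0, hM⟩ := key (ρ - 1/2) hβ1 hβ2 hβ3
  have hc : (0:ℝ) < π / (2*T) := by positivity
  refine ⟨Real.sqrt (2/T) * M * (π / (2*T)) ^ (-(ρ + 1/2)), ?_⟩
  intro j hj t ht
  obtain ⟨ht0, htT⟩ := ht
  have hj1 : (1:ℝ) ≤ (j:ℝ) := by exact_mod_cast hj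
  set ω : ℝ := π * ((j:ℝ) - 1/2) / T with hωdef
  have hω : 0 < ω := by
    rw [hωdef]
    have : (0:ℝ) < (j:ℝ) - 1/2 := by linarith
    positivity
  have hrw : f j t = Real.sqrt (2/T)
      * ∫ s in (0:ℝ)..t, s ^ (ρ - 1/2) * Real.cos (ω * (t - s)) := by
    rw [hf]
    congr 1
    apply intervalIntegral.integral_congr
    intro s _
    congr 2
    rw [hωdef]; ring
  -- substitution v = ω s
  have hωt : 0 ≤ ω * t := mul_nonneg hω.le ht0
  have hsub : (∫ s in (0:ℝ)..t, s ^ (ρ - 1/2) * Real.cos (ω * (t - s)))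
      = ω ^ (-(ρ - 1/2)) * (ω⁻¹
        * ∫ v in (0:ℝ)..(ω*t), v ^ (ρ - 1/2) * Real.cos (ω * t - v)) := by
    have h1 : (∫ s in (0:ℝ)..t, (ω * s) ^ (ρ - 1/2) * Real.cos (ω * t - ω * s))
        = ω⁻¹ • ∫ v in (ω*0)..(ω*t), v ^ (ρ - 1/2) * Real.cos (ω * t - v) :=
      intervalIntegral.integral_comp_mul_left
        (fun v => v ^ (ρ - 1/2) * Real.cos (ω * t - v)) hω.ne'
    have h2 : (∫ s in (0:ℝ)..t, s ^ (ρ - 1/2) * Real.cos (ω * (t - s)))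
        = ∫ s in (0:ℝ)..t,
            ω ^ (-(ρ - 1/2)) * ((ω * s) ^ (ρ - 1/2) * Real.cos (ω * t - ω * s)) := by
      apply intervalIntegral.integral_congr
      intro s hs
      rw [Set.uIcc_of_le ht0] at hs
      have hs0 : 0 ≤ s := hs.1
      show s ^ (ρ - 1/2) * Real.cos (ω * (t - s))
        = ω ^ (-(ρ - 1/2)) * ((ω * s) ^ (ρ - 1/2) * Real.cos (ω * t - ω * s))
      rw [Real.mul_rpow hω.le hs0]
      have hωβ : ω ^ (-(ρ - 1/2)) * ω ^ (ρ - 1/2) = 1 := by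
        rw [← Real.rpow_add hω]
        norm_num
      have harg : ω * t - ω * s = ω * (t - s) := by ring
      rw [harg]
      calc s ^ (ρ - 1/2) * Real.cos (ω * (t - s))
          = (ω ^ (-(ρ - 1/2)) * ω ^ (ρ - 1/2)) * (s ^ (ρ - 1/2)
            * Real.cos (ω * (t - s))) := by rw [hωβ, one_mul]
        _ = ω ^ (-(ρ - 1/2)) * (ω ^ (ρ - 1/2) * s ^ (ρ - 1/2)
            * Real.cos (ω * (t - s))) := by ring
    rw [h2, intervalIntegral.integral_const_mul, h1, mul_zero, smul_eq_mul]
  have hbig : |∫ v in (0:ℝ)..(ω*t), v ^ (ρ - 1/2) * Real.cos (ω * t - v)| ≤ M :=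
    hM (ω * t) hωt
  -- put everything together
  have hωσ : ω ^ (-(ρ - 1/2)) * ω⁻¹ = ω ^ (-(ρ + 1/2)) := by
    rw [← Real.rpow_neg_one ω, ← Real.rpow_add hω]
    congr 1
    ring
  have hIabs : |f j t| ≤ Real.sqrt (2/T) * (ω ^ (-(ρ + 1/2)) * M) := by
    have h3 : |f j t| = Real.sqrt (2/T) * (ω ^ (-(ρ - 1/2)) * (ω⁻¹
        * |∫ v in (0:ℝ)..(ω*t), v ^ (ρ - 1/2) * Real.cos (ω * t - v)|)) := by
      rw [hrw, hsub, abs_mul, abs_mul, abs_mul,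
        abs_of_nonneg (Real.sqrt_nonneg _),
        abs_of_nonneg (Real.rpow_nonneg hω.le _), abs_of_nonneg (inv_nonneg.mpr hω.le)]
    rw [h3]
    calc Real.sqrt (2/T) * (ω ^ (-(ρ - 1/2)) * (ω⁻¹
          * |∫ v in (0:ℝ)..(ω*t), v ^ (ρ - 1/2) * Real.cos (ω * t - v)|))
        ≤ Real.sqrt (2/T) * (ω ^ (-(ρ - 1/2)) * (ω⁻¹ * M)) := by
          apply mul_le_mul_of_nonneg_left _ (Real.sqrt_nonneg _)
          apply mul_le_mul_of_nonneg_left _ (Real.rpow_nonneg hω.le _)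
          exact mul_le_mul_of_nonneg_left hbig (inv_nonneg.mpr hω.le)
      _ = Real.sqrt (2/T) * (ω ^ (-(ρ + 1/2)) * M) := by rw [← hωσ]; ring
  -- compare ω with (π/(2T)) * j
  have hcj : π / (2*T) * (j:ℝ) ≤ ω := by
    rw [hωdef, div_mul_eq_mul_div, div_le_div_iff₀ (by positivity) hT]
    nlinarith [mul_nonneg (mul_pos pi_pos hT).le (by linarith : (0:ℝ) ≤ (j:ℝ) - 1)]
  have hσ : -(ρ + 1/2) ≤ 0 := by linarith
  have hcj0 : (0:ℝ) < π / (2*T) * (j:ℝ) := by positivity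
  have hωb : ω ^ (-(ρ + 1/2)) ≤ (π / (2*T)) ^ (-(ρ + 1/2)) * (j:ℝ) ^ (-(ρ + 1/2)) := by
    calc ω ^ (-(ρ + 1/2)) ≤ (π / (2*T) * (j:ℝ)) ^ (-(ρ + 1/2)) :=
        Real.rpow_le_rpow_of_nonpos hcj0 hcj hσ
      _ = (π / (2*T)) ^ (-(ρ + 1/2)) * (j:ℝ) ^ (-(ρ + 1/2)) :=
        Real.mul_rpow hc.le (by linarith)
  calc |f j t| ≤ Real.sqrt (2/T) * (ω ^ (-(ρ + 1/2)) * M) := hIabs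
    _ ≤ Real.sqrt (2/T) * (((π / (2*T)) ^ (-(ρ + 1/2)) * (j:ℝ) ^ (-(ρ + 1/2))) * M) := by
        apply mul_le_mul_of_nonneg_left _ (Real.sqrt_nonneg _)
        exact mul_le_mul_of_nonneg_right hωb hM0
    _ = Real.sqrt (2/T) * M * (π / (2*T)) ^ (-(ρ + 1/2)) * (j:ℝ) ^ (-(ρ + 1/2)) := by
        ring
end
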